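/- arXiv:1806.10878 — 8 statements merged into one kernel-verified Lean document; each statement's English description precedes it below -/
import Mathlib

section
/- (Hanner's inequality) For every p with 1 < p < 2 and all vectors x, y ∈ ℝⁿ, one has ‖x + y‖_p^p + ‖x − y‖_p^p ≥ (‖x‖_p + ‖y‖_p)^p + | ‖x‖_p − ‖y‖_p |^p. -/
open Real

lemma my_rpow_subadd {a b s : ℝ} (ha : 0 ≤ a) (hb : 0 ≤ b) (hs : 0 ≤ s) (hs1 : s ≤ 1) :
    (a + b) ^ s ≤ a ^ s + b ^ s := by
  have h := NNReal.rpow_add_le_add_rpow a.toNNReal b.toNNReal hs hs1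
  have := NNReal.coe_le_coe.2 h
  push_cast [NNReal.coe_rpow, Real.coe_toNNReal _ ha, Real.coe_toNNReal _ hb,
    Real.coe_toNNReal _ (by positivity : (0:ℝ) ≤ a + b)] at this
  simpa using this

-- the function u ↦ (u+1)^s - (u-1)^s is antitone on [1, ∞)
lemma my_f_anti {s : ℝ} (hs0 : 0 < s) (hs1 : s < 1) :
    AntitoneOn (fun u : ℝ => (u + 1) ^ s - (u - 1) ^ s) (Set.Ici 1) := by
  have hderiv : ∀ u : ℝ, 1 < u → HasDerivAt (fun u : ℝ => (u + 1) ^ s - (u - 1) ^ s)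
      (1 * s * (u + 1) ^ (s - 1) - 1 * s * (u - 1) ^ (s - 1)) u := by
    intro u hu
    have h1 : HasDerivAt (fun u : ℝ => u + 1) 1 u := (hasDerivAt_id u).add_const 1
    have h2 : HasDerivAt (fun u : ℝ => u - 1) 1 u := (hasDerivAt_id u).sub_const 1
    exact (h1.rpow_const (Or.inl (by positivity))).sub
      (h2.rpow_const (Or.inl (ne_of_gt (by linarith : (0:ℝ) < u - 1))))
  apply antitoneOn_of_deriv_nonpos (convex_Ici 1)
  · apply ContinuousOn.sub
    · intro u hu
      exact ((Real.continuousAt_rpow_const _ s (Or.inr hs0.le)).comp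
        (by continuity : Continuous fun u:ℝ => u + 1).continuousAt).continuousWithinAt
    · intro u hu
      exact ((Real.continuousAt_rpow_const _ s (Or.inr hs0.le)).comp
        (by continuity : Continuous fun u:ℝ => u - 1).continuousAt).continuousWithinAt
  · intro u hu
    rw [interior_Ici] at hu
    exact ((hderiv u hu).differentiableAt).differentiableWithinAt
  · intro u hu
    rw [interior_Ici] at hu
    have hu1 : 1 < u := hu
    rw [(hderiv u hu).deriv]
    have : (u + 1) ^ (s - 1) ≤ (u - 1) ^ (s - 1) :=
      Real.rpow_le_rpow_of_nonpos (by linarith) (by linarith) (by linarith)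
    nlinarith

noncomputable def hAl (p r : ℝ) : ℝ := (1 + r) ^ (p - 1) + (1 - r) ^ (p - 1)
noncomputable def hBe (p r : ℝ) : ℝ := (1/r + 1) ^ (p - 1) - (1/r - 1) ^ (p - 1)

section
variable {p : ℝ} (hp1 : 1 < p) (hp2 : p < 2)
include hp1 hp2

lemma one_div_sub_nonneg {r : ℝ} (hr0 : 0 < r) (hr1 : r ≤ 1) : (0:ℝ) ≤ 1/r - 1 := by
  rw [sub_nonneg, le_div_iff₀ hr0]; linarith

omit hp1 hp2

lemma hBe_mul (hp1 : 1 < p) (hp2 : p < 2) {r : ℝ} (hr0 : 0 < r) (hr1 : r ≤ 1) :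
    hBe p r * r ^ (p - 1) = (1 + r) ^ (p - 1) - (1 - r) ^ (p - 1) := by
  have h1 : (0:ℝ) ≤ 1/r + 1 := by positivity
  have h2 : (0:ℝ) ≤ 1/r - 1 := one_div_sub_nonneg hp1 hp2 hr0 hr1
  rw [hBe, sub_mul, ← Real.mul_rpow h1 hr0.le, ← Real.mul_rpow h2 hr0.le]
  congr 2 <;> field_simp

include hp1 hp2

lemma hBe_nonneg {r : ℝ} (hr0 : 0 < r) (hr1 : r ≤ 1) : 0 ≤ hBe p r := by
  rw [hBe, sub_nonneg]
  exact Real.rpow_le_rpow (one_div_sub_nonneg hp1 hp2 hr0 hr1) (by linarith) (by linarith)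

lemma hAl_nonneg {r : ℝ} (hr0 : 0 < r) (hr1 : r ≤ 1) : 0 ≤ hAl p r := by
  have : (0:ℝ) ≤ (1+r) ^ (p-1) := Real.rpow_nonneg (by linarith) _
  have : (0:ℝ) ≤ (1-r) ^ (p-1) := Real.rpow_nonneg (by linarith) _
  rw [hAl]; linarith

lemma hBe_le_hAl {r : ℝ} (hr0 : 0 < r) (hr1 : r ≤ 1) : hBe p r ≤ hAl p r := by
  have hrs : (0:ℝ) < r ^ (p-1) := Real.rpow_pos_of_pos hr0 _
  rw [← mul_le_mul_iff_of_pos_right hrs, hBe_mul hp1 hp2 hr0 hr1, hAl]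
  have hA : (1+r) ^ (p-1) ≤ 1 + r ^ (p-1) := by
    have h := my_rpow_subadd zero_le_one hr0.le (by linarith : (0:ℝ) ≤ p-1) (by linarith)
    rwa [Real.one_rpow] at h
  have hB : 1 - r ^ (p-1) ≤ (1-r) ^ (p-1) := by
    have h := my_rpow_subadd (by linarith : (0:ℝ) ≤ 1-r) hr0.le
      (by linarith : (0:ℝ) ≤ p-1) (by linarith)
    rw [show (1-r)+r = (1:ℝ) by ring, Real.one_rpow] at h
    linarith
  have hC : r ^ (p-1) ≤ 1 := Real.rpow_le_one hr0.le hr1 (by linarith)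
  have hY : (0:ℝ) ≤ (1-r) ^ (p-1) := Real.rpow_nonneg (by linarith) _
  nlinarith [mul_le_mul_of_nonneg_right hA (by linarith : (0:ℝ) ≤ 1 - r^(p-1)),
    mul_le_mul_of_nonneg_right hB (by positivity : (0:ℝ) ≤ 1 + r^(p-1))]

lemma hBe_mono {r₁ r₂ : ℝ} (h0 : 0 < r₁) (h12 : r₁ ≤ r₂) (h1 : r₂ ≤ 1) :
    hBe p r₁ ≤ hBe p r₂ := by
  have h02 : 0 < r₂ := h0.trans_le h12
  have m2 : (1:ℝ) ≤ 1/r₂ := by rw [le_div_iff₀ h02]; linarith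
  have m1 : 1/r₂ ≤ 1/r₁ := one_div_le_one_div_of_le h0 h12
  have := my_f_anti (show (0:ℝ) < p - 1 by linarith) (show p - 1 < 1 by linarith)
    (Set.mem_Ici.2 m2) (Set.mem_Ici.2 (m2.trans m1)) m1
  simpa [hBe] using this

lemma hId {r : ℝ} (hr0 : 0 < r) (hr1 : r ≤ 1) :
    hAl p r + hBe p r * r ^ p = (1+r) ^ p + (1-r) ^ p := by
  have hpne : p - 1 + 1 ≠ 0 := by intro h; linarith [h]
  have e0 : r ^ p = r ^ (p-1) * r := by
    have h := Real.rpow_add' hr0.le hpne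
    rw [sub_add_cancel, Real.rpow_one] at h; exact h
  have e1 : (1+r) ^ p = (1+r) ^ (p-1) * (1+r) := by
    have h := Real.rpow_add' (show (0:ℝ) ≤ 1+r by linarith) hpne
    rw [sub_add_cancel, Real.rpow_one] at h; exact h
  have e2 : (1-r) ^ p = (1-r) ^ (p-1) * (1-r) := by
    have h := Real.rpow_add' (show (0:ℝ) ≤ 1-r by linarith) hpne
    rw [sub_add_cancel, Real.rpow_one] at h; exact h
  have e3 := hBe_mul hp1 hp2 hr0 hr1
  rw [e0, e1, e2, hAl, ← mul_assoc, e3]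
  ring

lemma hKey {r t : ℝ} (hr0 : 0 < r) (hr1 : r ≤ 1) (ht0 : 0 ≤ t) (ht1 : t ≤ 1) :
    hAl p r + hBe p r * t ^ p ≤ (1+t) ^ p + (1-t) ^ p := by
  set c := hBe p r with hc
  set g : ℝ → ℝ := fun u => (1+u) ^ p + (1-u) ^ p - c * u ^ p with hgdef
  have hderiv : ∀ u : ℝ, HasDerivAt g
      (1 * p * (1+u) ^ (p-1) + (-1) * p * (1-u) ^ (p-1) - c * (1 * p * u ^ (p-1))) u := by
    intro u
    have h1 : HasDerivAt (fun u : ℝ => 1+u) 1 u := (hasDerivAt_id u).const_add 1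
    have h2 : HasDerivAt (fun u : ℝ => 1-u) (-1) u := by
      simpa using (hasDerivAt_id u).const_sub 1
    have h3 : HasDerivAt (fun u : ℝ => u ^ p) (1 * p * u ^ (p-1)) u :=
      (hasDerivAt_id u).rpow_const (Or.inr hp1.le)
    exact ((h1.rpow_const (Or.inr hp1.le)).add (h2.rpow_const (Or.inr hp1.le))).sub
      (h3.const_mul c)
  have hgr : g r ≤ g t := by
    rcases le_total t r with h | h
    · have anti : AntitoneOn g (Set.Icc 0 r) := by
        apply antitoneOn_of_deriv_nonpos (convex_Icc 0 r)
          (fun u _ => (hderiv u).continuousAt.continuousWithinAt)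
          (fun u _ => (hderiv u).differentiableAt.differentiableWithinAt)
        intro u hu
        rw [interior_Icc] at hu
        obtain ⟨hu0, hur⟩ := hu
        rw [(hderiv u).deriv]
        have hu1 : u ≤ 1 := le_trans hur.le hr1
        have hbm : hBe p u ≤ c := hBe_mono hp1 hp2 hu0 hur.le hr1
        have hbmul := hBe_mul hp1 hp2 hu0 hu1
        have hus : (0:ℝ) ≤ u ^ (p-1) := Real.rpow_nonneg hu0.le _
        have h5 : (1+u)^(p-1) - (1-u)^(p-1) ≤ c * u^(p-1) := by
          rw [← hbmul]; exact mul_le_mul_of_nonneg_right hbm hus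
        nlinarith [mul_le_mul_of_nonneg_left h5 (show (0:ℝ) ≤ p by linarith)]
      exact anti (Set.mem_Icc.2 ⟨ht0, h⟩) (Set.mem_Icc.2 ⟨hr0.le, le_refl r⟩) h
    · have mono : MonotoneOn g (Set.Icc r 1) := by
        apply monotoneOn_of_deriv_nonneg (convex_Icc r 1)
          (fun u _ => (hderiv u).continuousAt.continuousWithinAt)
          (fun u _ => (hderiv u).differentiableAt.differentiableWithinAt)
        intro u hu
        rw [interior_Icc] at hu
        obtain ⟨hur, hu1⟩ := hu
        rw [(hderiv u).deriv]
        have hu0 : 0 < u := hr0.trans hur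
        have hbm : c ≤ hBe p u := hBe_mono hp1 hp2 hr0 hur.le hu1.le
        have hbmul := hBe_mul hp1 hp2 hu0 hu1.le
        have hus : (0:ℝ) ≤ u ^ (p-1) := Real.rpow_nonneg hu0.le _
        have h5 : c * u^(p-1) ≤ (1+u)^(p-1) - (1-u)^(p-1) := by
          rw [← hbmul]; exact mul_le_mul_of_nonneg_right hbm hus
        nlinarith [mul_le_mul_of_nonneg_left h5 (show (0:ℝ) ≤ p by linarith)]
      exact mono (Set.mem_Icc.2 ⟨le_refl r, hr1⟩) (Set.mem_Icc.2 ⟨h, ht1⟩) h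
  have hid := hId hp1 hp2 hr0 hr1
  have hgrv : g r = (1+r) ^ p + (1-r) ^ p - c * r ^ p := rfl
  have hgtv : g t = (1+t) ^ p + (1-t) ^ p - c * t ^ p := rfl
  linarith [hgr]

lemma hPt_ord {r a b : ℝ} (hr0 : 0 < r) (hr1 : r ≤ 1) (hb : 0 ≤ b) (hab : b ≤ a) :
    hAl p r * a ^ p + hBe p r * b ^ p ≤ (a+b) ^ p + (a-b) ^ p := by
  rcases eq_or_lt_of_le (hb.trans hab) with h | ha0
  · have hb0 : b = 0 := le_antisymm (hab.trans h.symm.le) hb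
    rw [← h, hb0]
    simp [Real.zero_rpow (show p ≠ 0 by linarith)]
  · set t := b / a with ht
    have ht0 : 0 ≤ t := div_nonneg hb ha0.le
    have ht1 : t ≤ 1 := (div_le_one ha0).2 hab
    have key := hKey hp1 hp2 hr0 hr1 ht0 ht1
    have hap : (0:ℝ) < a ^ p := Real.rpow_pos_of_pos ha0 _
    have hmul := mul_le_mul_of_nonneg_left key hap.le
    have e1 : a ^ p * (1+t) ^ p = (a+b) ^ p := by
      rw [← Real.mul_rpow ha0.le (by linarith : (0:ℝ) ≤ 1+t)]
      congr 1; rw [ht]; field_simp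
    have e2 : a ^ p * (1-t) ^ p = (a-b) ^ p := by
      rw [← Real.mul_rpow ha0.le (by linarith : (0:ℝ) ≤ 1-t)]
      congr 1; rw [ht]; field_simp
    have e3 : a ^ p * t ^ p = b ^ p := by
      rw [← Real.mul_rpow ha0.le ht0]; congr 1; rw [ht]; field_simp
    have lhs_eq : hAl p r * a^p + hBe p r * b^p = a^p * (hAl p r + hBe p r * t^p) := by
      rw [← e3]; ring
    have rhs_eq : a^p * ((1+t)^p + (1-t)^p) = (a+b)^p + (a-b)^p := by
      rw [mul_add, e1, e2]
    rw [lhs_eq, ← rhs_eq]; exact hmul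

omit hp1 hp2 in
lemma habs_pair (hp0 : p ≠ 0) (u v : ℝ) (h : |v| ≤ |u|) :
    |u+v| ^ p + |u-v| ^ p = (|u|+|v|) ^ p + (|u|-|v|) ^ p := by
  rcases le_total 0 u with hu | hu <;> rcases le_total 0 v with hv | hv
  · rw [abs_of_nonneg hu, abs_of_nonneg hv] at h ⊢
    rw [abs_of_nonneg (by linarith), abs_of_nonneg (by linarith)]
  · rw [abs_of_nonneg hu, abs_of_nonpos hv] at h ⊢
    rw [abs_of_nonneg (by linarith), abs_of_nonneg (by linarith),
      show u + v = u - -v by ring, show u - v = u + -v by ring]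
    exact add_comm _ _
  · rw [abs_of_nonpos hu, abs_of_nonneg hv] at h ⊢
    rw [abs_of_nonpos (by linarith), abs_of_nonpos (by linarith),
      show -(u+v) = -u - v by ring, show -(u-v) = -u + v by ring]
    exact add_comm _ _
  · rw [abs_of_nonpos hu, abs_of_nonpos hv] at h ⊢
    rw [abs_of_nonpos (by linarith), abs_of_nonpos (by linarith),
      show -(u+v) = -u + -v by ring, show -(u-v) = -u - -v by ring]

lemma hPt {r : ℝ} (a b : ℝ) (hr0 : 0 < r) (hr1 : r ≤ 1) :
    hAl p r * |a| ^ p + hBe p r * |b| ^ p ≤ |a+b| ^ p + |a-b| ^ p := by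
  have hp0 : p ≠ 0 := by linarith
  rcases le_total |b| |a| with h | h
  · rw [habs_pair hp0 a b h]
    exact hPt_ord hp1 hp2 hr0 hr1 (abs_nonneg b) h
  · have swap : hAl p r * |a|^p + hBe p r * |b|^p ≤ hAl p r * |b|^p + hBe p r * |a|^p := by
      have hpa : |a|^p ≤ |b|^p := Real.rpow_le_rpow (abs_nonneg a) h (by linarith)
      nlinarith [mul_nonneg (sub_nonneg.2 (hBe_le_hAl hp1 hp2 hr0 hr1)) (sub_nonneg.2 hpa)]
    have h2 := hPt_ord hp1 hp2 hr0 hr1 (abs_nonneg a) h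
    have h3 := habs_pair hp0 b a h
    rw [show b + a = a + b by ring, abs_sub_comm b a] at h3
    linarith
end

open Finset

/-- The ℓ^p norm on ℝⁿ: `(∑ i, |x i| ^ p) ^ (1/p)`. -/
noncomputable def lpNorm {n : ℕ} (p : ℝ) (x : Fin n → ℝ) : ℝ :=
  (∑ i, |x i| ^ p) ^ (1 / p)

lemma lpNorm_nonneg {n : ℕ} (p : ℝ) (x : Fin n → ℝ) : 0 ≤ lpNorm p x :=
  Real.rpow_nonneg (Finset.sum_nonneg fun i _ => Real.rpow_nonneg (abs_nonneg _) _) _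

lemma lpNorm_rpow {n : ℕ} {p : ℝ} (hp : 0 < p) (x : Fin n → ℝ) :
    lpNorm p x ^ p = ∑ i, |x i| ^ p := by
  rw [lpNorm, one_div, Real.rpow_inv_rpow
    (Finset.sum_nonneg fun i _ => Real.rpow_nonneg (abs_nonneg _) _) (ne_of_gt hp)]

lemma hMain {n : ℕ} (p : ℝ) (hp1 : 1 < p) (hp2 : p < 2)
    (x y : Fin n → ℝ) (hle : lpNorm p y ≤ lpNorm p x) :
    lpNorm p (x + y) ^ p + lpNorm p (x - y) ^ p ≥
      (lpNorm p x + lpNorm p y) ^ p + |lpNorm p x - lpNorm p y| ^ p := by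
  have hp0 : (0:ℝ) < p := by linarith
  have hxn : 0 ≤ lpNorm p x := lpNorm_nonneg p x
  have hyn : 0 ≤ lpNorm p y := lpNorm_nonneg p y
  rcases eq_or_lt_of_le hxn with hx0 | hx0
  · have hy0 : lpNorm p y = 0 := le_antisymm (hle.trans hx0.symm.le) hyn
    rw [← hx0, hy0]
    simp only [add_zero, sub_zero, abs_zero, Real.zero_rpow (ne_of_gt hp0), zero_add]
    exact add_nonneg (Real.rpow_nonneg (lpNorm_nonneg p _) _)
      (Real.rpow_nonneg (lpNorm_nonneg p _) _)
  · rcases eq_or_lt_of_le hyn with hy0 | hy0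
    · have hsum : ∑ i, |y i| ^ p = 0 := by
        by_contra hne
        have hpos : 0 < ∑ i, |y i| ^ p :=
          lt_of_le_of_ne (Finset.sum_nonneg fun i _ => Real.rpow_nonneg (abs_nonneg _) _)
            (Ne.symm hne)
        have h2 : (0:ℝ) < lpNorm p y := Real.rpow_pos_of_pos hpos _
        linarith [hy0.le, h2]
      have hyz : ∀ i, y i = 0 := by
        intro i
        have hterm : |y i| ^ p = 0 :=
          (Finset.sum_eq_zero_iff_of_nonneg
            (fun i _ => Real.rpow_nonneg (abs_nonneg _) _)).1 hsum i (Finset.mem_univ i)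
        have habs : |y i| = 0 := by
          by_contra hne
          have h3 : 0 < |y i| := lt_of_le_of_ne (abs_nonneg _) (Ne.symm hne)
          exact absurd hterm (ne_of_gt (Real.rpow_pos_of_pos h3 p))
        exact abs_eq_zero.1 habs
      have hxy1 : x + y = x := by funext i; simp [hyz i]
      have hxy2 : x - y = x := by funext i; simp [hyz i]
      rw [hxy1, hxy2, ← hy0, add_zero, sub_zero, abs_of_nonneg hxn]
    · set Sx := lpNorm p x with hSx
      set Sy := lpNorm p y with hSy
      set r := Sy / Sx with hr
      have hr0 : 0 < r := div_pos hy0 hx0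
      have hr1 : r ≤ 1 := (div_le_one hx0).2 hle
      have hsum := Finset.sum_le_sum
        (fun i (_ : i ∈ Finset.univ) => hPt hp1 hp2 (x i) (y i) hr0 hr1)
      rw [Finset.sum_add_distrib, Finset.sum_add_distrib, ← Finset.mul_sum,
        ← Finset.mul_sum] at hsum
      have ex : Sx ^ p = ∑ i, |x i| ^ p := lpNorm_rpow hp0 x
      have ey : Sy ^ p = ∑ i, |y i| ^ p := lpNorm_rpow hp0 y
      have exy : lpNorm p (x + y) ^ p = ∑ i, |x i + y i| ^ p := by
        rw [lpNorm_rpow hp0]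
        exact Finset.sum_congr rfl fun i _ => by rw [Pi.add_apply]
      have exy2 : lpNorm p (x - y) ^ p = ∑ i, |x i - y i| ^ p := by
        rw [lpNorm_rpow hp0]
        exact Finset.sum_congr rfl fun i _ => by rw [Pi.sub_apply]
      have hSyr : Sy = r * Sx := by rw [hr]; field_simp
      have hid := hId hp1 hp2 hr0 hr1
      have e1 : (Sx + Sy) ^ p = Sx ^ p * (1 + r) ^ p := by
        rw [← Real.mul_rpow hx0.le (by linarith : (0:ℝ) ≤ 1 + r)]
        congr 1; rw [hSyr]; ring
      have e2 : (Sx - Sy) ^ p = Sx ^ p * (1 - r) ^ p := by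
        rw [← Real.mul_rpow hx0.le (by linarith : (0:ℝ) ≤ 1 - r)]
        congr 1; rw [hSyr]; ring
      have e3 : Sy ^ p = Sx ^ p * r ^ p := by
        rw [← Real.mul_rpow hx0.le hr0.le]
        congr 1; rw [hSyr]; ring
      have hrhs : (Sx + Sy) ^ p + |Sx - Sy| ^ p = hAl p r * Sx ^ p + hBe p r * Sy ^ p := by
        rw [abs_of_nonneg (sub_nonneg.2 hle), e1, e2, e3]
        linear_combination (Sx ^ p) * hid.symm
      rw [ge_iff_le, hrhs]
      calc hAl p r * Sx ^ p + hBe p r * Sy ^ p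
          = hAl p r * (∑ i, |x i| ^ p) + hBe p r * (∑ i, |y i| ^ p) := by rw [ex, ey]
        _ ≤ (∑ i, |x i + y i| ^ p) + ∑ i, |x i - y i| ^ p := hsum
        _ = lpNorm p (x + y) ^ p + lpNorm p (x - y) ^ p := by rw [exy, exy2]

/-- Hanner's inequality: for `1 < p < 2` and `x, y ∈ ℝⁿ`,
`‖x + y‖_p^p + ‖x − y‖_p^p ≥ (‖x‖_p + ‖y‖_p)^p + |‖x‖_p − ‖y‖_p|^p`. -/
theorem hanner_inequality {n : ℕ} (p : ℝ) (hp1 : 1 < p) (hp2 : p < 2)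
    (x y : Fin n → ℝ) :
    lpNorm p (x + y) ^ p + lpNorm p (x - y) ^ p ≥
      (lpNorm p x + lpNorm p y) ^ p + |lpNorm p x - lpNorm p y| ^ p := by
  rcases le_total (lpNorm p y) (lpNorm p x) with h | h
  · exact hMain p hp1 hp2 x y h
  · have hm := hMain p hp1 hp2 y x h
    have c1 : lpNorm p (y + x) = lpNorm p (x + y) := by rw [add_comm]
    have c2 : lpNorm p (y - x) = lpNorm p (x - y) := by
      unfold lpNorm
      congr 1
      exact Finset.sum_congr rfl fun i _ => by
        rw [Pi.sub_apply, Pi.sub_apply, abs_sub_comm]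
    rw [c1, c2, add_comm (lpNorm p y) (lpNorm p x), abs_sub_comm] at hm
    exact hm
end

section
/- Let 1 < p < 2 and let a, b ∈ ℝⁿ satisfy ‖a‖_p ≥ 1, ‖b‖_p ≥ 1, and ‖a − b‖_p ≤ 1. Then ‖a + b‖_p^p ≥ 2^p − 1 ≥ 1; in particular ‖a + b‖_p ≥ 1. -/
open Finset

/-- Subadditivity of `rpow` with exponent `≤ 1`, real version. -/
lemma real_rpow_add_le_add_rpow {q : ℝ} (x y : ℝ) (hx : 0 ≤ x) (hy : 0 ≤ y)
    (hq0 : 0 ≤ q) (hq1 : q ≤ 1) : (x + y) ^ q ≤ x ^ q + y ^ q := by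
  have h := NNReal.rpow_add_le_add_rpow (Real.toNNReal x) (Real.toNNReal y) hq0 hq1
  have h2 := NNReal.coe_le_coe.mpr h
  push_cast at h2
  rwa [Real.coe_toNNReal x hx, Real.coe_toNNReal y hy] at h2

/-- Pointwise (reverse) parallelogram-type inequality for `1 ≤ p ≤ 2`. -/
lemma abs_add_rpow_le {p : ℝ} (hp1 : 1 ≤ p) (hp2 : p ≤ 2) (x y : ℝ) :
    |x + y| ^ p + |x - y| ^ p ≤ 2 * (|x| ^ p + |y| ^ p) := by
  set q : ℝ := p / 2 with hq
  have hq0 : 0 ≤ q := by positivity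
  have hq1 : q ≤ 1 := by rw [hq]; linarith
  have habs : ∀ u : ℝ, |u| ^ p = (u ^ 2) ^ q := by
    intro u
    have h2q : p = (2 : ℕ) * q := by push_cast; rw [hq]; ring
    rw [h2q, Real.rpow_natCast_mul (abs_nonneg u), sq_abs]
  rw [habs (x + y), habs (x - y), habs x, habs y]
  set s : ℝ := (x + y) ^ 2
  set t : ℝ := (x - y) ^ 2
  have hs : (0 : ℝ) ≤ s := sq_nonneg _
  have ht : (0 : ℝ) ≤ t := sq_nonneg _
  have hst : (s + t) / 2 = x ^ 2 + y ^ 2 := by simp only [s, t]; ring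
  -- concavity step
  have hconc := (Real.concaveOn_rpow hq0 hq1).2 (Set.mem_Ici.mpr hs) (Set.mem_Ici.mpr ht)
    (by norm_num : (0:ℝ) ≤ (1:ℝ)/2) (by norm_num : (0:ℝ) ≤ (1:ℝ)/2) (by norm_num)
  simp only [smul_eq_mul] at hconc
  have h1 : s ^ q + t ^ q ≤ 2 * ((s + t) / 2) ^ q := by
    have : (1:ℝ)/2 * s + 1/2 * t = (s + t) / 2 := by ring
    rw [this] at hconc
    linarith
  have h2 : ((s + t) / 2) ^ q ≤ (x ^ 2) ^ q + (y ^ 2) ^ q := by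
    rw [hst]
    exact real_rpow_add_le_add_rpow _ _ (sq_nonneg x) (sq_nonneg y) hq0 hq1
  calc s ^ q + t ^ q ≤ 2 * ((s + t) / 2) ^ q := h1
    _ ≤ 2 * ((x ^ 2) ^ q + (y ^ 2) ^ q) := by linarith

/-- Let `1 < p < 2` and `a, b ∈ ℝⁿ` with `‖a‖_p ≥ 1`, `‖b‖_p ≥ 1`, `‖a − b‖_p ≤ 1`.
Then `‖a + b‖_p^p ≥ 2^p − 1 ≥ 1`; in particular `‖a + b‖_p ≥ 1`. -/
theorem sum_norm_ge {n : ℕ} (p : ℝ) (hp1 : 1 < p) (hp2 : p < 2)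
    (a b : Fin n → ℝ)
    (ha : 1 ≤ lpNorm p a) (hb : 1 ≤ lpNorm p b)
    (hab : lpNorm p (a - b) ≤ 1) :
    lpNorm p (a + b) ^ p ≥ 2 ^ p - 1 ∧ (2 : ℝ) ^ p - 1 ≥ 1 ∧
      lpNorm p (a + b) ≥ 1 := by
  have hp0 : (0 : ℝ) < p := by linarith
  set Sa : ℝ := ∑ i, |a i| ^ p with hSa_def
  set Sb : ℝ := ∑ i, |b i| ^ p with hSb_def
  set Sm : ℝ := ∑ i, |(a - b) i| ^ p with hSm_def
  set Sp : ℝ := ∑ i, |(a + b) i| ^ p with hSp_def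
  have hSa0 : 0 ≤ Sa := Finset.sum_nonneg fun i _ => Real.rpow_nonneg (abs_nonneg _) _
  have hSb0 : 0 ≤ Sb := Finset.sum_nonneg fun i _ => Real.rpow_nonneg (abs_nonneg _) _
  have hSm0 : 0 ≤ Sm := Finset.sum_nonneg fun i _ => Real.rpow_nonneg (abs_nonneg _) _
  have hSp0 : 0 ≤ Sp := Finset.sum_nonneg fun i _ => Real.rpow_nonneg (abs_nonneg _) _
  -- translate the norm hypotheses into statements about the sums
  have key_ge : ∀ S : ℝ, 0 ≤ S → 1 ≤ S ^ (1 / p : ℝ) → 1 ≤ S := by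
    intro S hS h
    rcases eq_or_lt_of_le hS with h0 | h0
    · rw [← h0, Real.zero_rpow (by positivity)] at h; linarith
    · by_contra hc
      push_neg at hc
      have := Real.rpow_lt_one hS (by linarith) (by positivity : (0:ℝ) < 1 / p)
      linarith
  have hSa1 : 1 ≤ Sa := key_ge Sa hSa0 ha
  have hSb1 : 1 ≤ Sb := key_ge Sb hSb0 hb
  have hSm1 : Sm ≤ 1 := by
    by_contra h
    push_neg at h
    have : (1 : ℝ) < Sm ^ (1 / p : ℝ) :=
      (Real.one_lt_rpow_iff_of_pos (by linarith)).mpr (Or.inl ⟨h, by positivity⟩)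
    exact absurd hab (by rw [lpNorm]; push_neg; exact this)
  -- pointwise inequality summed
  have hsum : 2 ^ p * (Sa + Sb) ≤ 2 * (Sp + Sm) := by
    have hpt : ∀ i : Fin n, 2 ^ p * (|a i| ^ p + |b i| ^ p)
        ≤ 2 * (|(a + b) i| ^ p + |(a - b) i| ^ p) := by
      intro i
      have h := abs_add_rpow_le (le_of_lt hp1) (le_of_lt hp2) (a i + b i) (a i - b i)
      have e1 : a i + b i + (a i - b i) = 2 * a i := by ring
      have e2 : a i + b i - (a i - b i) = 2 * b i := by ring
      rw [e1, e2, abs_mul, abs_mul] at h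
      have h2 : |(2 : ℝ)| = 2 := by norm_num
      rw [h2, Real.mul_rpow (by norm_num) (abs_nonneg _),
        Real.mul_rpow (by norm_num) (abs_nonneg _)] at h
      have ha' : (a + b) i = a i + b i := rfl
      have hb' : (a - b) i = a i - b i := rfl
      rw [ha', hb']
      linarith
    calc 2 ^ p * (Sa + Sb) = ∑ i, 2 ^ p * (|a i| ^ p + |b i| ^ p) := by
          rw [hSa_def, hSb_def, ← Finset.sum_add_distrib, Finset.mul_sum]
      _ ≤ ∑ i, 2 * (|(a + b) i| ^ p + |(a - b) i| ^ p) :=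
          Finset.sum_le_sum fun i _ => hpt i
      _ = 2 * (Sp + Sm) := by
          rw [hSp_def, hSm_def, ← Finset.sum_add_distrib, Finset.mul_sum]
  have h2p2 : (2 : ℝ) ≤ 2 ^ p := by
    calc (2 : ℝ) = 2 ^ (1 : ℝ) := (Real.rpow_one 2).symm
      _ ≤ 2 ^ p := (Real.rpow_le_rpow_left_iff (by norm_num)).mpr (le_of_lt hp1)
  -- main estimate: Sp ≥ 2^p - 1
  have hSp_ge : 2 ^ p - 1 ≤ Sp := by
    have h1 : 2 ^ p * 2 ≤ 2 * (Sp + Sm) := by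
      have : 2 ^ p * 2 ≤ 2 ^ p * (Sa + Sb) := by
        have hpos : (0 : ℝ) < 2 ^ p := by positivity
        nlinarith
      linarith
    nlinarith
  have hlp : lpNorm p (a + b) ^ p = Sp := by
    rw [lpNorm, ← hSp_def, ← Real.rpow_mul hSp0, one_div_mul_cancel (ne_of_gt hp0),
      Real.rpow_one]
  refine ⟨by rw [hlp]; exact hSp_ge, by linarith, ?_⟩
  rw [lpNorm, ← hSp_def]
  exact Real.one_le_rpow (by linarith) (by positivity)
end

section
/- Let 1 < p < 2 and let B ∈ GL_3(ℝ) satisfy ‖Bu‖_p = 1 for all u ∈ 𝒰³. Then ‖Bu‖_p ≥ 1 for every nonzero vector u ∈ ℤ³ all of whose coordinates lie in {−1, 0, 1}. -/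
open Finset

/-- The set 𝒰³ = {±(1,0,0), ±(0,1,0), ±(0,0,1), ±(1,1,0), ±(0,1,1), ±(1,0,1), ±(1,1,1)} ⊆ ℤ³. -/
def U3 : Set (Fin 3 → ℤ) :=
  {![1,0,0], ![0,1,0], ![0,0,1], ![1,1,0], ![0,1,1], ![1,0,1], ![1,1,1],
   -![1,0,0], -![0,1,0], -![0,0,1], -![1,1,0], -![0,1,1], -![1,0,1], -![1,1,1]}

lemma real_add_rpow_le (a b p : ℝ) (ha : 0 ≤ a) (hb : 0 ≤ b) (hp : 1 ≤ p) :
    a ^ p + b ^ p ≤ (a + b) ^ p := by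
  have h := NNReal.coe_le_coe.2 (NNReal.add_rpow_le_rpow_add a.toNNReal b.toNNReal hp)
  simpa [NNReal.coe_rpow, Real.coe_toNNReal, ha, hb, Real.toNNReal_add ha hb] using h

lemma ptwise (p : ℝ) (hp : 1 ≤ p) (a b : ℝ) :
    |a| ^ p + |b| ^ p ≤ |a + b| ^ p + |a - b| ^ p := by
  have hp0 : (0:ℝ) < p := lt_of_lt_of_le one_pos hp
  have h1 : |a| + |b| ≤ max |a + b| |a - b| := by
    rcases le_total 0 a with ha | ha <;> rcases le_total 0 b with hb | hb
    · apply le_max_of_le_left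
      rw [abs_of_nonneg ha, abs_of_nonneg hb, abs_of_nonneg (by linarith : (0:ℝ) ≤ a + b)]
    · apply le_max_of_le_right
      rw [abs_of_nonneg ha, abs_of_nonpos hb, abs_of_nonneg (by linarith : (0:ℝ) ≤ a - b)]
      linarith
    · apply le_max_of_le_right
      rw [abs_of_nonpos ha, abs_of_nonneg hb, abs_of_nonpos (by linarith : a - b ≤ 0)]
      linarith
    · apply le_max_of_le_left
      rw [abs_of_nonpos ha, abs_of_nonpos hb, abs_of_nonpos (by linarith : a + b ≤ 0)]
      linarith
  have h2 : |a| ^ p + |b| ^ p ≤ (|a| + |b|) ^ p :=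
    real_add_rpow_le _ _ p (abs_nonneg a) (abs_nonneg b) hp
  have h3 : (|a| + |b|) ^ p ≤ (max |a + b| |a - b|) ^ p :=
    Real.rpow_le_rpow (by positivity) h1 hp0.le
  have h4 : (max |a + b| |a - b|) ^ p ≤ |a + b| ^ p + |a - b| ^ p := by
    rcases max_cases |a + b| |a - b| with ⟨hm, _⟩ | ⟨hm, _⟩ <;> rw [hm]
    · have := Real.rpow_nonneg (abs_nonneg (a - b)) p; linarith
    · have := Real.rpow_nonneg (abs_nonneg (a + b)) p; linarith
  linarith

lemma key (p : ℝ) (hp : 1 ≤ p) (x y : Fin 3 → ℝ)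
    (hx : lpNorm p x = 1) (hy : lpNorm p y = 1) (hxy : lpNorm p (x + y) = 1) :
    1 ≤ lpNorm p (x - y) := by
  have hp0 : (0:ℝ) < p := lt_of_lt_of_le one_pos hp
  have sum_eq : ∀ z : Fin 3 → ℝ, lpNorm p z = 1 → ∑ i, |z i| ^ p = 1 := by
    intro z hz
    have hnn : (0:ℝ) ≤ ∑ i, |z i| ^ p :=
      Finset.sum_nonneg fun i _ => Real.rpow_nonneg (abs_nonneg _) p
    have h1 : ((∑ i, |z i| ^ p) ^ (1 / p)) ^ p = 1 := by
      rw [show (∑ i, |z i| ^ p) ^ (1/p) = lpNorm p z from rfl, hz, Real.one_rpow]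
    rwa [← Real.rpow_mul hnn, one_div, inv_mul_cancel₀ hp0.ne', Real.rpow_one] at h1
  have hsum : ∀ i ∈ Finset.univ, |x i| ^ p + |y i| ^ p ≤ |(x + y) i| ^ p + |(x - y) i| ^ p :=
    fun i _ => by simpa using ptwise p hp (x i) (y i)
  have hle := Finset.sum_le_sum hsum
  rw [Finset.sum_add_distrib, Finset.sum_add_distrib, sum_eq x hx, sum_eq y hy,
    sum_eq (x + y) hxy] at hle
  have hS1 : (1:ℝ) ≤ ∑ i, |(x - y) i| ^ p := by linarith
  have hmono : (1:ℝ) ^ (1/p) ≤ (∑ i, |(x - y) i| ^ p) ^ (1/p) :=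
    Real.rpow_le_rpow (by norm_num) hS1 (by positivity)
  rwa [Real.one_rpow] at hmono

lemma mixed (p : ℝ) (hp : 1 ≤ p) (B : Matrix (Fin 3) (Fin 3) ℝ) (u : Fin 3 → ℤ)
    (h1 : lpNorm p (B.mulVec (fun i => ((max (u i) 0 : ℤ) : ℝ))) = 1)
    (h2 : lpNorm p (B.mulVec (fun i => ((max (-u i) 0 : ℤ) : ℝ))) = 1)
    (h3 : lpNorm p (B.mulVec (fun i => ((|u i| : ℤ) : ℝ))) = 1) :
    1 ≤ lpNorm p (B.mulVec (fun i => ((u i : ℤ) : ℝ))) := by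
  have hadd : (fun i => ((max (u i) 0 : ℤ) : ℝ)) + (fun i => ((max (-u i) 0 : ℤ) : ℝ))
      = fun i => ((|u i| : ℤ) : ℝ) := by
    funext i; simp only [Pi.add_apply]; rw [← Int.cast_add]; congr 1
    rcases le_total 0 (u i) with h | h
    · rw [abs_of_nonneg h]; omega
    · rw [abs_of_nonpos h]; omega
  have hsub : (fun i => ((max (u i) 0 : ℤ) : ℝ)) - (fun i => ((max (-u i) 0 : ℤ) : ℝ))
      = fun i => ((u i : ℤ) : ℝ) := by
    funext i; simp only [Pi.sub_apply]; rw [← Int.cast_sub]; congr 1; omega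
  have hk := key p hp (B.mulVec _) (B.mulVec _) h1 h2
    (by rw [← Matrix.mulVec_add, hadd]; exact h3)
  rwa [← Matrix.mulVec_sub, hsub] at hk

/-- If `1 < p < 2` and `B ∈ GL₃(ℝ)` satisfies `‖Bu‖_p = 1` for all `u ∈ 𝒰³`, then
`‖Bu‖_p ≥ 1` for every nonzero `u ∈ ℤ³` with all coordinates in `{−1, 0, 1}`. -/
theorem norm_ge_one_of_small_coords (p : ℝ) (hp1 : 1 < p) (hp2 : p < 2)
    (B : Matrix (Fin 3) (Fin 3) ℝ) (hB : IsUnit B)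
    (h : ∀ u ∈ U3, lpNorm p (B.mulVec (fun i => (u i : ℝ))) = 1) :
    ∀ u : Fin 3 → ℤ, u ≠ 0 → (∀ i, |u i| ≤ 1) →
      1 ≤ lpNorm p (B.mulVec (fun i => (u i : ℝ))) := by
  intro u hne hsmall
  have hv : (fun i => ((u i : ℤ) : ℝ)) = (fun i => ((![u 0, u 1, u 2] : Fin 3 → ℤ) i : ℝ)) := by
    funext i; fin_cases i <;> rfl
  have h0' : u 0 = -1 ∨ u 0 = 0 ∨ u 0 = 1 := by have := abs_le.mp (hsmall 0); omega
  have h1' : u 1 = -1 ∨ u 1 = 0 ∨ u 1 = 1 := by have := abs_le.mp (hsmall 1); omega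
  have h2' : u 2 = -1 ∨ u 2 = 0 ∨ u 2 = 1 := by have := abs_le.mp (hsmall 2); omega
  rw [hv]
  rcases h0' with h0 | h0 | h0 <;> rcases h1' with h1 | h1 | h1 <;>
    rcases h2' with h2 | h2 | h2 <;> rw [h0, h1, h2] <;>
  first
  | (exfalso; apply hne; funext i; fin_cases i <;> simp only [Pi.zero_apply] <;> assumption)
  | exact le_of_eq (h _ (by simp only [U3, Set.mem_insert_iff, Set.mem_singleton_iff]; decide)).symm
  | exact mixed p hp1.le B _
      (h _ (by simp only [U3, Set.mem_insert_iff, Set.mem_singleton_iff]; decide))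
      (h _ (by simp only [U3, Set.mem_insert_iff, Set.mem_singleton_iff]; decide))
      (h _ (by simp only [U3, Set.mem_insert_iff, Set.mem_singleton_iff]; decide))
end

section
/- Let 1 < p < 2 and let B ∈ GL_3(ℝ) satisfy ‖Bu‖_p = 1 for all u ∈ 𝒰³. Then ‖Bu‖_p ≥ 1 for all u ∈ ℤ³ \ {0}. -/
open Finset

private lemma lp_key {p : ℝ} [Fact (1 ≤ ENNReal.ofReal p)] (hp : 1 ≤ p) :
    ∀ z : Fin 3 → ℝ,
      lpNorm p z = ‖(WithLp.equiv (ENNReal.ofReal p) (Fin 3 → ℝ)).symm z‖ := by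
  have hp0 : 0 < p := one_pos.trans_le hp
  intro z
  rw [PiLp.norm_eq_sum (by rw [ENNReal.toReal_ofReal hp0.le]; exact hp0)]
  simp [lpNorm, ENNReal.toReal_ofReal hp0.le, Real.norm_eq_abs]

private lemma lp_tri {p : ℝ} (hp : 1 ≤ p) (x y : Fin 3 → ℝ) :
    lpNorm p (x + y) ≤ lpNorm p x + lpNorm p y := by
  haveI : Fact (1 ≤ ENNReal.ofReal p) := ⟨ENNReal.one_le_ofReal.mpr hp⟩
  rw [lp_key hp, lp_key hp, lp_key hp]
  exact norm_add_le ((WithLp.equiv (ENNReal.ofReal p) (Fin 3 → ℝ)).symm x)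
    ((WithLp.equiv (ENNReal.ofReal p) (Fin 3 → ℝ)).symm y)

private lemma lp_smul {p : ℝ} (hp : 1 ≤ p) (c : ℝ) (x : Fin 3 → ℝ) :
    lpNorm p (c • x) = |c| * lpNorm p x := by
  haveI : Fact (1 ≤ ENNReal.ofReal p) := ⟨ENNReal.one_le_ofReal.mpr hp⟩
  rw [lp_key hp, lp_key hp]
  rw [show (WithLp.equiv (ENNReal.ofReal p) (Fin 3 → ℝ)).symm (c • x)
      = c • (WithLp.equiv (ENNReal.ofReal p) (Fin 3 → ℝ)).symm x from rfl]
  rw [norm_smul, Real.norm_eq_abs]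

private lemma lp_zero {p : ℝ} (hp : 1 ≤ p) : lpNorm p (0 : Fin 3 → ℝ) = 0 := by
  haveI : Fact (1 ≤ ENNReal.ofReal p) := ⟨ENNReal.one_le_ofReal.mpr hp⟩
  rw [lp_key hp]
  exact norm_zero

/-- Superbase coefficient map: `α : Fin 4 → ℤ` goes to `Σ αᵢ sᵢ` where
`s₀ = -(1,1,1)`, `sⱼ = eⱼ`; in coordinates `j ↦ α (j+1) - α 0`. -/
def zmap (α : Fin 4 → ℤ) : Fin 3 → ℤ := fun j => α j.succ - α 0

/-- Norm of the image of an integer vector. -/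
noncomputable def Fnorm (p : ℝ) (B : Matrix (Fin 3) (Fin 3) ℝ) (v : Fin 3 → ℤ) : ℝ :=
  lpNorm p (B.mulVec fun i => (v i : ℝ))

noncomputable def fnat (p : ℝ) (B : Matrix (Fin 3) (Fin 3) ℝ) (α : Fin 4 → ℕ) : ℝ :=
  Fnorm p B (zmap fun i => (α i : ℤ))

private lemma Fnorm_add_le {p : ℝ} (hp : 1 ≤ p) (B : Matrix (Fin 3) (Fin 3) ℝ)
    (v w : Fin 3 → ℤ) : Fnorm p B (v + w) ≤ Fnorm p B v + Fnorm p B w := by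
  unfold Fnorm
  have e : (fun i => (((v + w) i : ℤ) : ℝ)) =
      (fun i => ((v i : ℤ) : ℝ)) + (fun i => ((w i : ℤ) : ℝ)) := by
    funext i; simp
  rw [e, Matrix.mulVec_add]
  exact lp_tri hp _ _

private lemma Fnorm_nsmul {p : ℝ} (hp : 1 ≤ p) (B : Matrix (Fin 3) (Fin 3) ℝ)
    (k : ℕ) (v : Fin 3 → ℤ) : Fnorm p B ((k : ℤ) • v) = k * Fnorm p B v := by
  unfold Fnorm
  have e : (fun i => ((((k : ℤ) • v) i : ℤ) : ℝ)) = (k : ℝ) • (fun i => ((v i : ℤ) : ℝ)) := by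
    funext i; simp [Pi.smul_apply]
  rw [e, Matrix.mulVec_smul, lp_smul hp]
  rw [abs_of_nonneg (by positivity : (0:ℝ) ≤ (k:ℝ))]

private lemma Fnorm_zero {p : ℝ} (hp : 1 ≤ p) (B : Matrix (Fin 3) (Fin 3) ℝ) :
    Fnorm p B 0 = 0 := by
  unfold Fnorm
  have e : (fun i => (((0 : Fin 3 → ℤ) i : ℤ) : ℝ)) = (0 : Fin 3 → ℝ) := by funext i; simp
  rw [e, Matrix.mulVec_zero, lp_zero hp]

section main
variable {p : ℝ} {B : Matrix (Fin 3) (Fin 3) ℝ}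

private lemma funit (hp : 1 ≤ p)
    (hh : ∀ u ∈ U3, lpNorm p (B.mulVec (fun i => (u i : ℝ))) = 1)
    (S : Finset (Fin 4)) (h1 : S.Nonempty) (h2 : S ≠ univ) :
    fnat p B (fun i => if i ∈ S then 1 else 0) = 1 := by
  have h1' : S ≠ ∅ := Finset.nonempty_iff_ne_empty.mp h1
  have hS := (by decide :
    ∀ S : Finset (Fin 4), S ≠ ∅ → S ≠ univ →
      (S = {0} ∨ S = {1} ∨ S = {2} ∨ S = {3} ∨
       S = {0,1} ∨ S = {0,2} ∨ S = {0,3} ∨ S = {1,2} ∨ S = {1,3} ∨ S = {2,3} ∨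
       S = {0,1,2} ∨ S = {0,1,3} ∨ S = {0,2,3} ∨ S = {1,2,3})) S h1' h2
  unfold fnat Fnorm
  rcases hS with rfl|rfl|rfl|rfl|rfl|rfl|rfl|rfl|rfl|rfl|rfl|rfl|rfl|rfl <;>
    exact hh _ (by simp only [U3, Set.mem_insert_iff, Set.mem_singleton_iff]; decide)

private lemma fnat_add_le (hp : 1 ≤ p) (α β : Fin 4 → ℕ) :
    fnat p B (α + β) ≤ fnat p B α + fnat p B β := by
  unfold fnat
  have e : (zmap fun i => (((α + β) i : ℕ) : ℤ)) =
      (zmap fun i => ((α i : ℕ) : ℤ)) + (zmap fun i => ((β i : ℕ) : ℤ)) := by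
    funext j
    simp only [zmap, Pi.add_apply, Nat.cast_add]
    ring
  rw [e]
  exact Fnorm_add_le hp B _ _

private lemma fnat_zero (hp : 1 ≤ p) : fnat p B (fun _ => 0) = 0 := by
  unfold fnat
  have e : (zmap fun i => (((fun _ : Fin 4 => 0) i : ℕ) : ℤ)) = 0 := by
    funext j; simp [zmap]
  rw [e, Fnorm_zero hp]

private lemma layer_le (hp : 1 ≤ p)
    (hh : ∀ u ∈ U3, lpNorm p (B.mulVec (fun i => (u i : ℝ))) = 1) :
    ∀ (K : ℕ) (α : Fin 4 → ℕ), (∀ i, α i ≤ K) → (∃ i, α i = 0) → fnat p B α ≤ K := by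
  intro K
  induction K with
  | zero =>
    intro α hb _
    have hα : α = fun _ => 0 := by funext i; exact Nat.le_zero.mp (hb i)
    rw [hα, fnat_zero hp]
    simp
  | succ K ih =>
    intro α hb hz
    by_cases h0 : ∀ i, α i = 0
    · have hα : α = fun _ => 0 := funext h0
      rw [hα, fnat_zero hp]
      positivity
    · push_neg at h0
      obtain ⟨i₁, hi₁⟩ := h0
      set T : Finset (Fin 4) := univ.filter (fun i => α i ≠ 0) with hT
      have hTne : T.Nonempty := ⟨i₁, by simp [hT, hi₁]⟩
      obtain ⟨i₀, hi₀⟩ := hz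
      have hTuniv : T ≠ univ := by
        intro hc
        have : i₀ ∈ T := hc ▸ mem_univ i₀
        simp [hT, hi₀] at this
      have hdecomp : α = (fun i => α i - 1) + (fun i => if i ∈ T then 1 else 0) := by
        funext i
        simp only [Pi.add_apply, hT, mem_filter, mem_univ, true_and]
        by_cases hαi : α i = 0
        · simp [hαi]
        · rw [if_pos hαi]; omega
      calc fnat p B α
          = fnat p B ((fun i => α i - 1) + (fun i => if i ∈ T then 1 else 0)) := by
            rw [← hdecomp]
        _ ≤ fnat p B (fun i => α i - 1) + fnat p B (fun i => if i ∈ T then 1 else 0) :=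
            fnat_add_le hp _ _
        _ ≤ (K : ℝ) + 1 := by
            have hb' : ∀ i, α i - 1 ≤ K := fun i => by have := hb i; omega
            have h1 := ih (fun i => α i - 1) hb' ⟨i₀, by show α i₀ - 1 = 0; omega⟩
            have h2 := funit hp hh T hTne hTuniv
            linarith
        _ = ((K + 1 : ℕ) : ℝ) := by push_cast; ring

private lemma fnat_ge_one (hp : 1 ≤ p)
    (hh : ∀ u ∈ U3, lpNorm p (B.mulVec (fun i => (u i : ℝ))) = 1)
    (α : Fin 4 → ℕ) (h0 : ∃ i, α i = 0) (hne : ∃ i, α i ≠ 0) :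
    1 ≤ fnat p B α := by
  set T : Finset (Fin 4) := univ.filter (fun i => α i ≠ 0) with hT
  obtain ⟨i₁, hi₁⟩ := hne
  obtain ⟨i₀, hi₀⟩ := h0
  have hTne : T.Nonempty := ⟨i₁, by simp [hT, hi₁]⟩
  have hTuniv : T ≠ univ := by
    intro hc
    have : i₀ ∈ T := hc ▸ mem_univ i₀
    simp [hT, hi₀] at this
  set a : ℕ := univ.sup α with ha
  have hle_a : ∀ i, α i ≤ a := fun i => Finset.le_sup (mem_univ i)
  have hm_le : ∀ i ∈ T, T.inf' hTne α ≤ α i := fun i hi => Finset.inf'_le α hi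
  set m : ℕ := T.inf' hTne α with hm
  have h1m : 1 ≤ m := by
    apply Finset.le_inf'
    intro i hi
    have : α i ≠ 0 := by simpa [hT] using hi
    omega
  set β : Fin 4 → ℕ := fun i => if i ∈ T then a + m - α i else 0 with hβ
  have hsum : α + β = fun i => (a + m) * (if i ∈ T then 1 else 0) := by
    funext i
    by_cases hi : i ∈ T
    · have h1 : α i ≤ a := hle_a i
      simp only [Pi.add_apply, hβ, if_pos hi]
      omega
    · have hz : α i = 0 := by
        by_contra hc
        exact hi (by simp [hT, hc])
      simp [hβ, hi, hz]
  have hscale : fnat p B (fun i => (a + m) * (if i ∈ T then 1 else 0)) = ((a + m : ℕ) : ℝ) := by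
    unfold fnat
    have e : (zmap fun i => ((((a + m) * (if i ∈ T then 1 else 0) : ℕ)) : ℤ)) =
        ((a + m : ℕ) : ℤ) • (zmap fun i => (((if i ∈ T then 1 else 0 : ℕ)) : ℤ)) := by
      funext j
      simp only [zmap, Pi.smul_apply, smul_eq_mul]
      push_cast
      ring
    rw [e, Fnorm_nsmul hp]
    have h2 := funit hp hh T hTne hTuniv
    unfold fnat at h2
    rw [h2, mul_one]
  have hβbound : fnat p B β ≤ (a : ℝ) := by
    apply layer_le hp hh a β
    · intro i
      by_cases hi : i ∈ T
      · have := hm_le i hi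
        simp only [hβ, if_pos hi]
        omega
      · simp [hβ, hi]
    · refine ⟨i₀, ?_⟩
      have : i₀ ∉ T := by simp [hT, hi₀]
      simp [hβ, this]
  have htri := fnat_add_le (B := B) hp α β
  rw [hsum, hscale] at htri
  have h1m' : (1 : ℝ) ≤ (m : ℝ) := by exact_mod_cast h1m
  push_cast at htri
  linarith

end main

/-- If `1 < p < 2` and `B ∈ GL₃(ℝ)` satisfies `‖Bu‖_p = 1` for all `u ∈ 𝒰³`, then
`‖Bu‖_p ≥ 1` for all `u ∈ ℤ³ \ {0}`. -/
theorem norm_ge_one_of_nonzero (p : ℝ) (hp1 : 1 < p) (hp2 : p < 2)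
    (B : Matrix (Fin 3) (Fin 3) ℝ) (hB : IsUnit B)
    (h : ∀ u ∈ U3, lpNorm p (B.mulVec (fun i => (u i : ℝ))) = 1) :
    ∀ u : Fin 3 → ℤ, u ≠ 0 →
      1 ≤ lpNorm p (B.mulVec (fun i => (u i : ℝ))) := by
  intro u hu
  have hp : 1 ≤ p := hp1.le
  set μ : ℤ := min 0 (min (u 0) (min (u 1) (u 2))) with hμdef
  have hμ0 : μ ≤ 0 := min_le_left _ _
  have hμu0 : μ ≤ u 0 := le_trans (min_le_right _ _) (min_le_left _ _)
  have hμu1 : μ ≤ u 1 :=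
    le_trans (min_le_right _ _) (le_trans (min_le_right _ _) (min_le_left _ _))
  have hμu2 : μ ≤ u 2 :=
    le_trans (min_le_right _ _) (le_trans (min_le_right _ _) (min_le_right _ _))
  set α : Fin 4 → ℕ := ![(-μ).toNat, (u 0 - μ).toNat, (u 1 - μ).toNat, (u 2 - μ).toNat] with hα
  have hc0 : ((α 0 : ℕ) : ℤ) = -μ := by
    rw [hα]
    simp [Int.toNat_of_nonneg (by omega : (0:ℤ) ≤ -μ)]
  have hc1 : ((α 1 : ℕ) : ℤ) = u 0 - μ := by
    rw [hα]
    simp [Int.toNat_of_nonneg (by omega : (0:ℤ) ≤ u 0 - μ)]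
  have hc2 : ((α 2 : ℕ) : ℤ) = u 1 - μ := by
    rw [hα]
    simp [Int.toNat_of_nonneg (by omega : (0:ℤ) ≤ u 1 - μ)]
  have hc3 : ((α 3 : ℕ) : ℤ) = u 2 - μ := by
    rw [hα]
    simp [Int.toNat_of_nonneg (by omega : (0:ℤ) ≤ u 2 - μ)]
  have hz : (zmap fun i => ((α i : ℕ) : ℤ)) = u := by
    funext j
    fin_cases j
    · show ((α (1 : Fin 4) : ℕ) : ℤ) - ((α 0 : ℕ) : ℤ) = u 0
      rw [hc1, hc0]; ring
    · show ((α (2 : Fin 4) : ℕ) : ℤ) - ((α 0 : ℕ) : ℤ) = u 1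
      rw [hc2, hc0]; ring
    · show ((α (3 : Fin 4) : ℕ) : ℤ) - ((α 0 : ℕ) : ℤ) = u 2
      rw [hc3, hc0]; ring
  have hminor : μ = 0 ∨ μ = u 0 ∨ μ = u 1 ∨ μ = u 2 := by omega
  have h0 : ∃ i, α i = 0 := by
    rcases hminor with hc|hc|hc|hc
    · exact ⟨0, by omega⟩
    · exact ⟨1, by omega⟩
    · exact ⟨2, by omega⟩
    · exact ⟨3, by omega⟩
  have hne : ∃ i, α i ≠ 0 := by
    by_contra hc
    push_neg at hc
    apply hu
    funext j
    have hj := congrFun hz j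
    have e0 := hc 0
    have ej := hc j.succ
    rw [← hj]
    simp [zmap, e0, ej]
  have hres := fnat_ge_one hp h α h0 hne
  unfold fnat Fnorm at hres
  rw [hz] at hres
  exact hres
end

section
/- (Effective implicit function theorem of Cohn–Kumar–Minton, existence part) Let V and W be finite-dimensional normed real vector spaces, let x₀ ∈ V and ε > 0, and let f : B(x₀, ε) → W be a C¹ function on the open ball B(x₀, ε) ⊆ V. Suppose T : W → V is a linear operator such that ‖Df(x) ∘ T − id_W‖ < 1 − ‖T‖ · ‖f(x₀)‖ / ε for all x ∈ B(x₀, ε), where ‖·‖ denotes the operator norm, Df(x) is the (Fréchet) derivative of f at x, and id_W is the identity operator on W. Then there exists x* ∈ B(x₀, ε) with f(x*) = 0. -/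
open Metric Filter Topology

lemma eift_step {V W : Type*} [NormedAddCommGroup V] [NormedSpace ℝ V]
    [NormedAddCommGroup W] [NormedSpace ℝ W]
    {x₀ : V} {ε : ℝ} (f : V → W) (T : W →L[ℝ] V)
    (hd : ∀ z ∈ ball x₀ ε, HasFDerivAt f (fderiv ℝ f z) z)
    {x : V} (hx : x ∈ ball x₀ ε) (hy : x - T (f x) ∈ ball x₀ ε)
    {M : ℝ}
    (hM : ∀ z ∈ segment ℝ x (x - T (f x)),
      ‖(fderiv ℝ f z).comp T - ContinuousLinearMap.id ℝ W‖ ≤ M) :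
    ‖f (x - T (f x))‖ ≤ M * ‖f x‖ := by
  set v : V := -(T (f x)) with hv
  have hxy : x - T (f x) = x + v := by rw [hv]; abel
  rw [hxy] at hy hM ⊢
  have hseg : ∀ t ∈ Set.Icc (0:ℝ) 1, x + t • v ∈ segment ℝ x (x + v) := by
    intro t ht
    refine ⟨1 - t, t, by linarith [ht.2], ht.1, by ring, by module⟩
  have hsegball : segment ℝ x (x + v) ⊆ ball x₀ ε :=
    (convex_ball x₀ ε).segment_subset hx hy
  set γ : ℝ → W := fun t => f (x + t • v) + t • f x with hγ
  set γ' : ℝ → W := fun t => fderiv ℝ f (x + t • v) v + f x with hγ'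
  have hderiv : ∀ t ∈ Set.Icc (0:ℝ) 1, HasDerivWithinAt γ (γ' t) (Set.Icc 0 1) t := by
    intro t ht
    have h1 : HasDerivAt (fun s : ℝ => x + s • v) v t := by
      simpa using ((hasDerivAt_id t).smul_const v).const_add x
    have h2 : HasDerivAt (fun s : ℝ => f (x + s • v)) (fderiv ℝ f (x + t • v) v) t :=
      (hd _ (hsegball (hseg t ht))).comp_hasDerivAt t h1
    have h3 : HasDerivAt (fun s : ℝ => s • f x) (f x) t := by
      simpa using (hasDerivAt_id t).smul_const (f x)
    exact (h2.add h3).hasDerivWithinAt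
  have hbound : ∀ t ∈ Set.Ico (0:ℝ) 1, ‖γ' t‖ ≤ M * ‖f x‖ := by
    intro t ht
    have hz := hseg t ⟨ht.1, ht.2.le⟩
    have key : γ' t = -(((fderiv ℝ f (x + t • v)).comp T
        - ContinuousLinearMap.id ℝ W) (f x)) := by
      simp [hγ', hv, map_neg]; abel
    rw [key, norm_neg]
    calc ‖(((fderiv ℝ f (x + t • v)).comp T - ContinuousLinearMap.id ℝ W) (f x))‖
        ≤ ‖(fderiv ℝ f (x + t • v)).comp T - ContinuousLinearMap.id ℝ W‖ * ‖f x‖ :=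
          ContinuousLinearMap.le_opNorm _ _
      _ ≤ M * ‖f x‖ := by
          exact mul_le_mul_of_nonneg_right (hM _ hz) (norm_nonneg _)
  have := norm_image_sub_le_of_norm_deriv_le_segment_01' hderiv hbound
  simpa [hγ] using this

lemma eift_isCompact_segment {V : Type*} [NormedAddCommGroup V] [NormedSpace ℝ V]
    (a b : V) : IsCompact (segment ℝ a b) := by
  rw [segment_eq_image]
  exact isCompact_Icc.image (by continuity)

/-- Effective implicit function theorem of Cohn–Kumar–Minton (existence part):
Let `V`, `W` be finite-dimensional normed real vector spaces, `x₀ ∈ V`, `ε > 0`, and let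
`f` be `C¹` on the open ball `B(x₀, ε)`. If `T : W → V` is a linear operator such that
`‖Df(x) ∘ T − id_W‖ < 1 − ‖T‖·‖f(x₀)‖/ε` for all `x ∈ B(x₀, ε)`, then there is
`x* ∈ B(x₀, ε)` with `f(x*) = 0`. -/
theorem effective_implicit_function_theorem
    {V W : Type*} [NormedAddCommGroup V] [NormedSpace ℝ V] [FiniteDimensional ℝ V]
    [NormedAddCommGroup W] [NormedSpace ℝ W] [FiniteDimensional ℝ W]
    (x₀ : V) (ε : ℝ) (hε : 0 < ε) (f : V → W)
    (hf : ContDiffOn ℝ 1 f (Metric.ball x₀ ε))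
    (T : W →L[ℝ] V)
    (hT : ∀ x ∈ Metric.ball x₀ ε,
      ‖(fderiv ℝ f x).comp T - ContinuousLinearMap.id ℝ W‖ < 1 - ‖T‖ * ‖f x₀‖ / ε) :
    ∃ x ∈ Metric.ball x₀ ε, f x = 0 := by
  have hx₀ : x₀ ∈ ball x₀ ε := mem_ball_self hε
  by_cases h0 : f x₀ = 0
  · exact ⟨x₀, hx₀, h0⟩
  haveI : Nontrivial W := ⟨⟨f x₀, 0, h0⟩⟩
  have hc : 0 < ‖f x₀‖ := norm_pos_iff.2 h0
  set k : ℝ := 1 - ‖T‖ * ‖f x₀‖ / ε with hk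
  have hk0 : 0 < k := lt_of_le_of_lt (norm_nonneg _) (hT x₀ hx₀)
  have hTpos : 0 < ‖T‖ := by
    rcases (norm_nonneg T).lt_or_eq with h | h
    · exact h
    · exfalso
      have hT0 : T = 0 := by rwa [eq_comm, norm_eq_zero] at h
      have := hT x₀ hx₀
      rw [hT0] at this
      simp only [ContinuousLinearMap.comp_zero, zero_sub, norm_neg,
        ContinuousLinearMap.norm_id] at this
      rw [hk, ← h] at this
      simp at this
  have hk1 : k < 1 := by
    have : 0 < ‖T‖ * ‖f x₀‖ / ε := by positivity
    rw [hk]; linarith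
  have hD : ‖T‖ * ‖f x₀‖ = ε * (1 - k) := by
    rw [hk]; field_simp
    ring
  -- differentiability
  have hd : ∀ z ∈ ball x₀ ε, HasFDerivAt f (fderiv ℝ f z) z := fun z hz =>
    ((hf.differentiableOn one_ne_zero z hz).differentiableAt
      (isOpen_ball.mem_nhds hz)).hasFDerivAt
  have hcont : ContinuousOn
      (fun z => ‖(fderiv ℝ f z).comp T - ContinuousLinearMap.id ℝ W‖) (ball x₀ ε) := by
    have h1 : ContinuousOn (fderiv ℝ f) (ball x₀ ε) :=
      hf.continuousOn_fderiv_of_isOpen isOpen_ball le_rfl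
    have h2 : ContinuousOn (fun z => (fderiv ℝ f z).comp T) (ball x₀ ε) :=
      h1.clm_comp continuousOn_const
    exact (h2.sub continuousOn_const).norm
  -- one Newton step contracts by k
  have kstep : ∀ a ∈ ball x₀ ε, a - T (f a) ∈ ball x₀ ε →
      ‖f (a - T (f a))‖ ≤ k * ‖f a‖ := by
    intro a ha hb
    have hsub : segment ℝ a (a - T (f a)) ⊆ ball x₀ ε :=
      (convex_ball x₀ ε).segment_subset ha hb
    obtain ⟨z, hz, hmax⟩ := (eift_isCompact_segment _ _).exists_isMaxOn
      ⟨a, left_mem_segment ℝ a _⟩ (hcont.mono hsub)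
    exact le_trans (eift_step f T hd ha hb fun z hz => hmax hz)
      (mul_le_mul_of_nonneg_right (hT z (hsub hz)).le (norm_nonneg _))
  -- the first step contracts strictly
  set x₁ : V := x₀ - T (f x₀) with hx₁def
  have hstep0 : ‖x₁ - x₀‖ ≤ ε * (1 - k) := by
    have : x₁ - x₀ = -(T (f x₀)) := by rw [hx₁def]; abel
    rw [this, norm_neg, ← hD]
    exact T.le_opNorm _
  have hx₁ : x₁ ∈ ball x₀ ε := by
    rw [mem_ball, dist_eq_norm]
    calc ‖x₁ - x₀‖ ≤ ε * (1 - k) := hstep0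
      _ < ε := by nlinarith
  have hsub0 : segment ℝ x₀ x₁ ⊆ ball x₀ ε :=
    (convex_ball x₀ ε).segment_subset hx₀ hx₁
  obtain ⟨z₀, hz₀, hmax₀⟩ := (eift_isCompact_segment _ _).exists_isMaxOn
    ⟨x₀, left_mem_segment ℝ x₀ x₁⟩ (hcont.mono hsub0)
  set M₀ : ℝ := ‖(fderiv ℝ f z₀).comp T - ContinuousLinearMap.id ℝ W‖ with hM₀def
  have hM₀0 : 0 ≤ M₀ := norm_nonneg _
  have hM₀k : M₀ < k := hT z₀ (hsub0 hz₀)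
  have step1 : ‖f x₁‖ ≤ M₀ * ‖f x₀‖ := eift_step f T hd hx₀ hx₁ fun z hz => hmax₀ hz
  set r : ℝ := ε * (1 - k) + ε * M₀ with hr
  have hrε : r < ε := by rw [hr]; nlinarith
  have hr0 : 0 ≤ r := by rw [hr]; nlinarith
  -- the sequence
  set seq : ℕ → V := fun n => Nat.rec x₀ (fun _ xn => xn - T (f xn)) n with hseqdef
  have hseqsucc : ∀ n, seq (n + 1) = seq n - T (f (seq n)) := fun n => rfl
  have hseq0 : seq 0 = x₀ := rfl
  -- invariant
  have key : ∀ n, seq (n+1) ∈ ball x₀ ε ∧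
      ‖seq (n+1) - x₀‖ + ‖T‖ * ‖f (seq (n+1))‖ / (1-k) ≤ r := by
    intro n
    induction n with
    | zero =>
      have h1 : ‖T‖ * ‖f x₁‖ / (1-k) ≤ ε * M₀ := by
        rw [div_le_iff₀ (by linarith)]
        calc ‖T‖ * ‖f x₁‖ ≤ ‖T‖ * (M₀ * ‖f x₀‖) :=
              mul_le_mul_of_nonneg_left step1 (norm_nonneg _)
          _ = M₀ * (‖T‖ * ‖f x₀‖) := by ring
          _ = ε * M₀ * (1-k) := by rw [hD]; ring
      have hΦ : ‖seq 1 - x₀‖ + ‖T‖ * ‖f (seq 1)‖ / (1-k) ≤ r := by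
        have h5 : seq 1 = x₁ := rfl
        rw [h5, hr]
        exact add_le_add hstep0 h1
      refine ⟨?_, hΦ⟩
      show x₁ ∈ ball x₀ ε
      exact hx₁
    | succ n ih =>
      obtain ⟨hball, hΦ⟩ := ih
      set a : V := seq (n+1) with ha
      have hfa : 0 ≤ ‖T‖ * ‖f a‖ := by positivity
      have hdivge : ‖T‖ * ‖f a‖ ≤ ‖T‖ * ‖f a‖ / (1-k) := by
        rw [le_div_iff₀ (by linarith)]
        nlinarith
      have hstep : ‖seq (n+2) - a‖ ≤ ‖T‖ * ‖f a‖ := by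
        have : seq (n+2) - a = -(T (f a)) := by rw [hseqsucc (n+1), ← ha]; abel
        rw [this, norm_neg]; exact T.le_opNorm _
      have hdist : ‖seq (n+2) - x₀‖ ≤ ‖a - x₀‖ + ‖T‖ * ‖f a‖ := by
        calc ‖seq (n+2) - x₀‖ = ‖(seq (n+2) - a) + (a - x₀)‖ := by
              rw [sub_add_sub_cancel]
          _ ≤ ‖seq (n+2) - a‖ + ‖a - x₀‖ := norm_add_le _ _
          _ ≤ ‖a - x₀‖ + ‖T‖ * ‖f a‖ := by linarith
      have hball2 : seq (n+2) ∈ ball x₀ ε := by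
        rw [mem_ball, dist_eq_norm]
        calc ‖seq (n+2) - x₀‖ ≤ ‖a - x₀‖ + ‖T‖ * ‖f a‖ := hdist
          _ ≤ ‖a - x₀‖ + ‖T‖ * ‖f a‖ / (1-k) := by linarith
          _ ≤ r := hΦ
          _ < ε := hrε
      have hb' : a - T (f a) ∈ ball x₀ ε := by
        rw [ha, ← hseqsucc (n+1)]
        exact hball2
      have hcontract : ‖f (seq (n+2))‖ ≤ k * ‖f a‖ := by
        rw [hseqsucc (n+1), ← ha]
        exact kstep a hball hb'
      refine ⟨hball2, ?_⟩
      have h2 : ‖T‖ * ‖f (seq (n+2))‖ / (1-k) ≤ k * (‖T‖ * ‖f a‖) / (1-k) := by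
        apply div_le_div_of_nonneg_right ?_ (by linarith)
        · nlinarith [mul_le_mul_of_nonneg_left hcontract (norm_nonneg T)]
      have hne : (1:ℝ) - k ≠ 0 := by linarith
      have h3 : ‖T‖ * ‖f a‖ + k * (‖T‖ * ‖f a‖) / (1-k) = ‖T‖ * ‖f a‖ / (1-k) := by
        field_simp
        ring
      calc ‖seq (n+2) - x₀‖ + ‖T‖ * ‖f (seq (n+2))‖ / (1-k)
          ≤ ‖a - x₀‖ + ‖T‖ * ‖f a‖ + k * (‖T‖ * ‖f a‖) / (1-k) := by linarith
        _ = ‖a - x₀‖ + ‖T‖ * ‖f a‖ / (1-k) := by rw [add_assoc, h3]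
        _ ≤ r := hΦ
  have hballn : ∀ n, seq n ∈ ball x₀ ε := by
    intro n
    cases n with
    | zero => exact hx₀
    | succ n => exact (key n).1
  -- geometric decay
  have decay : ∀ n, ‖f (seq n)‖ ≤ k ^ n * ‖f x₀‖ := by
    intro n
    induction n with
    | zero => rw [hseq0, pow_zero, one_mul]
    | succ n ih =>
      have := kstep (seq n) (hballn n) (by rw [← hseqsucc n]; exact hballn (n+1))
      rw [← hseqsucc n] at this
      calc ‖f (seq (n+1))‖ ≤ k * ‖f (seq n)‖ := this
        _ ≤ k * (k ^ n * ‖f x₀‖) := mul_le_mul_of_nonneg_left ih hk0.le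
        _ = k ^ (n+1) * ‖f x₀‖ := by ring
  -- Cauchy
  have hcauchy : CauchySeq seq := by
    apply cauchySeq_of_le_geometric k (‖T‖ * ‖f x₀‖) hk1
    intro n
    rw [dist_eq_norm]
    have : seq n - seq (n+1) = T (f (seq n)) := by rw [hseqsucc n]; abel
    rw [this]
    calc ‖T (f (seq n))‖ ≤ ‖T‖ * ‖f (seq n)‖ := T.le_opNorm _
      _ ≤ ‖T‖ * (k ^ n * ‖f x₀‖) := mul_le_mul_of_nonneg_left (decay n) (norm_nonneg _)
      _ = ‖T‖ * ‖f x₀‖ * k ^ n := by ring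
  obtain ⟨xs, hlim⟩ := cauchySeq_tendsto_of_complete hcauchy
  -- limit is within the closed ball of radius r
  have hxsr : xs ∈ closedBall x₀ r := by
    have hlim' : Tendsto (fun n => seq (n+1)) atTop (𝓝 xs) :=
      hlim.comp (tendsto_add_atTop_nat 1)
    refine isClosed_closedBall.mem_of_tendsto hlim' (Eventually.of_forall fun n => ?_)
    rw [mem_closedBall, dist_eq_norm]
    have := (key n).2
    have h := norm_nonneg (f (seq (n+1)))
    nlinarith [(key n).2, div_nonneg (mul_nonneg (norm_nonneg T) (norm_nonneg (f (seq (n+1))))) (by linarith : (0:ℝ) ≤ 1 - k)]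
  have hxsball : xs ∈ ball x₀ ε := by
    rw [mem_ball]
    exact lt_of_le_of_lt (mem_closedBall.1 hxsr) hrε
  -- f xs = 0
  have hfc : ContinuousAt f xs :=
    ((hf.differentiableOn one_ne_zero xs hxsball).differentiableAt
      (isOpen_ball.mem_nhds hxsball)).continuousAt
  have hto0 : Tendsto (fun n => f (seq n)) atTop (𝓝 0) := by
    apply squeeze_zero_norm decay
    have := (tendsto_pow_atTop_nhds_zero_of_lt_one hk0.le hk1).mul_const ‖f x₀‖
    simpa using this
  have htofxs : Tendsto (fun n => f (seq n)) atTop (𝓝 (f xs)) :=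
    (hfc.tendsto).comp hlim
  exact ⟨xs, hxsball, tendsto_nhds_unique htofxs hto0⟩
end

section
/- For every p ∈ [1, 1.58] there exists a unique triple (x, y, z) of real numbers satisfying z ≥ x ≥ y ≥ 0, x^p + y^p + z^p = 1, (x−y)^p + (z−x)^p + (y+z)^p = 1, and 3(−x+y+z)^p = 1. -/
open Set Real Filter Topology

namespace USS

noncomputable def ss (p : ℝ) : ℝ := (3 : ℝ) ^ (-1/p)

noncomputable def F1 (p a b : ℝ) : ℝ :=
  (ss p + a - b) ^ p + (ss p - b) ^ p + (ss p + a) ^ p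

noncomputable def F2 (p a b : ℝ) : ℝ :=
  a ^ p + b ^ p + (2 * ss p + a - b) ^ p

variable {p : ℝ}

lemma ss_pos : 0 < ss p := Real.rpow_pos_of_pos (by norm_num) _

lemma ss_rpow (hp : 1 ≤ p) : ss p ^ p = 1/3 := by
  have hp0 : p ≠ 0 := by positivity
  rw [ss, ← Real.rpow_mul (by norm_num : (0:ℝ) ≤ 3)]
  rw [div_mul_cancel₀ _ hp0]
  norm_num [Real.rpow_neg_one]

lemma ss_lt_one (hp : 1 ≤ p) : ss p < 1 := by
  apply Real.rpow_lt_one_of_one_lt_of_neg (by norm_num)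
  have : 0 < p := by positivity
  rw [neg_div]
  simp [div_pos, this]

-- subadditivity
lemma rpow_subadd_strict {x y q : ℝ} (hx : 0 < x) (hy : 0 < y) (hq : 0 < q) (hq1 : q < 1) :
    (x + y) ^ q < x ^ q + y ^ q := by
  have hxy : 0 < x + y := by linarith
  have hx1 : (x + y) ^ (q - 1) < x ^ (q - 1) :=
    Real.rpow_lt_rpow_of_neg hx (by linarith) (by linarith)
  have hy1 : (x + y) ^ (q - 1) < y ^ (q - 1) :=
    Real.rpow_lt_rpow_of_neg hy (by linarith) (by linarith)
  have ex : x ^ q = x ^ (q - 1) * x := by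
    rw [← Real.rpow_add_one hx.ne' (q - 1)]; ring_nf
  have ey : y ^ q = y ^ (q - 1) * y := by
    rw [← Real.rpow_add_one hy.ne' (q - 1)]; ring_nf
  have exy : (x + y) ^ q = (x + y) ^ (q - 1) * (x + y) := by
    rw [← Real.rpow_add_one hxy.ne' (q - 1)]; ring_nf
  calc (x + y) ^ q = (x + y) ^ (q - 1) * x + (x + y) ^ (q - 1) * y := by rw [exy]; ring
    _ < x ^ (q - 1) * x + y ^ (q - 1) * y := by
        apply add_lt_add
        · exact mul_lt_mul_of_pos_right hx1 hx
        · exact mul_lt_mul_of_pos_right hy1 hy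
    _ = x ^ q + y ^ q := by rw [ex, ey]

lemma rpow_subadd {x y q : ℝ} (hx : 0 ≤ x) (hy : 0 ≤ y) (hq : 0 < q) (hq1 : q < 1) :
    (x + y) ^ q ≤ x ^ q + y ^ q := by
  rcases eq_or_lt_of_le hx with h | h
  · simp [← h, Real.zero_rpow hq.ne']
  rcases eq_or_lt_of_le hy with h' | h'
  · simp [← h', Real.zero_rpow hq.ne']
  exact (rpow_subadd_strict h h' hq hq1).le


-- monotonicity of F1 in a
lemma F1_mono_a (hp : 0 < p) {b a1 a2 : ℝ} (hbs : b ≤ ss p) (h1 : 0 ≤ a1) (h12 : a1 ≤ a2) :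
    F1 p a1 b ≤ F1 p a2 b := by
  have hs : (0:ℝ) < ss p := ss_pos
  unfold F1
  have t1 : (ss p + a1 - b) ^ p ≤ (ss p + a2 - b) ^ p :=
    Real.rpow_le_rpow (by linarith) (by linarith) hp.le
  have t3 : (ss p + a1) ^ p ≤ (ss p + a2) ^ p :=
    Real.rpow_le_rpow (by linarith) (by linarith) hp.le
  linarith

lemma F1_strict_mono_a (hp : 0 < p) {b a1 a2 : ℝ} (hbs : b ≤ ss p) (h1 : 0 ≤ a1)
    (h12 : a1 < a2) : F1 p a1 b < F1 p a2 b := by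
  have hs : (0:ℝ) < ss p := ss_pos
  unfold F1
  have t1 : (ss p + a1 - b) ^ p < (ss p + a2 - b) ^ p :=
    Real.rpow_lt_rpow (by linarith) (by linarith) hp
  have t3 : (ss p + a1) ^ p < (ss p + a2) ^ p :=
    Real.rpow_lt_rpow (by linarith) (by linarith) hp
  linarith

lemma F1_anti_b (hp : 0 < p) {a b1 b2 : ℝ} (ha : 0 ≤ a) (hb1 : b1 ≤ b2) (hb2 : b2 ≤ ss p) :
    F1 p a b2 ≤ F1 p a b1 := by
  have hs : (0:ℝ) < ss p := ss_pos
  unfold F1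
  have t1 : (ss p + a - b2) ^ p ≤ (ss p + a - b1) ^ p :=
    Real.rpow_le_rpow (by linarith) (by linarith) hp.le
  have t2 : (ss p - b2) ^ p ≤ (ss p - b1) ^ p :=
    Real.rpow_le_rpow (by linarith) (by linarith) hp.le
  linarith

lemma F1_strict_anti_b (hp : 0 < p) {a b1 b2 : ℝ} (ha : 0 ≤ a) (hb1 : b1 < b2)
    (hb2 : b2 ≤ ss p) : F1 p a b2 < F1 p a b1 := by
  have hs : (0:ℝ) < ss p := ss_pos
  have t1 : (ss p + a - b2) ^ p < (ss p + a - b1) ^ p :=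
    Real.rpow_lt_rpow (by linarith) (by linarith) hp
  have t2 : (ss p - b2) ^ p ≤ (ss p - b1) ^ p :=
    Real.rpow_le_rpow (by linarith) (by linarith) hp.le
  unfold F1; linarith

-- convexity midpoint facts
lemma midpoint_conv (hp : 1 ≤ p) {t b : ℝ} (h0 : 0 ≤ t - b) (hb : 0 ≤ b) :
    2 * t ^ p ≤ (t - b) ^ p + (t + b) ^ p := by
  have h := (convexOn_rpow hp).2 (mem_Ici.mpr h0) (mem_Ici.mpr (by linarith : (0:ℝ) ≤ t + b))
    (by norm_num : (0:ℝ) ≤ (1:ℝ)/2) (by norm_num : (0:ℝ) ≤ (1:ℝ)/2) (by norm_num)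
  simp only [smul_eq_mul] at h
  have e : (1:ℝ)/2 * (t - b) + 1/2 * (t + b) = t := by ring
  rw [e] at h
  linarith

lemma midpoint_strict_conv (hp : 1 < p) {t b : ℝ} (h0 : 0 ≤ t - b) (hb : 0 < b) :
    2 * t ^ p < (t - b) ^ p + (t + b) ^ p := by
  have h := (strictConvexOn_rpow hp).2 (mem_Ici.mpr h0)
    (mem_Ici.mpr (by linarith : (0:ℝ) ≤ t + b)) (by intro h; linarith [congrArg id h] : t - b ≠ t + b)
    (by norm_num : (0:ℝ) < (1:ℝ)/2) (by norm_num : (0:ℝ) < (1:ℝ)/2) (by norm_num)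
  simp only [smul_eq_mul] at h
  have e : (1:ℝ)/2 * (t - b) + 1/2 * (t + b) = t := by ring
  rw [e] at h
  linarith

-- continuity
lemma F1_cont_a (hp : 0 < p) (b : ℝ) : Continuous fun a => F1 p a b := by
  unfold F1
  have h1 : Continuous fun a : ℝ => (ss p + a - b) ^ p :=
    (continuous_const.add continuous_id |>.sub continuous_const).rpow_const
      (fun x => Or.inr hp.le)
  have h3 : Continuous fun a : ℝ => (ss p + a) ^ p :=
    (continuous_const.add continuous_id).rpow_const (fun x => Or.inr hp.le)
  exact (h1.add continuous_const).add h3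

lemma F1_cont_b (hp : 0 < p) (a : ℝ) : Continuous fun b => F1 p a b := by
  unfold F1
  have h1 : Continuous fun b : ℝ => (ss p + a - b) ^ p :=
    (continuous_const.sub continuous_id).rpow_const (fun x => Or.inr hp.le)
  have h2 : Continuous fun b : ℝ => (ss p - b) ^ p :=
    (continuous_const.sub continuous_id).rpow_const (fun x => Or.inr hp.le)
  exact (h1.add h2).add continuous_const

lemma F1_zero_le (hp : 1 ≤ p) {b : ℝ} (hb : 0 ≤ b) (hbs : b ≤ ss p) : F1 p 0 b ≤ 1 := by
  have hs : (0:ℝ) < ss p := ss_pos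
  have h1 : (ss p + 0 - b) ^ p ≤ ss p ^ p := Real.rpow_le_rpow (by linarith) (by linarith) (by linarith)
  have h2 : (ss p - b) ^ p ≤ ss p ^ p := Real.rpow_le_rpow (by linarith) (by linarith) (by linarith)
  have h3 : (ss p + 0) ^ p = ss p ^ p := by norm_num
  have := ss_rpow (p := p) hp
  unfold F1; rw [h3]; linarith

lemma F1_zero_lt (hp1 : 1 < p) {b : ℝ} (hb : 0 < b) (hbs : b ≤ ss p) : F1 p 0 b < 1 := by
  have hs : (0:ℝ) < ss p := ss_pos
  have h1 : (ss p + 0 - b) ^ p < ss p ^ p := Real.rpow_lt_rpow (by linarith) (by linarith) (by linarith)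
  have h2 : (ss p - b) ^ p < ss p ^ p := Real.rpow_lt_rpow (by linarith) (by linarith) (by linarith)
  have h3 : (ss p + 0) ^ p = ss p ^ p := by norm_num
  have := ss_rpow (p := p) hp1.le
  unfold F1; rw [h3]; linarith

lemma F1_diag_ge (hp : 1 ≤ p) {b : ℝ} (hb : 0 ≤ b) (hbs : b ≤ ss p) : 1 ≤ F1 p b b := by
  have hs : (0:ℝ) < ss p := ss_pos
  have h := midpoint_conv (t := ss p) (b := b) hp (by linarith) hb
  have := ss_rpow (p := p) hp
  unfold F1
  have e : ss p + b - b = ss p := by ring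
  rw [e]
  linarith

lemma F1_diag_gt (hp1 : 1 < p) {b : ℝ} (hb : 0 < b) (hbs : b ≤ ss p) : 1 < F1 p b b := by
  have hs : (0:ℝ) < ss p := ss_pos
  have h := midpoint_strict_conv (t := ss p) (b := b) hp1 (by linarith) hb
  have := ss_rpow (p := p) hp1.le
  unfold F1
  have e : ss p + b - b = ss p := by ring
  rw [e]
  linarith

-- the implicit function gg
open Classical in
noncomputable def gg (p b : ℝ) : ℝ :=
  if h : ∃ a, a ∈ Icc 0 b ∧ F1 p a b = 1 then h.choose else 0

lemma gg_spec (hp1 : 1 < p) {b : ℝ} (hb : b ∈ Icc 0 (ss p)) :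
    gg p b ∈ Icc 0 b ∧ F1 p (gg p b) b = 1 := by
  have hex : ∃ a, a ∈ Icc 0 b ∧ F1 p a b = 1 := by
    have hc : ContinuousOn (fun a => F1 p a b) (Icc 0 b) := (F1_cont_a (by linarith) b).continuousOn
    have h1 : (1:ℝ) ∈ Icc (F1 p 0 b) (F1 p b b) :=
      ⟨F1_zero_le hp1.le hb.1 hb.2, F1_diag_ge hp1.le hb.1 hb.2⟩
    obtain ⟨a, ha, hfa⟩ := intermediate_value_Icc hb.1 hc h1
    exact ⟨a, ha, hfa⟩
  rw [gg]
  rw [dif_pos hex]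
  exact hex.choose_spec

lemma gg_eq (hp1 : 1 < p) {a b : ℝ} (hb : b ∈ Icc 0 (ss p)) (ha : 0 ≤ a)
    (hroot : F1 p a b = 1) : a = gg p b := by
  obtain ⟨⟨hg0, _⟩, hgr⟩ := gg_spec hp1 hb
  rcases lt_trichotomy a (gg p b) with h | h | h
  · have := F1_strict_mono_a (by linarith : (0:ℝ) < p) hb.2 ha h
    rw [hroot, hgr] at this; exact absurd this (lt_irrefl 1)
  · exact h
  · have := F1_strict_mono_a (by linarith : (0:ℝ) < p) hb.2 hg0 h
    rw [hroot, hgr] at this; exact absurd this (lt_irrefl 1)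

lemma gg_zero (hp1 : 1 < p) : gg p 0 = 0 := by
  have h := (gg_spec hp1 (b := 0) ⟨le_refl 0, ss_pos.le⟩).1
  exact le_antisymm h.2 h.1

lemma gg_pos (hp1 : 1 < p) {b : ℝ} (hb0 : 0 < b) (hbs : b ≤ ss p) : 0 < gg p b := by
  obtain ⟨⟨hg0, hgb⟩, hgr⟩ := gg_spec hp1 ⟨hb0.le, hbs⟩
  rcases eq_or_lt_of_le hg0 with h | h
  · exfalso; rw [← h] at hgr
    exact absurd hgr (F1_zero_lt hp1 hb0 hbs).ne
  · exact h

lemma gg_lt (hp1 : 1 < p) {b : ℝ} (hb0 : 0 < b) (hbs : b ≤ ss p) : gg p b < b := by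
  obtain ⟨⟨hg0, hgb⟩, hgr⟩ := gg_spec hp1 ⟨hb0.le, hbs⟩
  rcases eq_or_lt_of_le hgb with h | h
  · exfalso; rw [h] at hgr
    exact absurd hgr (F1_diag_gt hp1 hb0 hbs).ne'
  · exact h

lemma gg_strict_mono (hp1 : 1 < p) {b1 b2 : ℝ} (hb1 : b1 ∈ Icc 0 (ss p))
    (hb2 : b2 ∈ Icc 0 (ss p)) (h : b1 < b2) : gg p b1 < gg p b2 := by
  obtain ⟨⟨hg10, hg1b⟩, hg1r⟩ := gg_spec hp1 hb1
  obtain ⟨⟨hg20, hg2b⟩, hg2r⟩ := gg_spec hp1 hb2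
  have hlt : F1 p (gg p b1) b2 < 1 := by
    rw [← hg1r]
    exact F1_strict_anti_b (by linarith) hg10 h hb2.2
  by_contra hcon
  push_neg at hcon
  have := F1_mono_a (by linarith : (0:ℝ) < p) hb2.2 hg20 hcon
  rw [hg2r] at this
  linarith


lemma gg_continuousOn (hp1 : 1 < p) : ContinuousOn (gg p) (Icc 0 (ss p)) := by
  intro b0 hb0
  have hp0 : (0:ℝ) < p := by linarith
  obtain ⟨⟨ha0, hab0⟩, hr0⟩ := gg_spec hp1 hb0
  show Tendsto (gg p) (𝓝[Icc 0 (ss p)] b0) (𝓝 (gg p b0))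
  rw [tendsto_order]
  constructor
  · intro c hc
    by_cases hc0 : 0 ≤ c
    · have h1 : F1 p c b0 < 1 := by
        rw [← hr0]; exact F1_strict_mono_a hp0 hb0.2 hc0 hc
      have hU : ∀ᶠ b in 𝓝 b0, F1 p c b < 1 :=
        ((F1_cont_b hp0 c).continuousAt).eventually_lt continuousAt_const h1
      filter_upwards [hU.filter_mono nhdsWithin_le_nhds, eventually_mem_nhdsWithin]
        with b hb hbI
      by_contra hcon
      push_neg at hcon
      have := F1_mono_a hp0 hbI.2 (gg_spec hp1 hbI).1.1 hcon
      rw [(gg_spec hp1 hbI).2] at this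
      linarith
    · push_neg at hc0
      filter_upwards [eventually_mem_nhdsWithin] with b hbI
      exact lt_of_lt_of_le hc0 (gg_spec hp1 hbI).1.1
  · intro c hc
    have h1 : 1 < F1 p c b0 := by
      rw [← hr0]; exact F1_strict_mono_a hp0 hb0.2 ha0 hc
    have hU : ∀ᶠ b in 𝓝 b0, 1 < F1 p c b :=
      continuousAt_const.eventually_lt ((F1_cont_b hp0 c).continuousAt) h1
    filter_upwards [hU.filter_mono nhdsWithin_le_nhds, eventually_mem_nhdsWithin]
      with b hb hbI
    by_contra hcon
    push_neg at hcon
    have := F1_mono_a hp0 hbI.2 (ha0.trans hc.le) hcon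
    rw [(gg_spec hp1 hbI).2] at this
    linarith

noncomputable def phi (p b : ℝ) : ℝ := F2 p (gg p b) b

lemma phi_contOn (hp1 : 1 < p) : ContinuousOn (phi p) (Icc 0 (ss p)) := by
  have hp0 : (0:ℝ) < p := by linarith
  have hg := gg_continuousOn hp1
  unfold phi F2
  have h1 : ContinuousOn (fun b => gg p b ^ p) (Icc 0 (ss p)) :=
    hg.rpow_const (fun x _ => Or.inr hp0.le)
  have h2 : ContinuousOn (fun b : ℝ => b ^ p) (Icc 0 (ss p)) :=
    (continuous_id.rpow_const (fun x => Or.inr hp0.le)).continuousOn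
  have h3 : ContinuousOn (fun b => (2 * ss p + gg p b - b) ^ p) (Icc 0 (ss p)) :=
    ((continuousOn_const.add hg).sub continuousOn_id).rpow_const (fun x _ => Or.inr hp0.le)
  exact (h1.add h2).add h3

lemma phi_zero (hp1 : 1 < p) : phi p 0 = (2 * ss p) ^ p := by
  have hp0 : (0:ℝ) < p := by linarith
  rw [phi, gg_zero hp1, F2]
  rw [Real.zero_rpow hp0.ne']
  norm_num

lemma two_rpow_158 : (2:ℝ) ^ (1.58:ℝ) < 3 := by
  have h50 : ((2:ℝ) ^ (1.58:ℝ)) ^ (50:ℕ) = 2 ^ (79:ℕ) := by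
    rw [← Real.rpow_natCast ((2:ℝ) ^ (1.58:ℝ)) 50, ← Real.rpow_mul (by norm_num)]
    rw [show (1.58 * ((50:ℕ):ℝ)) = ((79:ℕ):ℝ) by norm_num, Real.rpow_natCast]
  have key : ((2:ℝ) ^ (1.58:ℝ)) ^ (50:ℕ) < 3 ^ (50:ℕ) := by rw [h50]; norm_num
  exact lt_of_pow_lt_pow_left₀ 50 (by norm_num) key

lemma phi_zero_lt (hp1 : 1 < p) (hp2 : p ≤ 1.58) : phi p 0 < 1 := by
  rw [phi_zero hp1]
  have e : (2 * ss p) ^ p = 2 ^ p * ss p ^ p := Real.mul_rpow (by norm_num) ss_pos.le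
  rw [e, ss_rpow hp1.le]
  have h1 : (2:ℝ) ^ p ≤ 2 ^ (1.58:ℝ) :=
    Real.rpow_le_rpow_of_exponent_le one_le_two hp2
  have h2 := two_rpow_158
  linarith

lemma phi_s (hp1 : 1 < p) : phi p (ss p) = 1 + 1/3 := by
  have hp0 : (0:ℝ) < p := by linarith
  have hs : (0:ℝ) < ss p := ss_pos
  obtain ⟨⟨hg0, hgb⟩, hgr⟩ := gg_spec hp1 (b := ss p) ⟨hs.le, le_refl _⟩
  rw [F1] at hgr
  rw [show ss p + gg p (ss p) - ss p = gg p (ss p) by ring] at hgr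
  rw [show ss p - ss p = (0:ℝ) by ring, Real.zero_rpow hp0.ne'] at hgr
  rw [phi, F2]
  rw [show 2 * ss p + gg p (ss p) - ss p = ss p + gg p (ss p) by ring]
  rw [ss_rpow hp1.le]
  rw [show ss p + gg p (ss p) = gg p (ss p) + ss p by ring] at hgr ⊢
  linarith

-- the core Jacobian inequality
lemma core_ineq {q σ a b : ℝ} (hq0 : 0 < q) (hq1 : q < 1) (ha : 0 < a) (hb : 0 < b)
    (hbs : b < σ) :
    ((2*σ + a - b) ^ q - b ^ q) * ((σ + a - b) ^ q + (σ + a) ^ q)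
      < (a ^ q + (2*σ + a - b) ^ q) * ((σ + a - b) ^ q + (σ - b) ^ q) := by
  have hσ : 0 < σ := hb.trans hbs
  have hC : 0 < 2*σ + a - b := by linarith
  have hD : 0 < σ + a - b := by linarith
  have hE : 0 < σ - b := by linarith
  have hG : 0 < σ + a := by linarith
  have hCq : 0 < (2*σ + a - b) ^ q := Real.rpow_pos_of_pos hC q
  have hDq : 0 < (σ + a - b) ^ q := Real.rpow_pos_of_pos hD q
  have f1 : (σ + a) ^ q ≤ (σ - b) ^ q + (a + b) ^ q := by
    have h := rpow_subadd hE.le (by positivity : (0:ℝ) ≤ a + b) hq0 hq1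
    rw [show σ - b + (a + b) = σ + a by ring] at h
    exact h
  have f2 : ((2*σ + a - b) * (a + b)) ^ q ≤ ((a+b)*σ) ^ q + ((a+b)*(σ+a-b)) ^ q := by
    have h := rpow_subadd (by positivity : (0:ℝ) ≤ (a+b)*σ)
      (by positivity : (0:ℝ) ≤ (a+b)*(σ+a-b)) hq0 hq1
    rw [show (a+b)*σ + (a+b)*(σ+a-b) = (2*σ + a - b) * (a + b) by ring] at h
    exact h
  have f3 : ((a+b)*σ) ^ q ≤ (a*(σ-b)) ^ q + (b*(σ+a)) ^ q := by
    have h := rpow_subadd (by positivity : (0:ℝ) ≤ a*(σ-b))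
      (by positivity : (0:ℝ) ≤ b*(σ+a)) hq0 hq1
    rw [show a*(σ-b) + b*(σ+a) = (a+b)*σ by ring] at h
    exact h
  have f4 : (a*(σ-b)) ^ q = a ^ q * (σ-b) ^ q := Real.mul_rpow ha.le hE.le
  have f5 : (b*(σ+a)) ^ q = b ^ q * (σ+a) ^ q := Real.mul_rpow hb.le hG.le
  have f6 : ((a+b)*(σ+a-b)) ^ q = (a+b) ^ q * (σ+a-b) ^ q :=
    Real.mul_rpow (by positivity) hD.le
  have f7 : (2*σ+a-b) ^ q * (a+b) ^ q = ((2*σ+a-b)*(a+b)) ^ q :=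
    (Real.mul_rpow hC.le (by positivity)).symm
  have f8 : (a+b) ^ q < a ^ q + b ^ q := rpow_subadd_strict ha hb hq0 hq1
  have key : (2*σ+a-b) ^ q * (σ+a) ^ q
      < (2*σ+a-b) ^ q * (σ-b) ^ q + a ^ q * (σ-b) ^ q + b ^ q * (σ+a) ^ q
        + (a ^ q + b ^ q) * (σ+a-b) ^ q := by
    have s1 : (2*σ+a-b) ^ q * (σ+a) ^ q
        ≤ (2*σ+a-b) ^ q * (σ-b) ^ q + (2*σ+a-b) ^ q * (a+b) ^ q := by
      nlinarith [mul_le_mul_of_nonneg_left f1 hCq.le]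
    have s2 : (2*σ+a-b) ^ q * (a+b) ^ q
        ≤ (a ^ q * (σ-b) ^ q + b ^ q * (σ+a) ^ q) + (a+b) ^ q * (σ+a-b) ^ q := by
      rw [f7]
      calc ((2*σ+a-b)*(a+b)) ^ q ≤ ((a+b)*σ) ^ q + ((a+b)*(σ+a-b)) ^ q := f2
        _ ≤ (a*(σ-b)) ^ q + (b*(σ+a)) ^ q + ((a+b)*(σ+a-b)) ^ q := by linarith [f3]
        _ = (a ^ q * (σ-b) ^ q + b ^ q * (σ+a) ^ q) + (a+b) ^ q * (σ+a-b) ^ q := by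
            rw [f4, f5, f6]
    have s3 : (a+b) ^ q * (σ+a-b) ^ q < (a ^ q + b ^ q) * (σ+a-b) ^ q :=
      mul_lt_mul_of_pos_right f8 hDq
    linarith
  nlinarith [key]


-- 1D derivatives of slices of F1
lemma hasDerivAt_F1_a (hp1 : 1 < p) (b c : ℝ) :
    HasDerivAt (fun a => F1 p a b)
      (p * ((ss p + c - b) ^ (p-1) + (ss p + c) ^ (p-1))) c := by
  have h1 : HasDerivAt (fun a : ℝ => ss p + a - b) 1 c := by
    simpa using ((hasDerivAt_id c).const_add (ss p)).sub_const b
  have h1' := h1.rpow_const (p := p) (Or.inr hp1.le)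
  have h3 : HasDerivAt (fun a : ℝ => ss p + a) 1 c := by
    simpa using (hasDerivAt_id c).const_add (ss p)
  have h3' := h3.rpow_const (p := p) (Or.inr hp1.le)
  have h2' : HasDerivAt (fun _ : ℝ => (ss p - b) ^ p) 0 c := hasDerivAt_const _ _
  have := (h1'.add h2').add h3'
  refine this.congr_deriv ?_
  ring

lemma hasDerivAt_F1_b (hp1 : 1 < p) (a0 b0 : ℝ) :
    HasDerivAt (fun b => F1 p a0 b)
      (-(p * ((ss p + a0 - b0) ^ (p-1) + (ss p - b0) ^ (p-1)))) b0 := by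
  have h1 : HasDerivAt (fun b : ℝ => ss p + a0 - b) (-1) b0 := by
    simpa using (hasDerivAt_id b0).const_sub (ss p + a0)
  have h1' := h1.rpow_const (p := p) (Or.inr hp1.le)
  have h2 : HasDerivAt (fun b : ℝ => ss p - b) (-1) b0 := by
    simpa using (hasDerivAt_id b0).const_sub (ss p)
  have h2' := h2.rpow_const (p := p) (Or.inr hp1.le)
  have h3' : HasDerivAt (fun _ : ℝ => (ss p + a0) ^ p) 0 b0 := hasDerivAt_const _ _
  have := (h1'.add h2').add h3'
  refine this.congr_deriv ?_
  ring

-- mean value extraction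
open Classical in
noncomputable def Xi (p b0 b : ℝ) : ℝ :=
  if h : ∃ c, ((gg p b0) ⊓ (gg p b) < c ∧ c < (gg p b0) ⊔ (gg p b)) ∧
      p * ((ss p + c - b) ^ (p-1) + (ss p + c) ^ (p-1))
        = (1 - F1 p (gg p b0) b) / (gg p b - gg p b0)
  then h.choose else gg p b0

lemma Xi_spec (hp1 : 1 < p) {b0 b : ℝ} (hb0 : b0 ∈ Icc 0 (ss p)) (hb : b ∈ Icc 0 (ss p))
    (hne : b ≠ b0) :
    ((gg p b0) ⊓ (gg p b) < Xi p b0 b ∧ Xi p b0 b < (gg p b0) ⊔ (gg p b)) ∧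
      p * ((ss p + Xi p b0 b - b) ^ (p-1) + (ss p + Xi p b0 b) ^ (p-1))
        = (1 - F1 p (gg p b0) b) / (gg p b - gg p b0) := by
  have hex : ∃ c, ((gg p b0) ⊓ (gg p b) < c ∧ c < (gg p b0) ⊔ (gg p b)) ∧
      p * ((ss p + c - b) ^ (p-1) + (ss p + c) ^ (p-1))
        = (1 - F1 p (gg p b0) b) / (gg p b - gg p b0) := by
    have hroot := (gg_spec hp1 hb).2
    rcases lt_or_gt_of_ne hne with hlt | hgt
    · have hg : gg p b < gg p b0 := gg_strict_mono hp1 hb hb0 hlt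
      obtain ⟨c, hc, hceq⟩ := exists_hasDerivAt_eq_slope (fun a => F1 p a b)
        (fun c => p * ((ss p + c - b) ^ (p-1) + (ss p + c) ^ (p-1))) hg
        ((F1_cont_a (by linarith) b).continuousOn)
        (fun x _ => hasDerivAt_F1_a hp1 b x)
      try dsimp only at hceq
      rw [hroot] at hceq
      refine ⟨c, ⟨?_, ?_⟩, ?_⟩
      · rw [min_comm, min_eq_left hg.le]; exact hc.1
      · rw [max_comm, max_eq_right hg.le]; exact hc.2
      · rw [hceq]
        rw [show (1 - F1 p (gg p b0) b) = -(F1 p (gg p b0) b - 1) by ring,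
          show (gg p b - gg p b0) = -(gg p b0 - gg p b) by ring, neg_div_neg_eq]
    · have hg : gg p b0 < gg p b := gg_strict_mono hp1 hb0 hb hgt
      obtain ⟨c, hc, hceq⟩ := exists_hasDerivAt_eq_slope (fun a => F1 p a b)
        (fun c => p * ((ss p + c - b) ^ (p-1) + (ss p + c) ^ (p-1))) hg
        ((F1_cont_a (by linarith) b).continuousOn)
        (fun x _ => hasDerivAt_F1_a hp1 b x)
      try dsimp only at hceq
      rw [hroot] at hceq
      exact ⟨c, ⟨by rw [min_eq_left hg.le]; exact hc.1,
        by rw [max_eq_right hg.le]; exact hc.2⟩, hceq⟩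
  rw [Xi, dif_pos hex]
  exact hex.choose_spec

lemma hasDerivAt_gg (hp1 : 1 < p) {b0 : ℝ} (hb0 : b0 ∈ Ioo 0 (ss p)) :
    HasDerivAt (gg p)
      (((ss p + gg p b0 - b0) ^ (p-1) + (ss p - b0) ^ (p-1)) /
        ((ss p + gg p b0 - b0) ^ (p-1) + (ss p + gg p b0) ^ (p-1))) b0 := by
  have hp0 : (0:ℝ) < p := by linarith
  have hs : (0:ℝ) < ss p := ss_pos
  have hb0I : b0 ∈ Icc 0 (ss p) := ⟨hb0.1.le, hb0.2.le⟩
  obtain ⟨⟨ha00, hab0⟩, hr0⟩ := gg_spec hp1 hb0I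
  have hb01 : 0 < b0 := hb0.1
  have hb02 : b0 < ss p := hb0.2
  set a0 := gg p b0 with ha0def
  set D := (ss p + a0 - b0) ^ (p-1) with hD
  set E := (ss p - b0) ^ (p-1) with hE
  set G := (ss p + a0) ^ (p-1) with hG
  have hDpos : 0 < D := Real.rpow_pos_of_pos (by linarith) _
  have hGpos : 0 < G := Real.rpow_pos_of_pos (by linarith) _
  have hDG : 0 < D + G := by linarith
  rw [hasDerivAt_iff_tendsto_slope]
  set l := 𝓝[≠] b0 with hl
  have hmem : Ioo (0:ℝ) (ss p) ∈ 𝓝 b0 := isOpen_Ioo.mem_nhds hb0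
  have hev : ∀ᶠ b in l, b ∈ Ioo (0:ℝ) (ss p) ∧ b ≠ b0 := by
    have h1 : ∀ᶠ b in l, b ∈ Ioo (0:ℝ) (ss p) :=
      eventually_nhdsWithin_of_eventually_nhds (eventually_of_mem hmem fun _ h => h)
    exact h1.and eventually_mem_nhdsWithin
  have hgg_t : Tendsto (gg p) l (𝓝 a0) := by
    have h1 : ContinuousWithinAt (gg p) (Icc 0 (ss p)) b0 := gg_continuousOn hp1 b0 hb0I
    have h2 : 𝓝[Icc 0 (ss p)] b0 = 𝓝 b0 :=
      nhdsWithin_eq_nhds.2 (Icc_mem_nhds hb0.1 hb0.2)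
    have h3 : Tendsto (gg p) (𝓝 b0) (𝓝 a0) := by
      rw [← h2]; exact h1
    exact h3.mono_left nhdsWithin_le_nhds
  have hXi_t : Tendsto (Xi p b0) l (𝓝 a0) := by
    have hlow : Tendsto (fun b => a0 ⊓ gg p b) l (𝓝 a0) := by
      have h := (tendsto_const_nhds (x := a0) (f := l)).min hgg_t
      simpa using h
    have hhigh : Tendsto (fun b => a0 ⊔ gg p b) l (𝓝 a0) := by
      have h := (tendsto_const_nhds (x := a0) (f := l)).max hgg_t
      simpa using h
    apply tendsto_of_tendsto_of_tendsto_of_le_of_le' hlow hhigh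
    · filter_upwards [hev] with b hb
      exact ((Xi_spec hp1 hb0I ⟨hb.1.1.le, hb.1.2.le⟩ hb.2).1.1).le
    · filter_upwards [hev] with b hb
      exact ((Xi_spec hp1 hb0I ⟨hb.1.1.le, hb.1.2.le⟩ hb.2).1.2).le
  have hnum : Tendsto (fun b => (1 - F1 p a0 b) / (b - b0)) l (𝓝 (p * (D + E))) := by
    have hd : HasDerivAt (fun b => 1 - F1 p a0 b) (p * (D + E)) b0 := by
      have h := (hasDerivAt_const b0 (1:ℝ)).sub (hasDerivAt_F1_b hp1 a0 b0)
      refine h.congr_deriv ?_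
      rw [hD, hE]; ring
    rw [hasDerivAt_iff_tendsto_slope] at hd
    apply hd.congr'
    filter_upwards [eventually_mem_nhdsWithin] with b hb
    rw [slope_def_field]
    try dsimp only
    rw [hr0]
    norm_num
  have hXb : Tendsto (fun b => ss p + Xi p b0 b - b) l (𝓝 (ss p + a0 - b0)) := by
    have hid : Tendsto (fun b : ℝ => b) l (𝓝 b0) := tendsto_id.mono_right nhdsWithin_le_nhds
    exact (tendsto_const_nhds.add hXi_t).sub hid
  have hXb2 : Tendsto (fun b => ss p + Xi p b0 b) l (𝓝 (ss p + a0)) :=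
    tendsto_const_nhds.add hXi_t
  have hden : Tendsto
      (fun b => p * ((ss p + Xi p b0 b - b) ^ (p-1) + (ss p + Xi p b0 b) ^ (p-1)))
      l (𝓝 (p * (D + G))) := by
    have h1 := hXb.rpow_const (p := p - 1) (Or.inl (by linarith : ss p + a0 - b0 ≠ 0))
    have h2 := hXb2.rpow_const (p := p - 1) (Or.inl (by linarith : ss p + a0 ≠ 0))
    rw [hD, hG]
    exact tendsto_const_nhds.mul (h1.add h2)
  have heq : ∀ᶠ b in l, (fun b => ((1 - F1 p a0 b) / (b - b0)) /
      (p * ((ss p + Xi p b0 b - b) ^ (p-1) + (ss p + Xi p b0 b) ^ (p-1)))) b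
        = slope (gg p) b0 b := by
    filter_upwards [hev] with b hb
    obtain ⟨⟨hXlo, hXhi⟩, hXeq⟩ := Xi_spec hp1 hb0I ⟨hb.1.1.le, hb.1.2.le⟩ hb.2
    have hggb := (gg_spec hp1 ⟨hb.1.1.le, hb.1.2.le⟩).1
    have hXnn : 0 ≤ Xi p b0 b := le_trans (le_min ha00 hggb.1) hXlo.le
    have hdpos : 0 < p * ((ss p + Xi p b0 b - b) ^ (p-1) + (ss p + Xi p b0 b) ^ (p-1)) := by
      have c1 : (0:ℝ) ≤ (ss p + Xi p b0 b - b) ^ (p-1) :=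
        Real.rpow_nonneg (by linarith [hb.1.2] : (0:ℝ) ≤ ss p + Xi p b0 b - b) _
      have c2 : (0:ℝ) < (ss p + Xi p b0 b) ^ (p-1) :=
        Real.rpow_pos_of_pos (by linarith) _
      nlinarith
    have hne2 : gg p b - a0 ≠ 0 := by
      rcases lt_or_gt_of_ne hb.2 with h | h
      · exact sub_ne_zero.mpr (gg_strict_mono hp1 ⟨hb.1.1.le, hb.1.2.le⟩ hb0I h).ne
      · exact sub_ne_zero.mpr (gg_strict_mono hp1 hb0I ⟨hb.1.1.le, hb.1.2.le⟩ h).ne'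
    have hbne : b - b0 ≠ 0 := sub_ne_zero.mpr hb.2
    have hNne : 1 - F1 p a0 b ≠ 0 := by
      intro h0
      rw [hXeq, h0, zero_div] at hdpos
      exact lt_irrefl 0 hdpos
    rw [slope_def_field]
    try dsimp only
    rw [hXeq, ← ha0def]
    field_simp
  have hfinal : Tendsto (slope (gg p) b0) l (𝓝 ((p * (D + E)) / (p * (D + G)))) := by
    have h := hnum.div hden (by positivity : (p * (D + G)) ≠ 0)
    exact Filter.Tendsto.congr' heq h
  have hcancel : (p * (D + E)) / (p * (D + G)) = (D + E) / (D + G) :=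
    mul_div_mul_left _ _ (by linarith : p ≠ 0)
  rw [← hcancel]
  exact hfinal

lemma phi_deriv_pos (hp1 : 1 < p) (hp2 : p ≤ 1.58) {b0 : ℝ} (hb0 : b0 ∈ Ioo 0 (ss p)) :
    0 < deriv (phi p) b0 := by
  have hp0 : (0:ℝ) < p := by linarith
  have hs : (0:ℝ) < ss p := ss_pos
  have hb01 : 0 < b0 := hb0.1
  have hb02 : b0 < ss p := hb0.2
  have ha0pos : 0 < gg p b0 := gg_pos hp1 hb01 hb02.le
  have ha0lt : gg p b0 < b0 := gg_lt hp1 hb01 hb02.le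
  have hg : HasDerivAt (gg p)
      (((ss p + gg p b0 - b0) ^ (p-1) + (ss p - b0) ^ (p-1)) /
        ((ss p + gg p b0 - b0) ^ (p-1) + (ss p + gg p b0) ^ (p-1))) b0 :=
    hasDerivAt_gg hp1 hb0
  have h1 : HasDerivAt (fun b => gg p b ^ p)
      ((((ss p + gg p b0 - b0) ^ (p-1) + (ss p - b0) ^ (p-1)) /
        ((ss p + gg p b0 - b0) ^ (p-1) + (ss p + gg p b0) ^ (p-1))) * p * gg p b0 ^ (p-1)) b0 :=
    hg.rpow_const (Or.inr hp1.le)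
  have h2 : HasDerivAt (fun b : ℝ => b ^ p) (p * b0 ^ (p-1)) b0 :=
    Real.hasDerivAt_rpow_const (Or.inr hp1.le)
  have h3 : HasDerivAt (fun b : ℝ => 2 * ss p + gg p b - b)
      ((((ss p + gg p b0 - b0) ^ (p-1) + (ss p - b0) ^ (p-1)) /
        ((ss p + gg p b0 - b0) ^ (p-1) + (ss p + gg p b0) ^ (p-1))) - 1) b0 := by
    have h := ((hasDerivAt_const b0 (2 * ss p)).add hg).sub (hasDerivAt_id b0)
    refine h.congr_deriv ?_
    ring
  have h3' : HasDerivAt (fun b : ℝ => (2 * ss p + gg p b - b) ^ p)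
      (((((ss p + gg p b0 - b0) ^ (p-1) + (ss p - b0) ^ (p-1)) /
        ((ss p + gg p b0 - b0) ^ (p-1) + (ss p + gg p b0) ^ (p-1))) - 1) * p *
          (2 * ss p + gg p b0 - b0) ^ (p-1)) b0 :=
    h3.rpow_const (Or.inr hp1.le)
  have total : HasDerivAt (phi p)
      (((((ss p + gg p b0 - b0) ^ (p-1) + (ss p - b0) ^ (p-1)) /
        ((ss p + gg p b0 - b0) ^ (p-1) + (ss p + gg p b0) ^ (p-1))) * p * gg p b0 ^ (p-1)
        + p * b0 ^ (p-1))
        + ((((ss p + gg p b0 - b0) ^ (p-1) + (ss p - b0) ^ (p-1)) /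
        ((ss p + gg p b0 - b0) ^ (p-1) + (ss p + gg p b0) ^ (p-1))) - 1) * p *
          (2 * ss p + gg p b0 - b0) ^ (p-1)) b0 := by
    exact (h1.add h2).add h3'
  have hDpos : 0 < (ss p + gg p b0 - b0) ^ (p-1) := Real.rpow_pos_of_pos (by linarith) _
  have hEpos : 0 < (ss p - b0) ^ (p-1) := Real.rpow_pos_of_pos (by linarith) _
  have hGpos : 0 < (ss p + gg p b0) ^ (p-1) := Real.rpow_pos_of_pos (by linarith) _
  have hApos : 0 < gg p b0 ^ (p-1) := Real.rpow_pos_of_pos ha0pos _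
  have hBpos : 0 < b0 ^ (p-1) := Real.rpow_pos_of_pos hb01 _
  have hCpos : 0 < (2 * ss p + gg p b0 - b0) ^ (p-1) := Real.rpow_pos_of_pos (by linarith) _
  have hDG : 0 < (ss p + gg p b0 - b0) ^ (p-1) + (ss p + gg p b0) ^ (p-1) := by linarith
  have core := core_ineq (q := p - 1) (σ := ss p) (a := gg p b0) (b := b0)
    (by linarith) (by linarith) ha0pos hb01 hb02
  have key : 0 < (gg p b0 ^ (p-1) + (2 * ss p + gg p b0 - b0) ^ (p-1)) *
      (((ss p + gg p b0 - b0) ^ (p-1) + (ss p - b0) ^ (p-1)) /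
        ((ss p + gg p b0 - b0) ^ (p-1) + (ss p + gg p b0) ^ (p-1)))
      + (b0 ^ (p-1) - (2 * ss p + gg p b0 - b0) ^ (p-1)) := by
    have e : (gg p b0 ^ (p-1) + (2 * ss p + gg p b0 - b0) ^ (p-1)) *
        (((ss p + gg p b0 - b0) ^ (p-1) + (ss p - b0) ^ (p-1)) /
          ((ss p + gg p b0 - b0) ^ (p-1) + (ss p + gg p b0) ^ (p-1)))
        + (b0 ^ (p-1) - (2 * ss p + gg p b0 - b0) ^ (p-1))
        = ((gg p b0 ^ (p-1) + (2 * ss p + gg p b0 - b0) ^ (p-1)) *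
            ((ss p + gg p b0 - b0) ^ (p-1) + (ss p - b0) ^ (p-1))
          + (b0 ^ (p-1) - (2 * ss p + gg p b0 - b0) ^ (p-1)) *
            ((ss p + gg p b0 - b0) ^ (p-1) + (ss p + gg p b0) ^ (p-1))) /
          ((ss p + gg p b0 - b0) ^ (p-1) + (ss p + gg p b0) ^ (p-1)) := by
      field_simp
      try ring
    rw [e]
    apply div_pos _ hDG
    nlinarith [core]
  rw [total.deriv]
  have e2 : ((((ss p + gg p b0 - b0) ^ (p-1) + (ss p - b0) ^ (p-1)) /
        ((ss p + gg p b0 - b0) ^ (p-1) + (ss p + gg p b0) ^ (p-1))) * p * gg p b0 ^ (p-1)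
        + p * b0 ^ (p-1))
        + ((((ss p + gg p b0 - b0) ^ (p-1) + (ss p - b0) ^ (p-1)) /
        ((ss p + gg p b0 - b0) ^ (p-1) + (ss p + gg p b0) ^ (p-1))) - 1) * p *
          (2 * ss p + gg p b0 - b0) ^ (p-1)
      = p * ((gg p b0 ^ (p-1) + (2 * ss p + gg p b0 - b0) ^ (p-1)) *
      (((ss p + gg p b0 - b0) ^ (p-1) + (ss p - b0) ^ (p-1)) /
        ((ss p + gg p b0 - b0) ^ (p-1) + (ss p + gg p b0) ^ (p-1)))
      + (b0 ^ (p-1) - (2 * ss p + gg p b0 - b0) ^ (p-1))) := by ring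
  rw [e2]
  exact mul_pos hp0 key

lemma phi_strictMonoOn (hp1 : 1 < p) (hp2 : p ≤ 1.58) :
    StrictMonoOn (phi p) (Icc 0 (ss p)) := by
  apply strictMonoOn_of_deriv_pos (convex_Icc _ _) (phi_contOn hp1)
  intro x hx
  rw [interior_Icc] at hx
  exact phi_deriv_pos hp1 hp2 hx

lemma exists_bhat (hp1 : 1 < p) (hp2 : p ≤ 1.58) : ∃ b ∈ Icc 0 (ss p), phi p b = 1 := by
  have h1 := phi_zero_lt hp1 hp2
  have h2 : (1:ℝ) < phi p (ss p) := by rw [phi_s hp1]; norm_num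
  have h3 : (1:ℝ) ∈ Icc (phi p 0) (phi p (ss p)) := ⟨h1.le, h2.le⟩
  obtain ⟨b, hb, hphi⟩ := intermediate_value_Icc ss_pos.le (phi_contOn hp1) h3
  exact ⟨b, hb, hphi⟩

end USS

/-- For every `p ∈ [1, 1.58]` there is a unique triple `(x, y, z)` of real numbers with
`z ≥ x ≥ y ≥ 0`, `x^p + y^p + z^p = 1`, `(x−y)^p + (z−x)^p + (y+z)^p = 1`, and
`3(−x+y+z)^p = 1`. -/
theorem unique_solution_of_system :
    ∀ p ∈ Set.Icc (1 : ℝ) 1.58,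
      ∃! t : ℝ × ℝ × ℝ,
        t.2.2 ≥ t.1 ∧ t.1 ≥ t.2.1 ∧ t.2.1 ≥ 0 ∧
        t.1 ^ p + t.2.1 ^ p + t.2.2 ^ p = 1 ∧
        (t.1 - t.2.1) ^ p + (t.2.2 - t.1) ^ p + (t.2.1 + t.2.2) ^ p = 1 ∧
        3 * (-t.1 + t.2.1 + t.2.2) ^ p = 1 := by
  intro p hp
  obtain ⟨hp1, hp2⟩ := hp
  rcases eq_or_lt_of_le hp1 with heq | hp1'
  · -- p = 1 : linear system
    subst heq
    refine ⟨((1:ℝ)/3, (1:ℝ)/6, (1:ℝ)/2), ?_, ?_⟩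
    · refine ⟨?_, ?_, ?_, ?_, ?_, ?_⟩ <;> norm_num [Real.rpow_one]
    · rintro ⟨x, y, z⟩ ⟨h1, h2, h3, h4, h5, h6⟩
      simp only [Real.rpow_one] at h1 h2 h3 h4 h5 h6
      have hx : x = 1/3 := by linarith
      have hz : z = 1/2 := by linarith
      have hy : y = 1/6 := by linarith
      simp [Prod.ext_iff, hx, hy, hz]
  · -- 1 < p
    obtain ⟨bh, hbh, hphib⟩ := USS.exists_bhat hp1' hp2
    obtain ⟨⟨hah0, hahb⟩, hroot⟩ := USS.gg_spec hp1' hbh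
    have hs : (0:ℝ) < USS.ss p := USS.ss_pos
    have hbh0 : 0 ≤ bh := hbh.1
    have hbhs : bh ≤ USS.ss p := hbh.2
    refine ⟨(USS.ss p + USS.gg p bh - bh, USS.ss p - bh, USS.ss p + USS.gg p bh),
      ⟨?_, ?_, ?_, ?_, ?_, ?_⟩, ?_⟩
    · dsimp only; linarith
    · dsimp only; linarith
    · dsimp only; linarith
    · dsimp only
      exact hroot
    · dsimp only
      rw [show USS.ss p + USS.gg p bh - bh - (USS.ss p - bh) = USS.gg p bh from by ring,
        show USS.ss p + USS.gg p bh - (USS.ss p + USS.gg p bh - bh) = bh from by ring,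
        show USS.ss p - bh + (USS.ss p + USS.gg p bh) = 2 * USS.ss p + USS.gg p bh - bh
          from by ring]
      exact hphib
    · dsimp only
      rw [show -(USS.ss p + USS.gg p bh - bh) + (USS.ss p - bh) + (USS.ss p + USS.gg p bh)
          = USS.ss p from by ring]
      rw [USS.ss_rpow hp1'.le]
      norm_num
    · rintro ⟨x, y, z⟩ ⟨h1, h2, h3, h4, h5, h6⟩
      dsimp only at h1 h2 h3 h4 h5 h6 ⊢
      have hp0 : (0:ℝ) < p := by linarith
      -- recover s
      have hnn : (0:ℝ) ≤ -x + y + z := by linarith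
      have hval : (-x + y + z) ^ p = USS.ss p ^ p := by
        rw [USS.ss_rpow hp1'.le]; linarith
      have hseq : -x + y + z = USS.ss p := by
        rcases lt_trichotomy (-x + y + z) (USS.ss p) with h | h | h
        · have := Real.rpow_lt_rpow hnn h hp0
          rw [hval] at this; linarith
        · exact h
        · have := Real.rpow_lt_rpow hs.le h hp0
          rw [hval] at this; linarith
      have hb_mem : z - x ∈ Icc 0 (USS.ss p) := ⟨by linarith, by linarith⟩
      have hroot' : USS.F1 p (x - y) (z - x) = 1 := by
        show (USS.ss p + (x - y) - (z - x)) ^ p + (USS.ss p - (z - x)) ^ p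
          + (USS.ss p + (x - y)) ^ p = 1
        rw [show USS.ss p + (x - y) - (z - x) = x from by linarith,
          show USS.ss p - (z - x) = y from by linarith,
          show USS.ss p + (x - y) = z from by linarith]
        exact h4
      have ha : x - y = USS.gg p (z - x) :=
        USS.gg_eq hp1' hb_mem (by linarith) hroot'
      have hphi' : USS.phi p (z - x) = 1 := by
        show (USS.gg p (z - x)) ^ p + (z - x) ^ p
          + (2 * USS.ss p + USS.gg p (z - x) - (z - x)) ^ p = 1
        rw [← ha]
        rw [show 2 * USS.ss p + (x - y) - (z - x) = y + z from by linarith]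
        exact h5
      have hbb : z - x = bh :=
        (USS.phi_strictMonoOn hp1' hp2).injOn hb_mem hbh (by rw [hphi', hphib])
      have haa : x - y = USS.gg p bh := by rw [ha, hbb]
      simp only [Prod.mk.injEq]
      refine ⟨?_, ?_, ?_⟩
      · linarith
      · linarith
      · linarith
end

section
/- For every p ∈ [1.5849625, 1.5849625 + 10⁻¹⁰] there exists a triple (x, y, z) of real numbers with max(|x − 0.499999999842|, |y − 0.499999124646|, |z − 0.500000875038|) < 2·10⁻⁷ satisfying z ≥ x ≥ y ≥ 0, x^p + y^p + z^p = 1, (x−y)^p + (z−x)^p + (y+z)^p = 1, and 3(−x+y+z)^p = 1. -/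
open Real Finset Set

namespace AuxNearLog23

private lemma sum_range_14_eq (x : ℝ) :
    ∑ i ∈ Finset.range 14, x ^ i / (Nat.factorial i) =
      1 + x + x^2/2 + x^3/6 + x^4/24 + x^5/120 + x^6/720 + x^7/5040 + x^8/40320 +
      x^9/362880 + x^10/3628800 + x^11/39916800 + x^12/479001600 + x^13/6227020800 := by
  simp [Finset.sum_range_succ, Nat.factorial]

private lemma exp_upper {x : ℝ} (h0 : 0 ≤ x) (h1 : x ≤ 1) :
    Real.exp x ≤ 1 + x + x^2/2 + x^3/6 + x^4/24 + x^5/120 + x^6/720 + x^7/5040 + x^8/40320 +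
      x^9/362880 + x^10/3628800 + x^11/39916800 + x^12/479001600 + x^13/6227020800 +
      x^14 * 15 / 1220496076800 := by
  have h := Real.exp_bound' h0 h1 (n := 14) (by norm_num)
  rw [sum_range_14_eq] at h
  norm_num [Nat.factorial] at h
  linarith

private lemma exp_lower {x : ℝ} (h0 : 0 ≤ x) :
    1 + x + x^2/2 + x^3/6 + x^4/24 + x^5/120 + x^6/720 + x^7/5040 + x^8/40320 +
      x^9/362880 + x^10/3628800 + x^11/39916800 + x^12/479001600 + x^13/6227020800
      ≤ Real.exp x := by
  have h := Real.sum_le_exp_of_nonneg h0 14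
  rwa [sum_range_14_eq] at h

private lemma exp_le_two : Real.exp 0.693147180548 ≤ 2 := by
  have h2 : Real.exp 0.693147180548 = Real.exp 0.346573590274 * Real.exp 0.346573590274 := by
    rw [← Real.exp_add]; norm_num
  have hb : Real.exp 0.346573590274 ≤ 1.41421356237 := by
    refine (exp_upper (by norm_num) (by norm_num)).trans ?_
    norm_num
  have h0 : (0:ℝ) ≤ Real.exp 0.346573590274 := (Real.exp_pos _).le
  rw [h2]
  nlinarith [hb, h0]

private lemma two_le_exp : (2:ℝ) ≤ Real.exp 0.693147180562 := by
  have h2 : Real.exp 0.693147180562 = Real.exp 0.346573590281 * Real.exp 0.346573590281 := by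
    rw [← Real.exp_add]; norm_num
  have hb : (1.414213562374:ℝ) ≤ Real.exp 0.346573590281 := by
    refine le_trans ?_ (exp_lower (by norm_num))
    norm_num
  rw [h2]
  nlinarith [hb]

private lemma exp_b_ge : (3:ℝ) - 1.59e-9 ≤ Real.exp 1.09861228814930945 := by
  have h2 : Real.exp 1.09861228814930945
      = Real.exp 0.549306144074654725 * Real.exp 0.549306144074654725 := by
    rw [← Real.exp_add]; norm_num
  have hb : (1.732050807115:ℝ) ≤ Real.exp 0.549306144074654725 := by
    refine le_trans ?_ (exp_lower (by norm_num))
    norm_num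
  rw [h2]
  nlinarith [hb]

private lemma exp_a_le : Real.exp 1.0986122882408136430562 ≤ 3 - 1.2e-9 := by
  have h2 : Real.exp 1.0986122882408136430562
      = Real.exp 0.5493061441204068215281 * Real.exp 0.5493061441204068215281 := by
    rw [← Real.exp_add]; norm_num
  have hb : Real.exp 0.5493061441204068215281 ≤ 1.7320508072 := by
    refine (exp_upper (by norm_num) (by norm_num)).trans ?_
    norm_num
  have h0 : (0:ℝ) ≤ Real.exp 0.5493061441204068215281 := (Real.exp_pos _).le
  rw [h2]
  nlinarith [hb, h0]

private lemma log_two_gt : (0.693147180548:ℝ) ≤ Real.log 2 :=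
  (Real.le_log_iff_exp_le (by norm_num)).mpr exp_le_two

private lemma log_two_lt : Real.log 2 ≤ 0.693147180562 :=
  (Real.log_le_iff_le_exp (by norm_num)).mpr two_le_exp

private lemma two_rpow_lo {p : ℝ} (hp : 1.5849625 ≤ p) : (3:ℝ) - 1.59e-9 ≤ (2:ℝ) ^ p := by
  rw [Real.rpow_def_of_pos (by norm_num : (0:ℝ) < 2)]
  refine exp_b_ge.trans (Real.exp_le_exp.mpr ?_)
  have h := mul_le_mul hp log_two_gt (by norm_num) (by linarith : (0:ℝ) ≤ p)
  calc (1.09861228814930945:ℝ) = 1.5849625 * 0.693147180548 := by norm_num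
    _ ≤ p * Real.log 2 := h
    _ = Real.log 2 * p := mul_comm _ _

private lemma two_rpow_hi {p : ℝ} (hp0 : 0 ≤ p) (hp : p ≤ 1.5849625001) :
    (2:ℝ) ^ p ≤ 3 - 1.2e-9 := by
  rw [Real.rpow_def_of_pos (by norm_num : (0:ℝ) < 2)]
  refine le_trans (Real.exp_le_exp.mpr ?_) exp_a_le
  have h := mul_le_mul hp log_two_lt (Real.log_nonneg (by norm_num)) (by norm_num)
  calc Real.log 2 * p = p * Real.log 2 := mul_comm _ _
    _ ≤ 1.5849625001 * 0.693147180562 := h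
    _ = 1.0986122882408136430562 := by norm_num

private lemma rpow_div_le {x B : ℝ} (m n : ℕ) (hn : n ≠ 0) (hx : 0 < x) (hB : 0 < B)
    (h : x ^ m ≤ B ^ n) : x ^ ((m:ℝ)/(n:ℝ)) ≤ B := by
  have hnR : ((n:ℝ)) ≠ 0 := Nat.cast_ne_zero.mpr hn
  have key : (x ^ ((m:ℝ)/(n:ℝ))) ^ n = x ^ m := by
    rw [← Real.rpow_natCast (x ^ ((m:ℝ)/(n:ℝ))) n, ← Real.rpow_mul hx.le,
        div_mul_cancel₀ _ hnR, Real.rpow_natCast]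
  exact le_of_pow_le_pow_left₀ hn hB.le (by rw [key]; exact h)

private lemma le_rpow_div {x B : ℝ} (m n : ℕ) (hn : n ≠ 0) (hx : 0 < x) (hB : 0 ≤ B)
    (h : B ^ n ≤ x ^ m) : B ≤ x ^ ((m:ℝ)/(n:ℝ)) := by
  have hnR : ((n:ℝ)) ≠ 0 := Nat.cast_ne_zero.mpr hn
  have key : (x ^ ((m:ℝ)/(n:ℝ))) ^ n = x ^ m := by
    rw [← Real.rpow_natCast (x ^ ((m:ℝ)/(n:ℝ))) n, ← Real.rpow_mul hx.le,
        div_mul_cancel₀ _ hnR, Real.rpow_natCast]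
  exact le_of_pow_le_pow_left₀ hn (Real.rpow_pos_of_pos hx _).le (by rw [key]; exact h)

private lemma bern_lo {a w p : ℝ} (ha : 0 < a) (hw : -a ≤ w) (hp : 1 ≤ p) :
    a ^ p * (1 + p * (w / a)) ≤ (a + w) ^ p := by
  have hwa : (-1:ℝ) ≤ w / a := by
    rw [neg_le, ← neg_div]
    exact (div_le_one ha).mpr (by linarith)
  have h1 : 1 + p * (w/a) ≤ (1 + w/a) ^ p := one_add_mul_self_le_rpow_one_add hwa hp
  have h2 : (0:ℝ) ≤ a ^ p := (Real.rpow_pos_of_pos ha p).le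
  calc a^p * (1 + p*(w/a)) ≤ a^p * (1 + w/a)^p := mul_le_mul_of_nonneg_left h1 h2
    _ = (a*(1+w/a))^p := (Real.mul_rpow ha.le (by linarith)).symm
    _ = (a+w)^p := by rw [mul_add, mul_one, mul_div_cancel₀ _ ha.ne']

private lemma bern_hi {a w p : ℝ} (ha : 0 < a) (hw : -a < w) (hp1 : 1 ≤ p) (hp2 : p ≤ 2) :
    (a + w) ^ p ≤ a ^ p * ((1 + w / a) * (1 + (p - 1) * (w / a))) := by
  have hwa : (-1:ℝ) < w / a := by
    rw [neg_lt, ← neg_div]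
    exact (div_lt_one ha).mpr (by linarith)
  have h0 : (0:ℝ) < 1 + w / a := by linarith
  have h1 : (1 + w/a) ^ (p - 1) ≤ 1 + (p-1) * (w/a) :=
    rpow_one_add_le_one_add_mul_self hwa.le (by linarith) (by linarith)
  have key : (1 + w/a) ^ p = (1 + w/a) * (1 + w/a) ^ (p-1) := by
    conv_lhs => rw [show p = 1 + (p-1) by ring]
    rw [Real.rpow_add h0, Real.rpow_one]
  calc (a+w)^p = (a * (1 + w/a))^p := by rw [mul_add, mul_one, mul_div_cancel₀ _ ha.ne']
    _ = a^p * (1+w/a)^p := Real.mul_rpow ha.le h0.le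
    _ = a^p * ((1+w/a) * (1+w/a)^(p-1)) := by rw [key]
    _ ≤ a^p * ((1+w/a) * (1 + (p-1)*(w/a))) := by
        refine mul_le_mul_of_nonneg_left ?_ (Real.rpow_nonneg ha.le p)
        exact mul_le_mul_of_nonneg_left h1 h0.le

end AuxNearLog23

open AuxNearLog23

set_option maxHeartbeats 10000000

/-- For every `p ∈ [1.5849625, 1.5849625 + 10⁻¹⁰]` there is a triple `(x, y, z)` with
`max(|x − 0.499999999842|, |y − 0.499999124646|, |z − 0.500000875038|) < 2·10⁻⁷`
satisfying `z ≥ x ≥ y ≥ 0`, `x^p + y^p + z^p = 1`, `(x−y)^p + (z−x)^p + (y+z)^p = 1`, and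
`3(−x+y+z)^p = 1`. -/
theorem solution_near_log2_3 :
    ∀ p ∈ Set.Icc (1.5849625 : ℝ) (1.5849625 + 1e-10),
      ∃ x y z : ℝ,
        max |x - 0.499999999842| (max |y - 0.499999124646| |z - 0.500000875038|)
            < 2e-7 ∧
        z ≥ x ∧ x ≥ y ∧ y ≥ 0 ∧
        x ^ p + y ^ p + z ^ p = 1 ∧
        (x - y) ^ p + (z - x) ^ p + (y + z) ^ p = 1 ∧
        3 * (-x + y + z) ^ p = 1 := by
  intro p hp
  obtain ⟨hp1, hp2⟩ := hp
  have hp2' : p ≤ 1.5849625001 := le_trans hp2 (by norm_num)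
  have hp0 : (0:ℝ) < p := by norm_num at hp1 ⊢; linarith only [hp1]
  have hpge1 : (1:ℝ) ≤ p := by norm_num at hp1 ⊢; linarith only [hp1]
  have hple2 : p ≤ 2 := by norm_num at hp2' ⊢; linarith only [hp2']
  have hmono : ∀ a b : ℝ, 0 ≤ a → a ≤ b → a ^ p ≤ b ^ p :=
    fun a b ha h => Real.rpow_le_rpow ha h hp0.le
  have hsmono : ∀ a b : ℝ, 0 ≤ a → a < b → a ^ p < b ^ p :=
    fun a b ha h => Real.rpow_lt_rpow ha h hp0
  set t : ℝ := (3:ℝ) ^ (-p⁻¹) with htdef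
  have ht0 : 0 < t := Real.rpow_pos_of_pos (by norm_num) _
  have ht3 : t ^ p = 1/3 := by
    rw [htdef, ← Real.rpow_mul (by norm_num : (0:ℝ) ≤ 3),
        show -p⁻¹ * p = -1 by field_simp, Real.rpow_neg_one]
    norm_num
  have hDlo : (3:ℝ) - 1.59e-9 ≤ (2:ℝ) ^ p := two_rpow_lo hp1
  have hDhi : (2:ℝ) ^ p ≤ 3 - 1.2e-9 := two_rpow_hi hp0.le hp2'
  have hhalf : ((1:ℝ)/2) ^ p = 1 / 2 ^ p := by
    rw [Real.div_rpow (by norm_num) (by norm_num), Real.one_rpow]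
  have ht_ub : t ≤ 1/2 := by
    by_contra hcon
    push_neg at hcon
    have h1 : ((1:ℝ)/2) ^ p < t ^ p := hsmono _ _ (by norm_num) hcon
    rw [ht3, hhalf] at h1
    have h2p : (0:ℝ) < 2 ^ p := Real.rpow_pos_of_pos (by norm_num) _
    have h3 : (3:ℝ) < 2 ^ p := by
      rw [div_lt_div_iff₀ h2p (by norm_num)] at h1
      linarith only [h1]
    linarith only [h3, hDhi]
  have ht_lb : (0.4999999994:ℝ) ≤ t := by
    by_contra hcon
    push_neg at hcon
    have h1 : t ^ p < (0.4999999994:ℝ) ^ p := hsmono _ _ ht0.le hcon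
    have h2 : (0.4999999994:ℝ) ^ p = ((1:ℝ)/2) ^ p * (0.9999999988:ℝ) ^ p := by
      rw [← Real.mul_rpow (by norm_num) (by norm_num)]
      norm_num
    have h3 : (0.9999999988:ℝ) ^ p ≤ 0.9999999988 := by
      calc (0.9999999988:ℝ) ^ p ≤ (0.9999999988:ℝ) ^ (1:ℝ) :=
            Real.rpow_le_rpow_of_exponent_ge (by norm_num) (by norm_num) hpge1
        _ = 0.9999999988 := Real.rpow_one _
    have h4 : ((1:ℝ)/2) ^ p ≤ 1 / (3 - 1.59e-9) := by
      rw [hhalf]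
      exact one_div_le_one_div_of_le (by norm_num) hDlo
    have h5 : (0.4999999994:ℝ) ^ p ≤ 1 / (3 - 1.59e-9) * 0.9999999988 := by
      rw [h2]
      exact mul_le_mul h4 h3 (Real.rpow_nonneg (by norm_num) _) (by norm_num)
    rw [ht3] at h1
    norm_num at h5 h1
    linarith only [h5, h1]
  -- (2t)^p facts
  have h2t0 : (0:ℝ) < 2 * t := by linarith
  have h2tp : (2*t) ^ p = 2 ^ p * (1/3) := by
    rw [Real.mul_rpow (by norm_num) ht0.le, ht3]
  have h2tlo : 1 - 5.3e-10 ≤ (2*t) ^ p := by rw [h2tp]; linarith only [hDlo]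
  have h2thi : (2*t) ^ p ≤ 1 - 4e-10 := by rw [h2tp]; linarith only [hDhi]
  -- numeric rpow bounds
  have cast1912 : ((19:ℕ):ℝ)/((12:ℕ):ℝ) = (19:ℝ)/12 := by norm_num
  have cast2717 : ((27:ℕ):ℝ)/((17:ℕ):ℝ) = (27:ℝ)/17 := by norm_num
  have hP1 : ∀ w : ℝ, 0 ≤ w → w ≤ 7.001e-7 → w ^ p ≤ 1.9e-10 := by
    intro w h0 h1
    calc w ^ p ≤ (7.001e-7:ℝ) ^ p := hmono _ _ h0 h1
      _ ≤ (7.001e-7:ℝ) ^ ((19:ℝ)/12) :=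
          Real.rpow_le_rpow_of_exponent_ge (by norm_num) (by norm_num) (by norm_num at hp1 ⊢; linarith only [hp1])
      _ ≤ 1.9e-10 := by
          rw [← cast1912]
          exact rpow_div_le 19 12 (by norm_num) (by norm_num) (by norm_num) (by norm_num)
  have hP3 : ∀ w : ℝ, 0 ≤ w → w ≤ 1.05e-6 → w ^ p ≤ 3.5e-10 := by
    intro w h0 h1
    calc w ^ p ≤ (1.05e-6:ℝ) ^ p := hmono _ _ h0 h1
      _ ≤ (1.05e-6:ℝ) ^ ((19:ℝ)/12) :=
          Real.rpow_le_rpow_of_exponent_ge (by norm_num) (by norm_num) (by norm_num at hp1 ⊢; linarith only [hp1])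
      _ ≤ 3.5e-10 := by
          rw [← cast1912]
          exact rpow_div_le 19 12 (by norm_num) (by norm_num) (by norm_num) (by norm_num)
  have hP2 : ∀ w : ℝ, 1.0499e-6 ≤ w → w ≤ 1 → 2.8e-10 ≤ w ^ p := by
    intro w h0 h1
    calc (2.8e-10:ℝ) ≤ (1.0499e-6:ℝ) ^ ((27:ℝ)/17) := by
          rw [← cast2717]
          exact le_rpow_div 27 17 (by norm_num) (by norm_num) (by norm_num) (by norm_num)
      _ ≤ (1.0499e-6:ℝ) ^ p :=
          Real.rpow_le_rpow_of_exponent_ge (by norm_num) (by norm_num) (by norm_num at hp2' ⊢; linarith only [hp2'])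
      _ ≤ w ^ p := hmono _ _ (by norm_num) h0
  -- Bernoulli specializations at bases t and 2t
  set R : ℝ := t ^ p / t with hRdef
  set R2 : ℝ := t ^ p / t ^ 2 with hR2def
  set R' : ℝ := (2*t) ^ p / (2*t) with hR'def
  set R2' : ℝ := (2*t) ^ p / (2*t) ^ 2 with hR2'def
  have hRlo : (0.666:ℝ) ≤ R := by
    rw [hRdef, ht3, le_div_iff₀ ht0]
    linarith only [ht_ub]
  have hRhi : R ≤ 0.667 := by
    rw [hRdef, ht3, div_le_iff₀ ht0]
    linarith only [ht_lb]
  have hR2lo : (1.333:ℝ) ≤ R2 := by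
    rw [hR2def, ht3, le_div_iff₀ (by positivity : (0:ℝ) < t^2)]
    have hprod : (0:ℝ) ≤ (1/2 - t) * t := mul_nonneg (by linarith only [ht_ub]) ht0.le
    nlinarith only [hprod, ht_ub, ht0]
  have hR2hi : R2 ≤ 1.334 := by
    rw [hR2def, ht3, div_le_iff₀ (by positivity : (0:ℝ) < t^2)]
    nlinarith only [ht_lb, sq_nonneg (t - 0.4999999994)]
  have hR'lo : (0.99:ℝ) ≤ R' := by
    rw [hR'def, le_div_iff₀ h2t0]
    linarith only [h2tlo, ht_ub]
  have hR'hi : R' ≤ 1.01 := by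
    rw [hR'def, div_le_iff₀ h2t0]
    linarith only [h2thi, ht_lb]
  have hR2'hi : R2' ≤ 1.02 := by
    rw [hR2'def, div_le_iff₀ (by positivity : (0:ℝ) < (2*t)^2)]
    nlinarith only [h2thi, ht_lb, sq_nonneg (t - 0.4999999994)]
  have hR2'lo : (0:ℝ) ≤ R2' := by
    rw [hR2'def]
    positivity
  -- product bounds (atoms for linarith)
  have hpR'lo : (1.56:ℝ) ≤ p * R' := by
    have h := mul_le_mul hp1 hR'lo (by norm_num) (by linarith only [hp0])
    linarith only [h]
  have hpR'hi : p * R' ≤ 1.61 := by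
    have h := mul_le_mul hp2' hR'hi (by linarith only [hR'lo]) (by norm_num)
    linarith only [h]
  have hqR2'hi : (p-1) * R2' ≤ 0.62 := by
    have h := mul_le_mul (show p - 1 ≤ 0.5849625001 by linarith only [hp2']) hR2'hi hR2'lo (by norm_num)
    linarith only [h]
  have hqR2'lo : (0:ℝ) ≤ (p-1) * R2' := mul_nonneg (by linarith only [hpge1]) hR2'lo
  have hpRlo : (1.05:ℝ) ≤ p * R := by
    have h := mul_le_mul hp1 hRlo (by norm_num) (by linarith only [hp0])
    linarith only [h]
  have hpRhi : p * R ≤ 1.06 := by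
    have h := mul_le_mul hp2' hRhi (by linarith only [hRlo]) (by norm_num)
    linarith only [h]
  have hqR2hi : (p-1) * R2 ≤ 0.781 := by
    have h := mul_le_mul (show p - 1 ≤ 0.5849625001 by linarith only [hp2']) hR2hi (by linarith only [hR2lo]) (by norm_num)
    linarith only [h]
  have hqR2lo : (0:ℝ) ≤ (p-1) * R2 := mul_nonneg (by linarith only [hpge1]) (by linarith only [hR2lo])
  -- multiplied-out Bernoulli bounds
  have lot : ∀ w : ℝ, -t ≤ w → t ^ p + p * w * R ≤ (t + w) ^ p := by
    intro w hw
    have h := bern_lo ht0 hw hpge1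
    calc t ^ p + p * w * R = t ^ p * (1 + p * (w / t)) := by
          rw [hRdef]; field_simp
      _ ≤ (t + w) ^ p := h
  have hit : ∀ w : ℝ, -t < w → (t + w) ^ p ≤ t ^ p + p * w * R + (p-1) * w^2 * R2 := by
    intro w hw
    have h := bern_hi ht0 hw hpge1 hple2
    calc (t + w) ^ p ≤ t ^ p * ((1 + w / t) * (1 + (p-1) * (w / t))) := h
      _ = t ^ p + p * w * R + (p-1) * w^2 * R2 := by
          rw [hRdef, hR2def]; field_simp; ring
  have lo2t : ∀ w : ℝ, -(2*t) ≤ w → (2*t) ^ p + p * w * R' ≤ (2*t + w) ^ p := by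
    intro w hw
    have h := bern_lo h2t0 hw hpge1
    calc (2*t) ^ p + p * w * R' = (2*t) ^ p * (1 + p * (w / (2*t))) := by
          rw [hR'def]; field_simp
      _ ≤ (2*t + w) ^ p := h
  have hi2t : ∀ w : ℝ, -(2*t) < w → (2*t + w) ^ p ≤ (2*t) ^ p + p * w * R' + (p-1) * w^2 * R2' := by
    intro w hw
    have h := bern_hi h2t0 hw hpge1 hple2
    calc (2*t + w) ^ p ≤ (2*t) ^ p * ((1 + w / (2*t)) * (1 + (p-1) * (w / (2*t)))) := h
      _ = (2*t) ^ p + p * w * R' + (p-1) * w^2 * R2' := by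
          rw [hR'def, hR2'def]; field_simp; ring
  -- continuity of x ↦ x^p
  have hrpc : Continuous fun x : ℝ => x ^ p := Real.continuous_rpow_const hp0.le
  -- existence of V
  have hex : ∀ u : ℝ, ∃ v : ℝ, 7e-7 ≤ u → u ≤ 1.05e-6 →
      ((u - 1e-9 ≤ v ∧ v ≤ u + 1e-9) ∧ v ^ p + u ^ p + (2*t + v - u) ^ p = 1) := by
    intro u
    by_cases hu : 7e-7 ≤ u ∧ u ≤ 1.05e-6
    · obtain ⟨hu1, hu2⟩ := hu
      have hcv : Continuous fun v : ℝ => v ^ p + u ^ p + (2*t + v - u) ^ p := by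
        refine (hrpc.add continuous_const).add (hrpc.comp ?_)
        exact (continuous_const.add continuous_id).sub continuous_const
      have hW1 : (u - 1e-9) ^ p + u ^ p + (2*t + (u - 1e-9) - u) ^ p ≤ 1 := by
        rw [show 2*t + (u - 1e-9) - u = 2*t + (-1e-9) by ring]
        have b1 : (u - 1e-9) ^ p ≤ 3.5e-10 := hP3 _ (by linarith only [hu1]) (by linarith only [hu2])
        have b2 : u ^ p ≤ 3.5e-10 := hP3 _ (by linarith only [hu1]) hu2
        have b3 := hi2t (-1e-9) (by linarith only [ht_lb])
        linarith only [b1, b2, b3, h2thi, hpR'lo, hqR2'hi, hqR2'lo]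
      have hW2 : 1 ≤ (u + 1e-9) ^ p + u ^ p + (2*t + (u + 1e-9) - u) ^ p := by
        rw [show 2*t + (u + 1e-9) - u = 2*t + 1e-9 by ring]
        have b1 : (0:ℝ) ≤ (u + 1e-9) ^ p := Real.rpow_nonneg (by linarith only [hu1]) _
        have b2 : (0:ℝ) ≤ u ^ p := Real.rpow_nonneg (by linarith only [hu1]) _
        have b3 := lo2t 1e-9 (by linarith only [ht_lb])
        linarith only [b1, b2, b3, h2tlo, hpR'lo]
      have hIVT := intermediate_value_Icc (by linarith only [] : u - 1e-9 ≤ u + 1e-9) hcv.continuousOn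
      have h1 : (1:ℝ) ∈ Set.Icc ((u - 1e-9) ^ p + u ^ p + (2*t + (u - 1e-9) - u) ^ p)
          ((u + 1e-9) ^ p + u ^ p + (2*t + (u + 1e-9) - u) ^ p) := ⟨hW1, hW2⟩
      obtain ⟨v, hvmem, hveq⟩ := hIVT h1
      exact ⟨v, fun _ _ => ⟨⟨hvmem.1, hvmem.2⟩, hveq⟩⟩
    · refine ⟨0, fun h1 h2 => absurd (And.intro h1 h2) hu⟩
  choose V hV using hex
  -- monotonicity of g in v (non-strict and strict)
  have hgm : ∀ u v w : ℝ, 7e-7 ≤ u → u ≤ 1.05e-6 → 0 ≤ v → v ≤ w →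
      v ^ p + u ^ p + (2*t + v - u) ^ p ≤ w ^ p + u ^ p + (2*t + w - u) ^ p := by
    intro u v w hu1 hu2 hv hvw
    have h1 : v ^ p ≤ w ^ p := hmono _ _ hv hvw
    have h2 : (2*t + v - u) ^ p ≤ (2*t + w - u) ^ p :=
      hmono _ _ (by linarith only [ht_lb, hv, hu2]) (by linarith only [hvw])
    linarith only [h1, h2]
  have hgs : ∀ u v w : ℝ, 7e-7 ≤ u → u ≤ 1.05e-6 → 0 ≤ v → v < w →
      v ^ p + u ^ p + (2*t + v - u) ^ p < w ^ p + u ^ p + (2*t + w - u) ^ p := by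
    intro u v w hu1 hu2 hv hvw
    have h1 : v ^ p < w ^ p := hsmono _ _ hv hvw
    have h2 : (2*t + v - u) ^ p < (2*t + w - u) ^ p :=
      hsmono _ _ (by linarith only [ht_lb, hv, hu2]) (by linarith only [hvw])
    linarith only [h1, h2]
  -- continuity of V on the interval
  have hVcont : ContinuousOn V (Set.Icc (7e-7:ℝ) 1.05e-6) := by
    intro u₀ hu₀
    obtain ⟨hu₀1, hu₀2⟩ := hu₀
    obtain ⟨⟨hm1, hm2⟩, heq0⟩ := hV u₀ hu₀1 hu₀2
    rw [Metric.continuousWithinAt_iff]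
    intro ε hε
    set ε' : ℝ := min ε 1e-9 with hε'def
    have hε'pos : 0 < ε' := lt_min hε (by norm_num)
    have hε'le : ε' ≤ ε := min_le_left _ _
    have hε'small : ε' ≤ 1e-9 := min_le_right _ _
    set v₀ : ℝ := V u₀ with hv₀def
    have hv₀lb : u₀ - 1e-9 ≤ v₀ := hm1
    have hv₀ub : v₀ ≤ u₀ + 1e-9 := hm2
    have hφmc : Continuous fun u : ℝ => (v₀ - ε') ^ p + u ^ p + (2*t + (v₀ - ε') - u) ^ p := by
      refine (continuous_const.add hrpc).add (hrpc.comp ?_)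
      exact continuous_const.sub continuous_id
    have hφpc : Continuous fun u : ℝ => (v₀ + ε') ^ p + u ^ p + (2*t + (v₀ + ε') - u) ^ p := by
      refine (continuous_const.add hrpc).add (hrpc.comp ?_)
      exact continuous_const.sub continuous_id
    have hφm0 : (v₀ - ε') ^ p + u₀ ^ p + (2*t + (v₀ - ε') - u₀) ^ p < 1 := by
      have := hgs u₀ (v₀ - ε') v₀ hu₀1 hu₀2
        (by linarith only [hv₀lb, hε'small, hu₀1]) (by linarith only [hε'pos])
      linarith only [heq0, this]
    have hφp0 : 1 < (v₀ + ε') ^ p + u₀ ^ p + (2*t + (v₀ + ε') - u₀) ^ p := by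
      have := hgs u₀ v₀ (v₀ + ε') hu₀1 hu₀2
        (by linarith only [hv₀lb, hu₀1]) (by linarith only [hε'pos])
      linarith only [heq0, this]
    have hev1 : ∀ᶠ u in nhds u₀,
        (v₀ - ε') ^ p + u ^ p + (2*t + (v₀ - ε') - u) ^ p < 1 :=
      hφmc.continuousAt.eventually_lt_const hφm0
    have hev2 : ∀ᶠ u in nhds u₀,
        1 < (v₀ + ε') ^ p + u ^ p + (2*t + (v₀ + ε') - u) ^ p :=
      hφpc.continuousAt.eventually_const_lt hφp0
    obtain ⟨δ, hδ, hδprop⟩ := Metric.eventually_nhds_iff.mp (hev1.and hev2)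
    refine ⟨δ, hδ, fun u hu hud => ?_⟩
    obtain ⟨hu1, hu2⟩ := hu
    obtain ⟨⟨hw1, hw2⟩, heq⟩ := hV u hu1 hu2
    obtain ⟨hd1, hd2⟩ := hδprop hud
    have hnot1 : ¬ (V u ≤ v₀ - ε') := by
      intro hle
      have := hgm u (V u) (v₀ - ε') hu1 hu2 (by linarith only [hw1, hu1]) hle
      linarith only [heq, hd1, this]
    have hnot2 : ¬ (v₀ + ε' ≤ V u) := by
      intro hle
      have := hgm u (v₀ + ε') (V u) hu1 hu2
        (by linarith only [hv₀lb, hu₀1, hε'pos]) hle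
      linarith only [heq, hd2, this]
    push_neg at hnot1 hnot2
    rw [Real.dist_eq, abs_lt]
    constructor <;> [skip; skip]
    · have : -(ε') < V u - v₀ := by linarith only [hnot1]
      linarith only [this, hε'le]
    · have : V u - v₀ < ε' := by linarith only [hnot2]
      linarith only [this, hε'le]
  -- continuity of h(u) = f(u, V u)
  have hhcont : ContinuousOn
      (fun u => (t + V u - u) ^ p + (t - u) ^ p + (t + V u) ^ p)
      (Set.Icc (7e-7:ℝ) 1.05e-6) := by
    refine ContinuousOn.add (ContinuousOn.add ?_ ?_) ?_
    · exact hrpc.comp_continuousOn ((continuousOn_const.add hVcont).sub continuousOn_id)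
    · exact (hrpc.comp (continuous_const.sub continuous_id)).continuousOn
    · exact hrpc.comp_continuousOn (continuousOn_const.add hVcont)
  -- lower endpoint: h(7e-7) > 1
  have hu1a : (7e-7:ℝ) ≤ 7e-7 := le_refl _
  have hu1b : (7e-7:ℝ) ≤ 1.05e-6 := by norm_num
  obtain ⟨⟨hv1lb, hv1ub⟩, heq1⟩ := hV 7e-7 hu1a hu1b
  have hA : (7e-7 + 1e-12) ^ p + (7e-7:ℝ) ^ p + (2*t + (7e-7 + 1e-12) - 7e-7) ^ p < 1 := by
    rw [show 2*t + (7e-7 + 1e-12) - 7e-7 = 2*t + 1e-12 by ring]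
    have b1 : ((7e-7:ℝ) + 1e-12) ^ p ≤ 1.9e-10 := hP1 _ (by norm_num) (by norm_num)
    have b2 : ((7e-7:ℝ)) ^ p ≤ 1.9e-10 := hP1 _ (by norm_num) (by norm_num)
    have b3 := hi2t 1e-12 (by linarith only [ht_lb])
    linarith only [b1, b2, b3, h2thi, hpR'hi, hqR2'hi, hqR2'lo]
  have hv1gt : 7e-7 + 1e-12 < V 7e-7 := by
    by_contra hcon
    push_neg at hcon
    have := hgm 7e-7 (V 7e-7) (7e-7 + 1e-12) hu1a hu1b
      (by linarith only [hv1lb]) hcon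
    linarith only [heq1, hA, this]
  have hlow : 1 < (t + V 7e-7 - 7e-7) ^ p + (t - 7e-7) ^ p + (t + V 7e-7) ^ p := by
    have l1 := lot (V 7e-7 - 7e-7) (by linarith only [hv1lb, ht_lb])
    have l2 := lot (-7e-7) (by linarith only [ht_lb])
    have l3 := lot (V 7e-7) (by linarith only [hv1lb, ht_lb])
    rw [show t + (V 7e-7 - 7e-7) = t + V 7e-7 - 7e-7 by ring] at l1
    rw [show t + (-7e-7) = t - 7e-7 by ring] at l2
    have key : (0:ℝ) < p * (V 7e-7 - 7e-7) * R + p * (-7e-7) * R + p * (V 7e-7) * R := by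
      have : p * (V 7e-7 - 7e-7) * R + p * (-7e-7) * R + p * (V 7e-7) * R
          = (p * R) * (2 * V 7e-7 - 1.4e-6) := by ring
      rw [this]
      have h2 : (0:ℝ) < 2 * V 7e-7 - 1.4e-6 := by linarith only [hv1gt]
      have h3 := mul_le_mul_of_nonneg_right hpRlo h2.le
      have h4 : (0:ℝ) < 1.05 * (2 * V 7e-7 - 1.4e-6) := by linarith only [h2]
      linarith only [h3, h4]
    linarith only [l1, l2, l3, ht3, key]
  -- upper endpoint: h(1.05e-6) < 1
  have hu2a : (7e-7:ℝ) ≤ 1.05e-6 := by norm_num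
  have hu2b : (1.05e-6:ℝ) ≤ 1.05e-6 := le_refl _
  obtain ⟨⟨hv2lb, hv2ub⟩, heq2⟩ := hV 1.05e-6 hu2a hu2b
  have hB : 1 < (1.05e-6 - 2e-12) ^ p + (1.05e-6:ℝ) ^ p + (2*t + (1.05e-6 - 2e-12) - 1.05e-6) ^ p := by
    rw [show 2*t + (1.05e-6 - 2e-12) - 1.05e-6 = 2*t + (-2e-12) by ring]
    have b1 : (2.8e-10:ℝ) ≤ ((1.05e-6:ℝ) - 2e-12) ^ p := hP2 _ (by norm_num) (by norm_num)
    have b2 : (2.8e-10:ℝ) ≤ ((1.05e-6:ℝ)) ^ p := hP2 _ (by norm_num) (by norm_num)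
    have b3 := lo2t (-2e-12) (by linarith only [ht_lb])
    linarith only [b1, b2, b3, h2tlo, hpR'hi, hpR'lo]
  have hv2lt : V 1.05e-6 < 1.05e-6 - 2e-12 := by
    by_contra hcon
    push_neg at hcon
    have := hgm 1.05e-6 (1.05e-6 - 2e-12) (V 1.05e-6) hu2a hu2b (by norm_num) hcon
    linarith only [heq2, hB, this]
  have hhigh : (t + V 1.05e-6 - 1.05e-6) ^ p + (t - 1.05e-6) ^ p + (t + V 1.05e-6) ^ p < 1 := by
    set v2 : ℝ := V 1.05e-6 with hv2def
    have l1 := hit (v2 - 1.05e-6) (by linarith only [hv2lb, ht_lb])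
    have l2 := hit (-1.05e-6) (by linarith only [ht_lb])
    have l3 := hit v2 (by linarith only [hv2lb, ht_lb])
    rw [show t + (v2 - 1.05e-6) = t + v2 - 1.05e-6 by ring] at l1
    rw [show t + (-1.05e-6) = t - 1.05e-6 by ring] at l2
    have hsq1 : (v2 - 1.05e-6)^2 ≤ 1e-18 := by
      have ha : -1e-9 ≤ v2 - 1.05e-6 := by linarith only [hv2lb]
      have hb : v2 - 1.05e-6 ≤ 1e-9 := by linarith only [hv2ub]
      have hprod : (0:ℝ) ≤ (1e-9 - (v2 - 1.05e-6)) * ((v2 - 1.05e-6) + 1e-9) :=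
        mul_nonneg (by linarith only [hb]) (by linarith only [ha])
      nlinarith only [hprod]
    have hsq3 : v2^2 ≤ 1.1025e-12 := by
      have ha : (0:ℝ) ≤ v2 := by linarith only [hv2lb]
      have hb : v2 ≤ 1.05e-6 := by linarith only [hv2lt]
      have hprod : (0:ℝ) ≤ (1.05e-6 - v2) * v2 := mul_nonneg (by linarith only [hb]) ha
      nlinarith only [hprod, hb]
    have keyneg : (p * R) * (2 * v2 - 2.1e-6) ≤ 1.05 * (2 * v2 - 2.1e-6) := by
      have hneg : 2 * v2 - 2.1e-6 ≤ 0 := by linarith only [hv2lt]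
      exact mul_le_mul_of_nonpos_right hpRlo hneg
    have keysq : (p-1) * ((v2 - 1.05e-6)^2) * R2 + (p-1) * ((-1.05e-6:ℝ))^2 * R2
        + (p-1) * (v2^2) * R2 ≤ 0.781 * (1e-18 + 1.1025e-12 + 1.1025e-12) := by
      have e1 : (p-1) * ((v2 - 1.05e-6)^2) * R2 ≤ 0.781 * 1e-18 := by
        have h1 : (p-1) * ((v2 - 1.05e-6)^2) * R2 = ((p-1) * R2) * ((v2 - 1.05e-6)^2) := by ring
        have h2 := mul_le_mul_of_nonneg_right hqR2hi (sq_nonneg (v2 - 1.05e-6))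
        have h3 := mul_le_mul_of_nonneg_left hsq1 (show (0:ℝ) ≤ 0.781 by norm_num)
        rw [h1]; linarith only [h2, h3]
      have e2 : (p-1) * ((-1.05e-6:ℝ))^2 * R2 ≤ 0.781 * 1.1025e-12 := by
        have h1 : (p-1) * ((-1.05e-6:ℝ))^2 * R2 = ((p-1) * R2) * 1.1025e-12 := by ring
        have h2 := mul_le_mul_of_nonneg_right hqR2hi (show (0:ℝ) ≤ 1.1025e-12 by norm_num)
        rw [h1]; linarith only [h2]
      have e3 : (p-1) * (v2^2) * R2 ≤ 0.781 * 1.1025e-12 := by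
        have h1 : (p-1) * (v2^2) * R2 = ((p-1) * R2) * (v2^2) := by ring
        have h2 := mul_le_mul_of_nonneg_right hqR2hi (sq_nonneg v2)
        have h3 := mul_le_mul_of_nonneg_left hsq3 (show (0:ℝ) ≤ 0.781 by norm_num)
        rw [h1]; linarith only [h2, h3]
      linarith only [e1, e2, e3]
    have hsum : p * (v2 - 1.05e-6) * R + p * (-1.05e-6) * R + p * v2 * R
        = (p * R) * (2 * v2 - 2.1e-6) := by ring
    have hv2neg : 2 * v2 - 2.1e-6 ≤ -4e-12 := by linarith only [hv2lt]
    have keyfin : (p * R) * (2 * v2 - 2.1e-6) ≤ -4.2e-12 := by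
      calc (p * R) * (2 * v2 - 2.1e-6) ≤ 1.05 * (2 * v2 - 2.1e-6) := keyneg
        _ ≤ 1.05 * (-4e-12) := by linarith only [hv2neg]
        _ = -4.2e-12 := by norm_num
    linarith only [l1, l2, l3, ht3, keysq, keyfin, hsum]
  -- IVT for h
  have hIVT2 := intermediate_value_Icc' (by norm_num : (7e-7:ℝ) ≤ 1.05e-6) hhcont
  have hmem : (1:ℝ) ∈ Set.Icc ((t + V 1.05e-6 - 1.05e-6) ^ p + (t - 1.05e-6) ^ p + (t + V 1.05e-6) ^ p)
      ((t + V 7e-7 - 7e-7) ^ p + (t - 7e-7) ^ p + (t + V 7e-7) ^ p) := ⟨hhigh.le, hlow.le⟩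
  obtain ⟨u, humem, hueq⟩ := hIVT2 hmem
  obtain ⟨hu1, hu2⟩ := humem
  obtain ⟨⟨hvlb, hvub⟩, hveq⟩ := hV u hu1 hu2
  set v : ℝ := V u with hvdef
  -- final assembly
  refine ⟨t + v - u, t - u, t + v, ?_, by linarith only [hu1], by linarith only [hvlb, hu1], by linarith only [ht_lb, hu2], ?_, ?_, ?_⟩
  · -- window bounds
    have habs1 : |t + v - u - 0.499999999842| < 2e-7 := by
      rw [abs_lt]; constructor <;> linarith only [ht_lb, ht_ub, hvlb, hvub, hu1, hu2]
    have habs2 : |t - u - 0.499999124646| < 2e-7 := by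
      rw [abs_lt]; constructor <;> linarith only [ht_lb, ht_ub, hu1, hu2]
    have habs3 : |t + v - 0.500000875038| < 2e-7 := by
      rw [abs_lt]; constructor <;> linarith only [ht_lb, ht_ub, hvlb, hvub, hu1, hu2]
    exact max_lt habs1 (max_lt habs2 habs3)
  · -- first equation
    exact hueq
  · -- second equation
    rw [show t + v - u - (t - u) = v by ring,
        show t + v - (t + v - u) = u by ring,
        show t - u + (t + v) = 2*t + v - u by ring]
    exact hveq
  · -- third equation
    rw [show -(t + v - u) + (t - u) + (t + v) = t by ring, ht3]
    norm_num
end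

section
/- Let 𝒦 ⊆ ℝⁿ be a compact convex set with nonempty interior, let B ∈ GL_n(ℝ), and suppose the translates {Bu + 𝒦 : u ∈ ℤⁿ} have pairwise disjoint interiors, so that 𝒫 = ⋃_{u ∈ ℤⁿ} (Bu + 𝒦) is a lattice packing. Then the upper density δ(𝒫) = limsup_{r → ∞} sup_{c ∈ ℝⁿ} vol(B(c, r) ∩ 𝒫) / vol B(c, r) equals vol(𝒦) / |det B|, where B(c, r) denotes the Euclidean ball of radius r centered at c and vol denotes Lebesgue measure. -/
open Pointwise MeasureTheory Filter

open Pointwise MeasureTheory Filter Set Topology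
open scoped ENNReal

namespace LatticePackingAux

variable {n : ℕ}

/-- Euclidean norm on `Fin n → ℝ`. -/
noncomputable def nE (x : Fin n → ℝ) : ℝ := Real.sqrt (∑ i, x i ^ 2)

lemma nE_nonneg (x : Fin n → ℝ) : 0 ≤ nE x := Real.sqrt_nonneg _

lemma nE_triangle (x y : Fin n → ℝ) : nE (x + y) ≤ nE x + nE y := by
  have h := norm_add_le ((WithLp.equiv 2 (Fin n → ℝ)).symm x)
    ((WithLp.equiv 2 (Fin n → ℝ)).symm y)
  rw [WithLp.equiv_symm_apply, ← WithLp.toLp_add] at h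
  simpa only [EuclideanSpace.norm_eq, PiLp.toLp_apply, Real.norm_eq_abs, sq_abs,
    nE, Pi.add_apply] using h

lemma nE_neg (x : Fin n → ℝ) : nE (-x) = nE x := by
  simp [nE]

lemma nE_le_iff {x : Fin n → ℝ} {r : ℝ} (hr : 0 ≤ r) :
    nE x ≤ r ↔ ∑ i, x i ^ 2 ≤ r ^ 2 := by
  constructor
  · intro h
    calc ∑ i, x i ^ 2 = nE x ^ 2 := (Real.sq_sqrt (by positivity)).symm
      _ ≤ r ^ 2 := by gcongr; exact nE_nonneg x
  · intro h
    calc nE x ≤ Real.sqrt (r ^ 2) := Real.sqrt_le_sqrt h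
      _ = r := Real.sqrt_sq hr

/-- The Euclidean ball as in the statement. -/
def W (c : Fin n → ℝ) (r : ℝ) : Set (Fin n → ℝ) := {x : Fin n → ℝ | ∑ i, (x i - c i) ^ 2 ≤ r ^ 2}

lemma mem_W_iff {c : Fin n → ℝ} {r : ℝ} (hr : 0 ≤ r) {x : Fin n → ℝ} :
    x ∈ W c r ↔ nE (x - c) ≤ r := by
  rw [W, mem_setOf_eq, nE_le_iff hr]
  simp

lemma mem_W_zero_iff {r : ℝ} (hr : 0 ≤ r) {x : Fin n → ℝ} :
    x ∈ W 0 r ↔ nE x ≤ r := by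
  rw [mem_W_iff hr, sub_zero]

lemma sum_sq_le_of_abs_le {x : Fin n → ℝ} {M : ℝ} (hM : 0 ≤ M) (h : ∀ i, |x i| ≤ M) :
    x ∈ W 0 ((n + 1) * (M + 1)) := by
  rw [mem_W_zero_iff (by positivity), nE_le_iff (by positivity)]
  have hn : (0:ℝ) ≤ n := Nat.cast_nonneg n
  calc ∑ i, x i ^ 2 ≤ ∑ _i : Fin n, M ^ 2 := by
        refine Finset.sum_le_sum fun i _ => ?_
        calc x i ^ 2 = |x i| ^ 2 := (sq_abs _).symm
          _ ≤ M ^ 2 := pow_le_pow_left₀ (abs_nonneg _) (h i) 2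
    _ = n * M ^ 2 := by simp [mul_comm]
    _ ≤ (n + 1) * (M + 1) ^ 2 := by nlinarith
    _ ≤ ((n + 1) * (M + 1)) ^ 2 := by nlinarith [sq_nonneg (M+1)]

lemma W_translate (c : Fin n → ℝ) (r : ℝ) : W c r = c +ᵥ W (0 : Fin n → ℝ) r := by
  ext x
  rw [Set.mem_vadd_set_iff_neg_vadd_mem]
  simp only [W, mem_setOf_eq, vadd_eq_add, Pi.add_apply, Pi.neg_apply, Pi.zero_apply, sub_zero]
  exact Iff.of_eq (congrArg (· ≤ r ^ 2) (Finset.sum_congr rfl fun i _ => by ring))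

lemma W_smul {r : ℝ} (hr : 0 < r) : W (0 : Fin n → ℝ) r = r • W (0 : Fin n → ℝ) 1 := by
  ext x
  rw [Set.mem_smul_set_iff_inv_smul_mem₀ hr.ne']
  simp only [W, mem_setOf_eq, Pi.smul_apply, Pi.zero_apply, smul_eq_mul, sub_zero, one_pow]
  have h2 : ∑ i, (r⁻¹ * x i) ^ 2 = r⁻¹ ^ 2 * ∑ i, x i ^ 2 := by
    rw [Finset.mul_sum]; exact Finset.sum_congr rfl fun i _ => by ring
  rw [h2, inv_pow, inv_mul_le_iff₀ (by positivity)]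
  rw [mul_one]






set_option maxHeartbeats 2000000 in
theorem main_tendsto
    (K : Set (Fin n → ℝ)) (hK : IsCompact K) (hKconv : Convex ℝ K)
    (B : Matrix (Fin n) (Fin n) ℝ) (hB : IsUnit B)
    (hpack : ∀ u v : Fin n → ℤ, u ≠ v →
      (B.mulVec (fun i => (u i : ℝ)) +ᵥ interior K) ∩
          (B.mulVec (fun i => (v i : ℝ)) +ᵥ interior K) = ∅) :
    Tendsto (fun r : ℝ =>
        (⨆ c : Fin n → ℝ,
          volume (W c r ∩ ⋃ u : Fin n → ℤ, (B.mulVec (fun i => (u i : ℝ)) +ᵥ K))) /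
          volume (W (0 : Fin n → ℝ) r))
      atTop (𝓝 (volume K / ENNReal.ofReal |B.det|)) := by
  classical
  obtain ⟨iB⟩ := hB.nonempty_invertible
  set ι : (Fin n → ℤ) → (Fin n → ℝ) := fun u => B.mulVec (fun i => (u i : ℝ)) with hι
  set P : Set (Fin n → ℝ) := ⋃ u : Fin n → ℤ, (ι u +ᵥ K) with hP
  -- basic matrix facts
  have hψφ : ∀ x : Fin n → ℝ, B.mulVec ((⅟B).mulVec x) = x := fun x => by
    rw [Matrix.mulVec_mulVec, mul_invOf_self, Matrix.one_mulVec]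
  have hφψ : ∀ x : Fin n → ℝ, (⅟B).mulVec (B.mulVec x) = x := fun x => by
    rw [Matrix.mulVec_mulVec, invOf_mul_self, Matrix.one_mulVec]
  have hinj : ∀ x y : Fin n → ℝ, B.mulVec x = B.mulVec y → x = y := fun x y h => by
    have h2 := congrArg ((⅟B).mulVec) h
    rwa [hφψ, hφψ] at h2
  -- the fundamental domain
  set C0 : Set (Fin n → ℝ) := Set.univ.pi fun _ => Ico (0:ℝ) 1 with hC0
  set D : Set (Fin n → ℝ) := B.mulVec '' C0 with hD
  have hC0meas : MeasurableSet C0 := MeasurableSet.univ_pi fun _ => measurableSet_Ico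
  have hC0vol : volume C0 = 1 := by
    rw [hC0, volume_pi_pi]
    simp [Real.volume_Ico]
  have hDvol : volume D = ENNReal.ofReal |B.det| := by
    have hfn : (fun v : Fin n → ℝ => B.mulVec v) = ⇑(Matrix.toLin' B) :=
      funext fun v => (Matrix.toLin'_apply B v).symm
    have himg : D = ⇑(Matrix.toLin' B) '' C0 := by
      rw [hD]
      exact Set.image_congr fun x _ => (Matrix.toLin'_apply B x).symm
    rw [himg, Measure.addHaar_image_linearMap volume, LinearMap.det_toLin', hC0vol, mul_one]
  have hDmeas : MeasurableSet D := by
    have hiff : D = (fun x => (⅟B).mulVec x) ⁻¹' C0 := by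
      ext x
      constructor
      · rintro ⟨c, hc, rfl⟩
        simpa [hφψ] using hc
      · intro hx
        exact ⟨(⅟B).mulVec x, hx, hψφ x⟩
    have hcont : Continuous fun x : Fin n → ℝ => (⅟B).mulVec x := by
      have h2 := LinearMap.continuous_of_finiteDimensional (Matrix.toLin' (⅟B))
      have hfn : (fun x : Fin n → ℝ => (⅟B).mulVec x) = ⇑(Matrix.toLin' (⅟B)) :=
        funext fun v => (Matrix.toLin'_apply _ v).symm
      rw [hfn]; exact h2
    rw [hiff]
    exact hcont.measurable hC0meas
  -- decomposition into lattice translates of D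
  have hdec : ∀ x : Fin n → ℝ, ∃ u : Fin n → ℤ, x - ι u ∈ D := by
    intro x
    refine ⟨fun i => ⌊(⅟B).mulVec x i⌋,
      ⟨fun i => Int.fract ((⅟B).mulVec x i),
        Set.mem_univ_pi.mpr fun i => ⟨Int.fract_nonneg _, Int.fract_lt_one _⟩, ?_⟩⟩
    have hw : (fun i => Int.fract ((⅟B).mulVec x i))
        = (⅟B).mulVec x - fun i => ((⌊(⅟B).mulVec x i⌋ : ℤ) : ℝ) := by
      funext i; simp only [Pi.sub_apply, Int.fract]
    rw [hw, Matrix.mulVec_sub, hψφ]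
  -- disjointness of lattice translates of D
  have hdisjD : ∀ u v : Fin n → ℤ, u ≠ v → Disjoint (ι u +ᵥ D) (ι v +ᵥ D) := by
    intro u v huv
    rw [Set.disjoint_left]
    rintro z hzu hzv
    rw [Set.mem_vadd_set] at hzu hzv
    obtain ⟨a, ⟨ca, hca, rfl⟩, hza⟩ := hzu
    obtain ⟨b, ⟨cb, hcb, rfl⟩, hzb⟩ := hzv
    have he : B.mulVec ((fun i => (u i : ℝ)) + ca) = B.mulVec ((fun i => (v i : ℝ)) + cb) := by
      rw [Matrix.mulVec_add, Matrix.mulVec_add]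
      rw [vadd_eq_add] at hza hzb
      calc B.mulVec (fun i => (u i : ℝ)) + B.mulVec ca = z := hza
        _ = B.mulVec (fun i => (v i : ℝ)) + B.mulVec cb := hzb.symm
    have he2 := hinj _ _ he
    apply huv
    funext i
    have hei : (u i : ℝ) + ca i = (v i : ℝ) + cb i := congrFun he2 i
    have hu0 : ⌊ca i⌋ = 0 := Int.floor_eq_zero_iff.mpr (hca i (Set.mem_univ i))
    have hv0 : ⌊cb i⌋ = 0 := Int.floor_eq_zero_iff.mpr (hcb i (Set.mem_univ i))
    have : u i = ⌊ca i + (u i : ℝ)⌋ := by rw [Int.floor_add_intCast, hu0, zero_add]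
    rw [add_comm (ca i)] at this
    rw [this, hei, add_comm, Int.floor_add_intCast, hv0, zero_add]
  -- bound for K
  obtain ⟨M0, hM0⟩ := hK.isBounded.exists_norm_le
  set M : ℝ := max M0 0 with hM
  have hMnn : 0 ≤ M := le_max_right _ _
  set R : ℝ := ((n:ℝ) + 1) * (M + 1) with hR
  have hR0 : 0 ≤ R := by positivity
  have hKW : K ⊆ W 0 R := by
    intro x hx
    refine sum_sq_le_of_abs_le hMnn fun i => ?_
    calc |x i| = ‖x i‖ := (Real.norm_eq_abs _).symm
      _ ≤ ‖x‖ := norm_le_pi_norm x i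
      _ ≤ M0 := hM0 x hx
      _ ≤ M := le_max_left _ _
  -- bound for D
  set S : ℝ := ∑ i, ∑ j, |B i j| with hS
  have hSnn : 0 ≤ S := Finset.sum_nonneg fun i _ => Finset.sum_nonneg fun j _ => abs_nonneg _
  set d : ℝ := ((n:ℝ) + 1) * (S + 1) with hd
  have hd0 : 0 ≤ d := by positivity
  have hDW : D ⊆ W 0 d := by
    rintro _ ⟨c, hc, rfl⟩
    refine sum_sq_le_of_abs_le hSnn fun i => ?_
    have hmv : B.mulVec c i = ∑ j, B i j * c j := by
      simp [Matrix.mulVec, dotProduct]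
    calc |B.mulVec c i| = |∑ j, B i j * c j| := by rw [hmv]
      _ ≤ ∑ j, |B i j * c j| := Finset.abs_sum_le_sum_abs _ _
      _ ≤ ∑ j, |B i j| := by
          refine Finset.sum_le_sum fun j _ => ?_
          rw [abs_mul]
          have hcj := hc j (Set.mem_univ j)
          have : |c j| ≤ 1 := abs_le.mpr ⟨by linarith [hcj.1], le_of_lt hcj.2⟩
          exact mul_le_of_le_one_right (abs_nonneg _) this
      _ ≤ S := Finset.single_le_sum
          (f := fun i => ∑ j, |B i j|)
          (fun i _ => Finset.sum_nonneg fun j _ => abs_nonneg _) (Finset.mem_univ i)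
  set C : ℝ := R + d with hC
  have hC0' : 0 ≤ C := by positivity
  -- measure preliminaries
  have hWvol : ∀ (c : Fin n → ℝ) (r : ℝ), volume (W c r) = volume (W (0 : Fin n → ℝ) r) := by
    intro c r
    rw [W_translate c r, measure_vadd]
  set V : ℝ → ℝ≥0∞ := fun r => volume (W (0 : Fin n → ℝ) r) with hV
  have hfrank : Module.finrank ℝ (Fin n → ℝ) = n := by simp
  have hVscale : ∀ r : ℝ, 0 < r → V r = ENNReal.ofReal (r ^ n) * V 1 := by
    intro r hr
    show volume (W (0 : Fin n → ℝ) r) = _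
    rw [W_smul hr, Measure.addHaar_smul_of_nonneg volume hr.le, hfrank]
  have hV1top : V 1 ≠ ⊤ := by
    have hbox : W (0:Fin n → ℝ) 1 ⊆ Set.univ.pi fun _ : Fin n => Icc (-1:ℝ) 1 := by
      intro x hx
      rw [mem_W_zero_iff zero_le_one, nE_le_iff zero_le_one, one_pow] at hx
      refine Set.mem_univ_pi.mpr fun i => ?_
      have h1 : x i ^ 2 ≤ 1 :=
        le_trans (Finset.single_le_sum (f := fun i => x i ^ 2)
          (fun j _ => sq_nonneg _) (Finset.mem_univ i)) hx
      constructor <;> nlinarith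
    refine ne_of_lt (lt_of_le_of_lt (measure_mono hbox) ?_)
    rw [volume_pi_pi]
    simp only [Real.volume_Icc]
    refine lt_of_le_of_lt (le_of_eq (Finset.prod_const _)) ?_
    exact ENNReal.pow_lt_top ENNReal.ofReal_lt_top
  have hV1pos : V 1 ≠ 0 := by
    have hn1 : (0:ℝ) < (n:ℝ) + 1 := by positivity
    have hsub : (Set.univ.pi fun _ : Fin n => Icc (0:ℝ) (1/((n:ℝ)+1))) ⊆ W (0:Fin n → ℝ) 1 := by
      intro x hx
      rw [mem_W_zero_iff zero_le_one, nE_le_iff zero_le_one, one_pow]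
      have hle : (n:ℝ) ≤ ((n:ℝ)+1)^2 := by nlinarith [Nat.cast_nonneg (α := ℝ) n]
      calc ∑ i, x i ^ 2 ≤ ∑ _i : Fin n, (1/((n:ℝ)+1))^2 := by
            refine Finset.sum_le_sum fun i _ => ?_
            have hxi := hx i (Set.mem_univ i)
            nlinarith [hxi.1, hxi.2]
        _ = (n:ℝ) * (1/((n:ℝ)+1))^2 := by simp [mul_comm]
        _ = (n:ℝ) / ((n:ℝ)+1)^2 := by field_simp
        _ ≤ 1 := (div_le_one (by positivity)).mpr hle
    have hpos : (0:ℝ≥0∞) < volume (Set.univ.pi fun _ : Fin n => Icc (0:ℝ) (1/((n:ℝ)+1))) := by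
      rw [volume_pi_pi]
      simp only [Real.volume_Icc, sub_zero]
      rw [Finset.prod_const]
      refine ENNReal.pow_pos ?_ _
      rw [ENNReal.ofReal_pos]
      positivity
    exact (lt_of_lt_of_le hpos (measure_mono hsub)).ne'
  -- determinant nonzero
  have hdet : B.det ≠ 0 := ((Matrix.isUnit_iff_isUnit_det B).mp hB).ne_zero
  have hΔ0 : volume D ≠ 0 := by
    rw [hDvol]
    simp only [ne_eq, ENNReal.ofReal_eq_zero, not_le]
    exact abs_pos.mpr hdet
  have hΔtop : volume D ≠ ⊤ := by rw [hDvol]; exact ENNReal.ofReal_ne_top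
  -- upper bound
  have hupper : ∀ r : ℝ, 0 ≤ r → ∀ c : Fin n → ℝ,
      volume (W c r ∩ P) * volume D ≤ volume K * V (r + C) := by
    intro r hr c
    set s : Set (Fin n → ℤ) := {u | ι u ∈ W c (r + R)} with hs
    have hsub1 : W c r ∩ P ⊆ ⋃ u ∈ s, ι u +ᵥ K := by
      rintro x ⟨hxW, hxP⟩
      rw [hP] at hxP
      obtain ⟨u, hxu⟩ := Set.mem_iUnion.mp hxP
      have hk : x - ι u ∈ K := by
        rw [Set.mem_vadd_set] at hxu
        obtain ⟨k, hkK, hk⟩ := hxu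
        rw [← hk, vadd_eq_add, add_sub_cancel_left]
        exact hkK
      have hus : u ∈ s := by
        rw [hs, mem_setOf_eq, mem_W_iff (by linarith)]
        have h1 : nE (x - c) ≤ r := (mem_W_iff hr).mp hxW
        have h2 : nE (x - ι u) ≤ R := (mem_W_zero_iff hR0).mp (hKW hk)
        calc nE (ι u - c) = nE ((x - c) + -(x - ι u)) := by congr 1; abel
          _ ≤ nE (x - c) + nE (-(x - ι u)) := nE_triangle _ _
          _ = nE (x - c) + nE (x - ι u) := by rw [nE_neg]
          _ ≤ r + R := add_le_add h1 h2
      exact Set.mem_biUnion hus hxu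
    have h2 : volume (W c r ∩ P) ≤ ∑' (_u : s), volume K := by
      refine le_trans (measure_mono hsub1)
        (le_trans (measure_biUnion_le volume s.to_countable _) ?_)
      exact le_of_eq (tsum_congr fun u => measure_vadd _ _ _)
    have h3 : ∑' (_u : s), volume D = volume (⋃ u ∈ s, ι u +ᵥ D) := by
      rw [measure_biUnion s.to_countable (fun u _ v _ huv => hdisjD u v huv)
        (fun u _ => hDmeas.const_vadd _)]
      exact tsum_congr fun u => (measure_vadd _ _ _).symm
    have h4 : (⋃ u ∈ s, ι u +ᵥ D) ⊆ W c (r + C) := by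
      intro z hz
      obtain ⟨u, hu, hzu⟩ := Set.mem_iUnion₂.mp hz
      rw [Set.mem_vadd_set] at hzu
      obtain ⟨y, hyD, hy⟩ := hzu
      rw [mem_W_iff (by linarith)]
      have h5 : nE (ι u - c) ≤ r + R := (mem_W_iff (by linarith)).mp hu
      have h6 : nE y ≤ d := (mem_W_zero_iff hd0).mp (hDW hyD)
      calc nE (z - c) = nE ((ι u - c) + y) := by rw [← hy, vadd_eq_add]; congr 1; abel
        _ ≤ nE (ι u - c) + nE y := nE_triangle _ _
        _ ≤ (r + R) + d := add_le_add h5 h6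
        _ = r + C := by rw [hC]; ring
    calc volume (W c r ∩ P) * volume D
        ≤ (∑' (_u : s), volume K) * volume D := mul_le_mul_left h2 _
      _ = ∑' (_u : s), (volume K * volume D) := ENNReal.tsum_mul_right.symm
      _ = volume K * ∑' (_u : s), volume D := ENNReal.tsum_mul_left
      _ = volume K * volume (⋃ u ∈ s, ι u +ᵥ D) := by rw [h3]
      _ ≤ volume K * volume (W c (r + C)) := mul_le_mul_right (measure_mono h4) _
      _ = volume K * V (r + C) := by rw [hWvol]
  -- measure of interior
  have hintvol : volume (interior K) = volume K := by
    refine le_antisymm (measure_mono interior_subset) ?_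
    have h1 : K ⊆ interior K ∪ frontier K :=
      subset_closure.trans (closure_eq_interior_union_frontier K).subset
    calc volume K ≤ volume (interior K ∪ frontier K) := measure_mono h1
      _ ≤ volume (interior K) + volume (frontier K) := measure_union_le _ _
      _ = volume (interior K) := by rw [Convex.addHaar_frontier volume hKconv, add_zero]
  -- lower bound
  have hlower : ∀ r : ℝ, C ≤ r →
      volume K * V (r - C) ≤ volume (W (0 : Fin n → ℝ) r ∩ P) * volume D := by
    intro r hrC
    have hr0 : (0:ℝ) ≤ r := le_trans hC0' hrC
    have hRd : C = R + d := hC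
    set s : Set (Fin n → ℤ) := {u | ι u ∈ W (0 : Fin n → ℝ) (r - R)} with hs
    have hA : W (0 : Fin n → ℝ) (r - C) ⊆ ⋃ u ∈ s, ι u +ᵥ D := by
      intro x hx
      obtain ⟨u, hu⟩ := hdec x
      have hxu : x ∈ ι u +ᵥ D := by
        rw [Set.mem_vadd_set_iff_neg_vadd_mem, vadd_eq_add, neg_add_eq_sub]
        exact hu
      have hnx : nE x ≤ r - C := (mem_W_zero_iff (by linarith)).mp hx
      have hyd : nE (x - ι u) ≤ d := (mem_W_zero_iff hd0).mp (hDW hu)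
      have hus : u ∈ s := by
        rw [hs, mem_setOf_eq, mem_W_zero_iff (by linarith [hRd] : (0:ℝ) ≤ r - R)]
        calc nE (ι u) = nE (x + -(x - ι u)) := by congr 1; abel
          _ ≤ nE x + nE (-(x - ι u)) := nE_triangle _ _
          _ = nE x + nE (x - ι u) := by rw [nE_neg]
          _ ≤ (r - C) + d := add_le_add hnx hyd
          _ ≤ r - R := by rw [hRd] at *; linarith
      exact Set.mem_biUnion hus hxu
    have hA2 : V (r - C) ≤ ∑' (_u : s), volume D := by
      refine le_trans (measure_mono hA)
        (le_trans (measure_biUnion_le volume s.to_countable _) ?_)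
      exact le_of_eq (tsum_congr fun u => measure_vadd _ _ _)
    have hB1 : (⋃ u ∈ s, ι u +ᵥ interior K) ⊆ W (0 : Fin n → ℝ) r ∩ P := by
      intro z hz
      obtain ⟨u, hu, hzu⟩ := Set.mem_iUnion₂.mp hz
      rw [Set.mem_vadd_set] at hzu
      obtain ⟨y, hyK, hy⟩ := hzu
      constructor
      · rw [mem_W_zero_iff hr0]
        have h5 : nE (ι u) ≤ r - R := (mem_W_zero_iff (by linarith [hRd])).mp hu
        have h6 : nE y ≤ R := (mem_W_zero_iff hR0).mp (hKW (interior_subset hyK))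
        calc nE z = nE (ι u + y) := by rw [← hy, vadd_eq_add]
          _ ≤ nE (ι u) + nE y := nE_triangle _ _
          _ ≤ (r - R) + R := add_le_add h5 h6
          _ = r := by ring
      · rw [hP]
        exact Set.mem_iUnion.mpr ⟨u, ⟨y, interior_subset hyK, hy⟩⟩
    have hB2 : ∑' (_u : s), volume K ≤ volume (W (0 : Fin n → ℝ) r ∩ P) := by
      calc ∑' (_u : s), volume K = ∑' (u : s), volume (ι u +ᵥ interior K) :=
            tsum_congr fun u => by rw [measure_vadd, hintvol]
        _ = volume (⋃ u ∈ s, ι u +ᵥ interior K) := by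
            rw [measure_biUnion s.to_countable
              (fun u _ v _ huv => Set.disjoint_iff_inter_eq_empty.mpr (hpack u v huv))
              (fun u _ => isOpen_interior.measurableSet.const_vadd _)]
        _ ≤ volume (W (0 : Fin n → ℝ) r ∩ P) := measure_mono hB1
    calc volume K * V (r - C)
        ≤ volume K * ∑' (_u : s), volume D := mul_le_mul_right hA2 _
      _ = ∑' (_u : s), (volume K * volume D) := ENNReal.tsum_mul_left.symm
      _ = (∑' (_u : s), volume K) * volume D := by
          rw [← ENNReal.tsum_mul_right]
      _ ≤ volume (W (0 : Fin n → ℝ) r ∩ P) * volume D := mul_le_mul_left hB2 _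
  -- ratio of ball volumes tends to 1
  have hratio : ∀ a : ℝ, Tendsto (fun r : ℝ => V (r + a) / V r) atTop (𝓝 1) := by
    intro a
    have hreal : Tendsto (fun r : ℝ => ((r + a) / r) ^ n) atTop (𝓝 1) := by
      have h0 : Tendsto (fun r : ℝ => 1 + a * r⁻¹) atTop (𝓝 (1 + a * 0)) :=
        tendsto_const_nhds.add (tendsto_inv_atTop_zero.const_mul a)
      rw [mul_zero, add_zero] at h0
      have h1 : Tendsto (fun r : ℝ => (r + a) / r) atTop (𝓝 1) := by
        refine Tendsto.congr' ?_ h0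
        filter_upwards [eventually_gt_atTop 0] with r hr
        field_simp
      simpa using h1.pow n
    have h2 : Tendsto (fun r : ℝ => ENNReal.ofReal (((r + a) / r) ^ n)) atTop (𝓝 1) := by
      simpa using ENNReal.tendsto_ofReal hreal
    refine Tendsto.congr' ?_ h2
    filter_upwards [eventually_gt_atTop 0, eventually_gt_atTop (-a)] with r hr1 hr2
    have hra : 0 < r + a := by linarith
    rw [hVscale _ hra, hVscale _ hr1, ENNReal.mul_div_mul_right _ _ hV1pos hV1top,
      ← ENNReal.ofReal_div_of_pos (by positivity), ← div_pow]
  -- squeeze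
  have hupT : Tendsto (fun r : ℝ => (volume K / volume D) * (V (r + C) / V r)) atTop
      (𝓝 (volume K / volume D)) := by
    simpa using ENNReal.Tendsto.const_mul (hratio C) (Or.inl one_ne_zero)
  have hloT : Tendsto (fun r : ℝ => (volume K / volume D) * (V (r - C) / V r)) atTop
      (𝓝 (volume K / volume D)) := by
    have h3 := ENNReal.Tendsto.const_mul (a := volume K / volume D) (hratio (-C))
      (Or.inl one_ne_zero)
    simp only [← sub_eq_add_neg] at h3
    simpa using h3
  have hmain : Tendsto (fun r : ℝ => (⨆ c : Fin n → ℝ, volume (W c r ∩ P)) / V r) atTop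
      (𝓝 (volume K / volume D)) := by
    refine tendsto_of_tendsto_of_tendsto_of_le_of_le' hloT hupT ?_ ?_
    · filter_upwards [eventually_ge_atTop C] with r hr
      have h1 := hlower r hr
      have h2 : volume K * V (r - C) / volume D ≤ volume (W (0 : Fin n → ℝ) r ∩ P) :=
        (ENNReal.div_le_iff_le_mul (Or.inl hΔ0) (Or.inl hΔtop)).mpr h1
      have h3 : volume K * V (r - C) / volume D / V r
          ≤ (⨆ c : Fin n → ℝ, volume (W c r ∩ P)) / V r :=
        ENNReal.div_le_div_right
          (h2.trans (le_iSup (fun c : Fin n → ℝ => volume (W c r ∩ P)) 0)) _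
      refine le_trans (le_of_eq ?_) h3
      simp only [div_eq_mul_inv]
      ring
    · filter_upwards [eventually_ge_atTop 0] with r hr
      have h1 : (⨆ c : Fin n → ℝ, volume (W c r ∩ P)) ≤ volume K * V (r + C) / volume D :=
        iSup_le fun c =>
          (ENNReal.le_div_iff_mul_le (Or.inl hΔ0) (Or.inl hΔtop)).mpr (hupper r hr c)
      refine le_trans (ENNReal.div_le_div_right h1 _) (le_of_eq ?_)
      simp only [div_eq_mul_inv]
      ring
  rw [← hDvol]
  refine hmain.congr ?_
  intro r
  rw [ENNReal.iSup_div]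
end LatticePackingAux

open LatticePackingAux in
/-- Let `𝒦 ⊆ ℝⁿ` be a compact convex set with nonempty interior, let `B ∈ GL_n(ℝ)`, and
suppose the translates `{Bu + 𝒦 : u ∈ ℤⁿ}` have pairwise disjoint interiors, so that
`𝒫 = ⋃_{u ∈ ℤⁿ} (Bu + 𝒦)` is a lattice packing. Then the upper density
`δ(𝒫) = limsup_{r → ∞} sup_c vol(B(c,r) ∩ 𝒫)/vol B(c,r)` equals `vol(𝒦)/|det B|`, where
`B(c,r)` is the Euclidean ball of radius `r` around `c`. -/
theorem lattice_packing_density {n : ℕ}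
    (K : Set (Fin n → ℝ)) (hK : IsCompact K) (hKconv : Convex ℝ K)
    (hKint : (interior K).Nonempty)
    (B : Matrix (Fin n) (Fin n) ℝ) (hB : IsUnit B)
    (hpack : ∀ u v : Fin n → ℤ, u ≠ v →
      (B.mulVec (fun i => (u i : ℝ)) +ᵥ interior K) ∩
          (B.mulVec (fun i => (v i : ℝ)) +ᵥ interior K) = ∅) :
    limsup (fun r : ℝ =>
        ⨆ c : Fin n → ℝ,
          volume ({x : Fin n → ℝ | ∑ i, (x i - c i) ^ 2 ≤ r ^ 2} ∩
              ⋃ u : Fin n → ℤ, (B.mulVec (fun i => (u i : ℝ)) +ᵥ K)) /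
            volume {x : Fin n → ℝ | ∑ i, (x i - c i) ^ 2 ≤ r ^ 2})
      atTop = volume K / ENNReal.ofReal |B.det| := by
  have h := main_tendsto K hK hKconv B hB hpack
  have heq : (fun r : ℝ =>
        ⨆ c : Fin n → ℝ,
          volume ({x : Fin n → ℝ | ∑ i, (x i - c i) ^ 2 ≤ r ^ 2} ∩
              ⋃ u : Fin n → ℤ, (B.mulVec (fun i => (u i : ℝ)) +ᵥ K)) /
            volume {x : Fin n → ℝ | ∑ i, (x i - c i) ^ 2 ≤ r ^ 2})
      = fun r : ℝ =>
        (⨆ c : Fin n → ℝ,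
          volume (W c r ∩ ⋃ u : Fin n → ℤ, (B.mulVec (fun i => (u i : ℝ)) +ᵥ K))) /
          volume (W (0 : Fin n → ℝ) r) := by
    funext r
    rw [ENNReal.iSup_div]
    refine iSup_congr fun c => ?_
    have hv : volume (W c r) = volume (W (0 : Fin n → ℝ) r) := by
      rw [W_translate c r, measure_vadd]
    show volume (W c r ∩ _) / volume (W c r) = _
    rw [hv]
  rw [heq]
  exact h.limsup_eq
end
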